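/- arXiv:math/0409044 — 8 statements merged into one kernel-verified Lean document; each statement's English description precedes it below -/
import Mathlib

section
/- Let Φ be a root system in a finite-dimensional real inner product space E, with Weyl group W, coroot lattice Q∨ and coweight lattice P∨. Then: (a) an element x ∈ P∨ has minimal norm in its coset x + Q∨ (i.e. ‖x‖ ≤ ‖x + q‖ for all q ∈ Q∨) if and only if ⟪x, α⟫ ∈ {−1, 0, 1} for every α ∈ Φ; (b) if x, y ∈ P∨ lie in the same coset of Q∨ and both have minimal norm in that coset, then y = w x for some w ∈ W. In particular, each coset of Q∨ in P∨ contains exactly one W-orbit of elements of minimal norm. -/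
open scoped RealInnerProductSpace

/-- A root system in a real inner product space `E`. -/
def IsRootSystem {E : Type*} [NormedAddCommGroup E] [InnerProductSpace ℝ E]
    (Φ : Set E) : Prop :=
  Φ.Finite ∧ (0 : E) ∉ Φ ∧
    (∀ α ∈ Φ, ∀ β ∈ Φ, ∃ n : ℤ, 2 * ⟪β, α⟫ / ⟪α, α⟫ = (n : ℝ)) ∧
    (∀ α ∈ Φ, ∀ β ∈ Φ, β - (2 * ⟪β, α⟫ / ⟪α, α⟫) • α ∈ Φ)

/-- The Weyl group of `Φ`: the subgroup of linear automorphisms of `E` generated by the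
reflections in the roots. -/
def WeylGroup {E : Type*} [NormedAddCommGroup E] [InnerProductSpace ℝ E]
    (Φ : Set E) : Subgroup (E ≃ₗ[ℝ] E) :=
  Subgroup.closure
    {w : E ≃ₗ[ℝ] E | ∃ α ∈ Φ, ∀ v : E, w v = v - (2 * ⟪v, α⟫ / ⟪α, α⟫) • α}

/-- The coroot lattice of `Φ`: the additive subgroup generated by the coroots `2α/⟪α,α⟫`. -/
def corootLattice {E : Type*} [NormedAddCommGroup E] [InnerProductSpace ℝ E]
    (Φ : Set E) : AddSubgroup E :=
  AddSubgroup.closure {x : E | ∃ α ∈ Φ, x = (2 / ⟪α, α⟫) • α}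

/-- The coweight lattice of `Φ`: the vectors pairing integrally with all roots. -/
def coweightLattice {E : Type*} [NormedAddCommGroup E] [InnerProductSpace ℝ E]
    (Φ : Set E) : Set E :=
  {x : E | ∀ α ∈ Φ, ∃ n : ℤ, ⟪x, α⟫ = (n : ℝ)}

namespace MinAux

variable {E : Type*} [NormedAddCommGroup E] [InnerProductSpace ℝ E]

/-- coroot set -/
def S (Φ : Set E) : Set E := {x : E | ∃ α ∈ Φ, x = (2 / ⟪α, α⟫) • α}

/-- coroot -/
noncomputable def cv (α : E) : E := (2 / ⟪α, α⟫) • α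

/-- reflection -/
noncomputable def sf (α : E) (v : E) : E := v - (2 * ⟪v, α⟫ / ⟪α, α⟫) • α

lemma inner_self_pos' {x : E} (hx : x ≠ 0) : 0 < ⟪x, x⟫ := by
  rcases lt_or_eq_of_le (real_inner_self_nonneg (x := x)) with h | h
  · exact h
  · exact absurd (real_inner_self_nonpos.1 (le_of_eq h.symm)) hx

section root
variable {Φ : Set E}

lemma cpos (hΦ : IsRootSystem Φ) {α : E} (hα : α ∈ Φ) : 0 < ⟪α, α⟫ :=
  inner_self_pos' (fun h => hΦ.2.1 (h ▸ hα))

lemma neg_mem (hΦ : IsRootSystem Φ) {α : E} (hα : α ∈ Φ) : -α ∈ Φ := by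
  have h := hΦ.2.2.2 α hα α hα
  have hc : ⟪α, α⟫ ≠ 0 := (cpos hΦ hα).ne'
  have : 2 * ⟪α, α⟫ / ⟪α, α⟫ = (2:ℝ) := by field_simp
  rw [this] at h
  have h2 : α - (2:ℝ) • α = -α := by
    rw [two_smul]; abel
  rwa [h2] at h

lemma S_neg (hΦ : IsRootSystem Φ) {a : E} (ha : a ∈ S Φ) : -a ∈ S Φ := by
  obtain ⟨α, hα, rfl⟩ := ha
  exact ⟨-α, neg_mem hΦ hα, by rw [inner_neg_neg, smul_neg]⟩

lemma exists_list (hΦ : IsRootSystem Φ) {q : E} (hq : q ∈ corootLattice Φ) :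
    ∃ l : List E, (∀ a ∈ l, a ∈ S Φ) ∧ l.sum = q := by
  have hq' : q ∈ (corootLattice Φ).toAddSubmonoid := hq
  rw [corootLattice, AddSubgroup.closure_toAddSubmonoid] at hq'
  obtain ⟨l, hl, hsum⟩ := AddSubmonoid.exists_list_of_mem_closure hq'
  refine ⟨l, fun a ha => ?_, hsum⟩
  rcases hl a ha with h | h
  · exact h
  · have : -(-a) ∈ S Φ := S_neg hΦ (by simpa [S] using h)
    simpa using this

lemma S_mem_lattice {a : E} (ha : a ∈ S Φ) : a ∈ corootLattice Φ :=
  AddSubgroup.subset_closure ha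

lemma pair_int (hΦ : IsRootSystem Φ) {q : E} (hq : q ∈ corootLattice Φ) {β : E} (hβ : β ∈ Φ) :
    ∃ n : ℤ, ⟪q, β⟫ = (n : ℝ) := by
  refine AddSubgroup.closure_induction (fun a ha => ?_) ⟨0, by simp⟩
    (fun a b _ _ iha ihb => ?_) (fun a _ iha => ?_) hq
  · obtain ⟨α, hα, rfl⟩ := ha
    obtain ⟨n, hn⟩ := hΦ.2.2.1 α hα β hβ
    refine ⟨n, ?_⟩
    rw [real_inner_smul_left, real_inner_comm β α, ← hn]; ring
  · obtain ⟨m, hm⟩ := iha; obtain ⟨n, hn⟩ := ihb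
    exact ⟨m + n, by rw [inner_add_left, hm, hn]; push_cast; ring⟩
  · obtain ⟨m, hm⟩ := iha
    exact ⟨-m, by rw [inner_neg_left, hm]; push_cast; ring⟩

end root

lemma inner_sf_left (α v w : E) :
    ⟪sf α v, w⟫ = ⟪v, w⟫ - (2 * ⟪v, α⟫ / ⟪α, α⟫) * ⟪α, w⟫ := by
  rw [sf, inner_sub_left, real_inner_smul_left]

lemma sf_adj (α v w : E) : ⟪sf α v, w⟫ = ⟪v, sf α w⟫ := by
  rw [inner_sf_left, sf, inner_sub_right, real_inner_smul_right,
    real_inner_comm w α]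
  ring

lemma inner_sf_sf {α : E} (hc : ⟪α, α⟫ ≠ 0) (v w : E) :
    ⟪sf α v, sf α w⟫ = ⟪v, w⟫ := by
  rw [inner_sf_left, sf, inner_sub_right, real_inner_smul_right,
    inner_sub_right, real_inner_smul_right, real_inner_comm w α]
  field_simp
  ring

lemma sf_sf {α : E} (hc : ⟪α, α⟫ ≠ 0) (v : E) : sf α (sf α v) = v := by
  rw [sf, sf]
  have h : ⟪v - (2 * ⟪v, α⟫ / ⟪α, α⟫) • α, α⟫ = -⟪v, α⟫ := by
    rw [inner_sub_left, real_inner_smul_left]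
    field_simp
    ring
  rw [h]
  have : 2 * -⟪v, α⟫ / ⟪α, α⟫ = -(2 * ⟪v, α⟫ / ⟪α, α⟫) := by ring
  rw [this, neg_smul]
  abel

lemma norm_sf {α : E} (hc : ⟪α, α⟫ ≠ 0) (v : E) : ‖sf α v‖ = ‖v‖ := by
  have h := inner_sf_sf hc v v
  rw [real_inner_self_eq_norm_sq, real_inner_self_eq_norm_sq] at h
  nlinarith [norm_nonneg (sf α v), norm_nonneg v]

section root2
variable {Φ : Set E}

lemma sf_root (hΦ : IsRootSystem Φ) {α β : E} (hα : α ∈ Φ) (hβ : β ∈ Φ) : sf α β ∈ Φ :=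
  hΦ.2.2.2 α hα β hβ

lemma sf_coweight (hΦ : IsRootSystem Φ) {α x : E} (hα : α ∈ Φ) (hx : x ∈ coweightLattice Φ) :
    sf α x ∈ coweightLattice Φ := by
  intro β hβ
  rw [sf_adj]
  exact hx _ (sf_root hΦ hα hβ)

/-- the smallness condition -/
def Small (Φ : Set E) (x : E) : Prop :=
  ∀ α ∈ Φ, ⟪x, α⟫ = -1 ∨ ⟪x, α⟫ = 0 ∨ ⟪x, α⟫ = 1

lemma sf_small (hΦ : IsRootSystem Φ) {α x : E} (hα : α ∈ Φ) (hx : Small Φ x) : Small Φ (sf α x) := by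
  intro β hβ
  rw [sf_adj]
  exact hx _ (sf_root hΦ hα hβ)

lemma sf_eq_sub_cv {α x : E} (h1 : ⟪x, α⟫ = 1) : sf α x = x - cv α := by
  rw [sf, cv, h1]
  norm_num

lemma sf_eq_add_cv {α x : E} (h1 : ⟪x, α⟫ = -1) : sf α x = x + cv α := by
  rw [sf, cv, h1]
  norm_num
  rw [neg_div, neg_smul, sub_neg_eq_add]

lemma inner_cv {α w : E} : ⟪cv α, w⟫ = 2 / ⟪α, α⟫ * ⟪α, w⟫ := by
  rw [cv, real_inner_smul_left]

lemma inner_cv_right {α w : E} : ⟪w, cv α⟫ = 2 / ⟪α, α⟫ * ⟪w, α⟫ := by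
  rw [cv, real_inner_smul_right]

lemma inner_cv_self {α : E} (hc : ⟪α, α⟫ ≠ 0) : ⟪cv α, cv α⟫ = 4 / ⟪α, α⟫ := by
  rw [cv, real_inner_smul_left, real_inner_smul_right]
  field_simp
  ring

lemma inner_list_sum (l : List E) (w : E) :
    ⟪l.sum, w⟫ = (l.map (fun v => ⟪v, w⟫)).sum := by
  induction l with
  | nil => simp
  | cons a t ih => simp [inner_add_left, ih]

end root2


noncomputable def sl (α : E) : E →ₗ[ℝ] E where
  toFun := sf α
  map_add' x y := by
    simp only [sf, inner_add_left]
    match_scalars <;> ring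
  map_smul' r x := by
    simp only [sf, real_inner_smul_left, RingHom.id_apply]
    match_scalars <;> ring

noncomputable def se (α : E) (hc : ⟪α, α⟫ ≠ 0) : E ≃ₗ[ℝ] E :=
  LinearEquiv.ofLinear (sl α) (sl α)
    (LinearMap.ext fun v => sf_sf hc v) (LinearMap.ext fun v => sf_sf hc v)

lemma se_apply (α : E) (hc : ⟪α, α⟫ ≠ 0) (v : E) : se α hc v = sf α v := rfl

lemma se_mem {Φ : Set E} {α : E} (hc : ⟪α, α⟫ ≠ 0) (hα : α ∈ Φ) :
    se α hc ∈ WeylGroup Φ :=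
  Subgroup.subset_closure ⟨α, hα, fun v => rfl⟩

lemma list_sum_nonpos {l : List ℝ} (h : ∀ x ∈ l, x ≤ 0) : l.sum ≤ 0 := by
  induction l with
  | nil => simp
  | cons a t ih =>
    simp only [List.sum_cons]
    have h1 := h a (by simp)
    have h2 := ih (fun x hx => h x (by simp [hx]))
    linarith

section main
variable {Φ : Set E}

lemma L0 (hΦ : IsRootSystem Φ) :
    ∀ n : ℕ, ∀ l : List E, l.length ≤ n → (∀ a ∈ l, a ∈ S Φ) →
      Small Φ l.sum → l.sum = 0 := by
  classical
  intro n
  induction n with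
  | zero =>
    intro l hl _ _
    rw [List.length_eq_zero_iff.1 (Nat.le_zero.1 hl)]
    rfl
  | succ n ih =>
    intro l hlen hS hsmall
    by_cases h0 : l.sum = 0
    · exact h0
    exfalso
    have hqq : 0 < ⟪l.sum, l.sum⟫ := inner_self_pos' h0
    have hex : ∃ a ∈ l, 0 < ⟪a, l.sum⟫ := by
      by_contra hcon
      push_neg at hcon
      have hle : ⟪l.sum, l.sum⟫ ≤ 0 := by
        rw [inner_list_sum]
        apply list_sum_nonpos
        intro t ht
        obtain ⟨v, hv, rfl⟩ := List.mem_map.1 ht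
        exact hcon v hv
      linarith
    obtain ⟨a, hal, hapos⟩ := hex
    obtain ⟨β, hβ, haeq⟩ := hS a hal
    have hc := cpos hΦ hβ
    have hβq : 0 < ⟪l.sum, β⟫ := by
      rw [haeq, real_inner_smul_left] at hapos
      have h2c : 0 < 2 / ⟪β, β⟫ := by positivity
      nlinarith [real_inner_comm β l.sum]
    have h1 : ⟪l.sum, β⟫ = 1 := by
      rcases hsmall β hβ with h | h | h
      · linarith
      · linarith
      · exact h
    set l' := l.erase a with hl'
    have hperm := List.perm_cons_erase hal
    have hsum' : l.sum = a + l'.sum := by rw [hperm.sum_eq]; rfl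
    have hlen' : l'.length ≤ n := by
      have := List.length_erase_of_mem hal
      rw [← hl'] at this; omega
    have hS' : ∀ b ∈ l', b ∈ S Φ := fun b hb => hS b (List.mem_of_mem_erase hb)
    have hacv : a = cv β := haeq
    have hl'sum : l'.sum = sf β l.sum := by
      rw [sf_eq_sub_cv h1, hsum', hacv]; abel
    have hsmall' : Small Φ l'.sum := by
      rw [hl'sum]; exact sf_small hΦ hβ hsmall
    have hz : l'.sum = 0 := ih l' hlen' hS' hsmall'
    have hqa : l.sum = cv β := by rw [hsum', hz, add_zero, hacv]
    have h2 : ⟪l.sum, β⟫ = 2 := by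
      rw [hqa, cv, real_inner_smul_left]
      field_simp
    linarith

lemma conv (hΦ : IsRootSystem Φ) :
    ∀ n : ℕ, ∀ l : List E, l.length ≤ n → (∀ a ∈ l, a ∈ S Φ) →
      ∀ x ∈ coweightLattice Φ, Small Φ x → ‖x‖ ^ 2 ≤ ‖x + l.sum‖ ^ 2 := by
  classical
  intro n
  induction n with
  | zero =>
    intro l hl _ x _ _
    rw [List.length_eq_zero_iff.1 (Nat.le_zero.1 hl)]
    simp
  | succ n ih =>
    intro l hlen hS x hxw hxs
    by_cases hA : ∃ a ∈ l, ∃ β ∈ Φ, a = (2 / ⟪β, β⟫) • β ∧ ⟪x, β⟫ = -1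
    · obtain ⟨a, hal, β, hβ, haeq, hm1⟩ := hA
      set l' := l.erase a with hl'
      have hperm := List.perm_cons_erase hal
      have hsum' : l.sum = a + l'.sum := by rw [hperm.sum_eq]; rfl
      have hlen' : l'.length ≤ n := by
        have := List.length_erase_of_mem hal
        rw [← hl'] at this; omega
      have hS' : ∀ b ∈ l', b ∈ S Φ := fun b hb => hS b (List.mem_of_mem_erase hb)
      have hc := cpos hΦ hβ
      have hx' : sf β x = x + cv β := sf_eq_add_cv hm1
      have key := ih l' hlen' hS' (sf β x) (sf_coweight hΦ hβ hxw) (sf_small hΦ hβ hxs)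
      have hacv : a = cv β := haeq
      have heq : sf β x + l'.sum = x + l.sum := by
        rw [hx', hsum', hacv]; abel
      rw [heq] at key
      calc ‖x‖ ^ 2 = ‖sf β x‖ ^ 2 := by rw [norm_sf hc.ne']
        _ ≤ ‖x + l.sum‖ ^ 2 := key
    by_cases hB : ∃ a ∈ l, ∃ β ∈ Φ, a = (2 / ⟪β, β⟫) • β ∧ 1 ≤ ⟪x + l.sum, β⟫
    · obtain ⟨a, hal, β, hβ, haeq, h1⟩ := hB
      set l' := l.erase a with hl'
      have hperm := List.perm_cons_erase hal
      have hsum' : l.sum = a + l'.sum := by rw [hperm.sum_eq]; rfl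
      have hlen' : l'.length ≤ n := by
        have := List.length_erase_of_mem hal
        rw [← hl'] at this; omega
      have hS' : ∀ b ∈ l', b ∈ S Φ := fun b hb => hS b (List.mem_of_mem_erase hb)
      have hc := cpos hΦ hβ
      have hacv : a = cv β := haeq
      have key := ih l' hlen' hS' x hxw hxs
      have hxq : x + l.sum = (x + l'.sum) + a := by rw [hsum']; abel
      have ha2 : ‖a‖ ^ 2 = 4 / ⟪β, β⟫ := by
        rw [← real_inner_self_eq_norm_sq, hacv, inner_cv_self hc.ne']
      have hinner : ⟪x + l'.sum, a⟫ = 2 / ⟪β, β⟫ * ⟪x + l.sum, β⟫ - 4 / ⟪β, β⟫ := by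
        have hrw : x + l'.sum = (x + l.sum) - a := by rw [hxq]; abel
        rw [hrw, inner_sub_left, hacv, inner_cv_right, inner_cv_self hc.ne']
      have hexp : ‖(x + l'.sum) + a‖ ^ 2
          = ‖x + l'.sum‖ ^ 2 + 2 * ⟪x + l'.sum, a⟫ + ‖a‖ ^ 2 := norm_add_sq_real _ _
      have hstep : ‖x + l'.sum‖ ^ 2 ≤ ‖x + l.sum‖ ^ 2 := by
        rw [hxq, hexp, ha2, hinner]
        have hh : 2 * (2 / ⟪β, β⟫ * ⟪x + l.sum, β⟫ - 4 / ⟪β, β⟫) + 4 / ⟪β, β⟫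
            = 4 / ⟪β, β⟫ * (⟪x + l.sum, β⟫ - 1) := by ring
        have hpos : 0 ≤ 4 / ⟪β, β⟫ * (⟪x + l.sum, β⟫ - 1) :=
          mul_nonneg (by positivity) (by linarith)
        linarith [hh ▸ hpos]
      linarith
    · push_neg at hA hB
      have hq0 : l.sum = 0 := by
        by_contra h0
        have hqq : 0 < ⟪l.sum, l.sum⟫ := inner_self_pos' h0
        have hle : ∀ a ∈ l, ⟪a, l.sum⟫ ≤ 0 := by
          intro a hal
          obtain ⟨β, hβ, haeq⟩ := hS a hal
          have hc := cpos hΦ hβ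
          have hxβ0 : 0 ≤ ⟪x, β⟫ := by
            rcases hxs β hβ with h | h | h
            · exact absurd h (hA a hal β hβ haeq)
            · rw [h]
            · rw [h]; norm_num
          have hyβ : ⟪x + l.sum, β⟫ < 1 := hB a hal β hβ haeq
          have hql : l.sum ∈ corootLattice Φ :=
            AddSubgroup.list_sum_mem _ (fun b hb => S_mem_lattice (hS b hb))
          obtain ⟨m, hm⟩ := pair_int hΦ hql hβ
          obtain ⟨k, hk⟩ := hxw β hβ
          have hsum_in : ⟪x + l.sum, β⟫ = (k : ℝ) + m := by
            rw [inner_add_left, hk, hm]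
          have hkm : ((k + m : ℤ) : ℝ) < 1 := by push_cast; linarith [hsum_in ▸ hyβ]
          have hkm' : (k + m : ℤ) ≤ 0 := by
            have : (k + m : ℤ) < 1 := by exact_mod_cast hkm
            omega
          have hqβ : ⟪l.sum, β⟫ ≤ 0 := by
            have h2 : ((k + m : ℤ) : ℝ) ≤ 0 := by exact_mod_cast hkm'
            push_cast at h2
            rw [hm]
            linarith [hk ▸ hxβ0]
          rw [haeq, real_inner_smul_left]
          have h2c : 0 ≤ 2 / ⟪β, β⟫ := by positivity
          have := mul_le_mul_of_nonneg_left hqβ h2c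
          rw [mul_zero] at this
          calc 2 / ⟪β, β⟫ * ⟪β, l.sum⟫ = 2 / ⟪β, β⟫ * ⟪l.sum, β⟫ := by
                rw [real_inner_comm β l.sum]
            _ ≤ 0 := this
        have hle2 : ⟪l.sum, l.sum⟫ ≤ 0 := by
          rw [inner_list_sum]
          apply list_sum_nonpos
          intro t ht
          obtain ⟨v, hv, rfl⟩ := List.mem_map.1 ht
          exact hle v hv
        linarith
      rw [hq0, add_zero]

lemma descent (hΦ : IsRootSystem Φ) {M : ℝ} (hM0 : 0 < M)
    (hM : ∀ α ∈ Φ, ⟪α, α⟫ ≤ M) :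
    ∀ n : ℕ, ∀ x ∈ coweightLattice Φ, ∀ y ∈ coweightLattice Φ,
      Small Φ x → Small Φ y → y - x ∈ corootLattice Φ →
      ‖y - x‖ ^ 2 ≤ (n : ℝ) * (4 / M) → ∃ w ∈ WeylGroup Φ, y = w x := by
  intro n
  induction n with
  | zero =>
    intro x hxw y hyw hxs hys hq hn
    have h0 : ‖y - x‖ ^ 2 ≤ 0 := by simpa using hn
    have h1 : ‖y - x‖ = 0 := by nlinarith [norm_nonneg (y - x), sq_nonneg ‖y - x‖]
    have h2 : y = x := by
      have := norm_eq_zero.1 h1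
      rwa [sub_eq_zero] at this
    exact ⟨1, one_mem _, by simp [h2]⟩
  | succ n ih =>
    intro x hxw y hyw hxs hys hq hn
    by_cases hA : ∃ α ∈ Φ, ⟪y, α⟫ = 1 ∧ ⟪x, α⟫ = -1
    · obtain ⟨α, hα, hy1, hxm1⟩ := hA
      have hc := cpos hΦ hα
      have hy' : sf α y = y - cv α := sf_eq_sub_cv hy1
      have hcvS : cv α ∈ S Φ := ⟨α, hα, rfl⟩
      have hq' : sf α y - x ∈ corootLattice Φ := by
        have hrw : sf α y - x = (y - x) - cv α := by rw [hy']; abel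
        rw [hrw]
        exact sub_mem hq (S_mem_lattice hcvS)
      have hnorm : ‖sf α y - x‖ ^ 2 = ‖y - x‖ ^ 2 - 4 / ⟪α, α⟫ := by
        have hrw : sf α y - x = (y - x) - cv α := by rw [hy']; abel
        rw [hrw, norm_sub_sq_real]
        have h2 : ⟪y - x, cv α⟫ = 4 / ⟪α, α⟫ := by
          rw [inner_cv_right, inner_sub_left, hy1, hxm1]
          field_simp; ring
        have h3 : ‖cv α‖ ^ 2 = 4 / ⟪α, α⟫ := by
          rw [← real_inner_self_eq_norm_sq, inner_cv_self hc.ne']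
        rw [h2, h3]; ring
      have hle : ‖sf α y - x‖ ^ 2 ≤ (n : ℝ) * (4 / M) := by
        have h4 : 4 / M ≤ 4 / ⟪α, α⟫ := by
          rw [div_le_div_iff₀ hM0 hc]
          nlinarith [hM α hα]
        push_cast at hn
        rw [hnorm]
        linarith
      obtain ⟨w', hw', hyw'⟩ := ih x hxw (sf α y) (sf_coweight hΦ hα hyw) hxs
        (sf_small hΦ hα hys) hq' hle
      refine ⟨se α hc.ne' * w', mul_mem (se_mem hc.ne' hα) hw', ?_⟩
      have happ : (se α hc.ne' * w') x = se α hc.ne' (w' x) := rfl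
      rw [happ, ← hyw', se_apply, sf_sf hc.ne']
    · push_neg at hA
      have hsmallq : Small Φ (y - x) := by
        intro α hα
        have hval : ⟪y - x, α⟫ = ⟪y, α⟫ - ⟪x, α⟫ := inner_sub_left _ _ _
        rcases hys α hα with h1 | h1 | h1 <;> rcases hxs α hα with h2 | h2 | h2 <;>
            rw [hval, h1, h2] <;> try norm_num
        · exfalso
          have h1' : ⟪y, -α⟫ = 1 := by simp [inner_neg_right, h1]
          have h2' : ⟪x, -α⟫ = -1 := by simp [inner_neg_right, h2]
          exact hA (-α) (neg_mem hΦ hα) h1' h2'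
        · exact absurd h2 (hA α hα h1)
      obtain ⟨l, hl, hsum⟩ := exists_list hΦ hq
      have hz : y - x = 0 := by
        rw [← hsum]
        exact L0 hΦ l.length l le_rfl hl (hsum ▸ hsmallq)
      have h2 : y = x := by rwa [sub_eq_zero] at hz
      exact ⟨1, one_mem _, by simp [h2]⟩

lemma sq_norm_le (u v : E) (h : ‖u‖ ^ 2 ≤ ‖v‖ ^ 2) : ‖u‖ ≤ ‖v‖ := by
  nlinarith [norm_nonneg u, norm_nonneg v]

lemma part_a (hΦ : IsRootSystem Φ) {x : E} (hx : x ∈ coweightLattice Φ) :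
    (∀ q ∈ corootLattice Φ, ‖x‖ ≤ ‖x + q‖) ↔ Small Φ x := by
  constructor
  · intro hmin α hα
    have hc := cpos hΦ hα
    obtain ⟨k, hk⟩ := hx α hα
    have hcvmem : cv α ∈ corootLattice Φ := S_mem_lattice ⟨α, hα, rfl⟩
    have hcv2 : ‖cv α‖ ^ 2 = 4 / ⟪α, α⟫ := by
      rw [← real_inner_self_eq_norm_sq, inner_cv_self hc.ne']
    have hxcv : ⟪x, cv α⟫ = 2 / ⟪α, α⟫ * (k : ℝ) := by
      rw [inner_cv_right, hk]
    have h1 : ‖x‖ ^ 2 ≤ ‖x + cv α‖ ^ 2 :=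
      pow_le_pow_left₀ (norm_nonneg _) (hmin _ hcvmem) 2
    have h2 : ‖x‖ ^ 2 ≤ ‖x - cv α‖ ^ 2 := by
      have := hmin _ (neg_mem_iff.2 hcvmem)
      rw [← sub_eq_add_neg] at this
      exact pow_le_pow_left₀ (norm_nonneg _) this 2
    rw [norm_add_sq_real, hxcv, hcv2] at h1
    rw [norm_sub_sq_real, hxcv, hcv2] at h2
    have hklb : (-1 : ℝ) ≤ (k : ℝ) := by
      have hh : 0 ≤ 4 / ⟪α, α⟫ * ((k : ℝ) + 1) := by
        have : 2 * (2 / ⟪α, α⟫ * (k : ℝ)) + 4 / ⟪α, α⟫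
            = 4 / ⟪α, α⟫ * ((k : ℝ) + 1) := by ring
        linarith [h1, this]
      nlinarith [div_pos (by norm_num : (0:ℝ) < 4) hc]
    have hkub : (k : ℝ) ≤ 1 := by
      have hh : 0 ≤ 4 / ⟪α, α⟫ * (1 - (k : ℝ)) := by
        have : -(2 * (2 / ⟪α, α⟫ * (k : ℝ))) + 4 / ⟪α, α⟫
            = 4 / ⟪α, α⟫ * (1 - (k : ℝ)) := by ring
        linarith [h2, this]
      nlinarith [div_pos (by norm_num : (0:ℝ) < 4) hc]
    have hk1 : (-1 : ℤ) ≤ k := by exact_mod_cast hklb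
    have hk2 : k ≤ (1 : ℤ) := by exact_mod_cast hkub
    interval_cases k
    · left; rw [hk]; norm_num
    · right; left; rw [hk]; norm_num
    · right; right; rw [hk]; norm_num
  · intro hs q hq
    obtain ⟨l, hl, hsum⟩ := exists_list hΦ hq
    apply sq_norm_le
    rw [← hsum]
    exact conv hΦ l.length l le_rfl hl x hx hs

end main
end MinAux

/-- A coweight has minimal norm in its coroot-lattice coset iff it pairs with every root in
`{-1, 0, 1}`; and two minimal coweights in the same coset lie in the same Weyl group orbit. -/
theorem minimal_coweights {E : Type*} [NormedAddCommGroup E] [InnerProductSpace ℝ E]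
    [FiniteDimensional ℝ E] (Φ : Set E) (hΦ : IsRootSystem Φ) :
    (∀ x ∈ coweightLattice Φ,
      ((∀ q ∈ corootLattice Φ, ‖x‖ ≤ ‖x + q‖) ↔
        ∀ α ∈ Φ, ⟪x, α⟫ = -1 ∨ ⟪x, α⟫ = 0 ∨ ⟪x, α⟫ = 1)) ∧
    (∀ x ∈ coweightLattice Φ, ∀ y ∈ coweightLattice Φ,
      y - x ∈ corootLattice Φ →
      (∀ q ∈ corootLattice Φ, ‖x‖ ≤ ‖x + q‖) →
      (∀ q ∈ corootLattice Φ, ‖y‖ ≤ ‖y + q‖) →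
      ∃ w ∈ WeylGroup Φ, y = w x) := by
  classical
  have ha : ∀ x ∈ coweightLattice Φ, ((∀ q ∈ corootLattice Φ, ‖x‖ ≤ ‖x + q‖) ↔
      ∀ α ∈ Φ, ⟪x, α⟫ = -1 ∨ ⟪x, α⟫ = 0 ∨ ⟪x, α⟫ = 1) :=
    fun x hx => MinAux.part_a hΦ hx
  refine ⟨ha, ?_⟩
  intro x hx y hy hq hminx hminy
  have hxs : MinAux.Small Φ x := (ha x hx).1 hminx
  have hys : MinAux.Small Φ y := (ha y hy).1 hminy
  by_cases hne : Φ.Nonempty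
  · have hFne : hΦ.1.toFinset.Nonempty := by
      rwa [Set.Finite.toFinset_nonempty]
    set M := hΦ.1.toFinset.sup' hFne (fun α => ⟪α, α⟫) with hMdef
    have hM : ∀ α ∈ Φ, ⟪α, α⟫ ≤ M := by
      intro α hα
      exact Finset.le_sup' (fun β : E => ⟪β, β⟫) ((Set.Finite.mem_toFinset hΦ.1).2 hα)
    have hM0 : 0 < M := by
      obtain ⟨α, hα⟩ := hne
      exact lt_of_lt_of_le (MinAux.cpos hΦ hα) (hM α hα)
    have h4M : (0:ℝ) < 4 / M := by positivity
    obtain ⟨n, hn⟩ := exists_nat_ge (‖y - x‖ ^ 2 / (4 / M))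
    have hbound : ‖y - x‖ ^ 2 ≤ (n:ℝ) * (4 / M) := by
      rw [div_le_iff₀ h4M] at hn; linarith
    exact MinAux.descent hΦ hM0 hM n x hx y hy hxs hys hq hbound
  · obtain ⟨l, hl, hsum⟩ := MinAux.exists_list hΦ hq
    have hlnil : l = [] := by
      cases l with
      | nil => rfl
      | cons a t =>
        exfalso
        obtain ⟨α, hα, _⟩ := hl a (by simp)
        exact hne ⟨α, hα⟩
    have h2 : y = x := by
      have h3 : y - x = 0 := by rw [← hsum, hlnil]; rfl
      rwa [sub_eq_zero] at h3
    exact ⟨1, one_mem _, by simp [h2]⟩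
end

section
/- Let Φ be a root system in a finite-dimensional real inner product space E which is simply-laced, i.e. ⟪α, α⟫ = 2 for all α ∈ Φ, and let Q ⊆ E be the root lattice, the additive subgroup of E generated by Φ. If x ∈ Q satisfies ⟪x, x⟫ = 2, then x ∈ Φ. -/
open scoped RealInnerProductSpace

section Aux

variable {E : Type*} [NormedAddCommGroup E] [InnerProductSpace ℝ E] {Φ : Set E}

lemma neg_mem_aux (hΦ : IsRootSystem Φ) (hsl : ∀ α ∈ Φ, ⟪α, α⟫ = 2)
    {α : E} (hα : α ∈ Φ) : -α ∈ Φ := by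
  have h := hΦ.2.2.2 α hα α hα
  rw [hsl α hα] at h
  have : (2 * 2 / 2 : ℝ) = 2 := by norm_num
  rw [this] at h
  convert h using 1
  module

lemma inner_int_aux (hΦ : IsRootSystem Φ) (hsl : ∀ α ∈ Φ, ⟪α, α⟫ = 2)
    {β : E} (hβ : β ∈ Φ) (l : List E) (hl : ∀ a ∈ l, a ∈ Φ) :
    ∃ n : ℤ, ⟪l.sum, β⟫ = (n : ℝ) := by
  induction l with
  | nil => exact ⟨0, by simp⟩
  | cons a t ih =>
    obtain ⟨m, hm⟩ := ih (fun b hb => hl b (List.mem_cons_of_mem a hb))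
    obtain ⟨n, hn⟩ := hΦ.2.2.1 β hβ a (hl a (List.mem_cons_self))
    rw [hsl β hβ] at hn
    have ha : ⟪a, β⟫ = (n : ℝ) := by
      field_simp at hn; linarith
    exact ⟨n + m, by rw [List.sum_cons, inner_add_left, ha, hm]; push_cast; ring⟩

lemma list_sum_nonpos (l : List ℝ) (h : ∀ a ∈ l, a ≤ 0) : l.sum ≤ 0 := by
  induction l with
  | nil => simp
  | cons a t ih =>
    rw [List.sum_cons]
    have := ih (fun b hb => h b (List.mem_cons_of_mem a hb))
    have := h a (List.mem_cons_self)
    linarith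

lemma key_aux (hΦ : IsRootSystem Φ) (hsl : ∀ α ∈ Φ, ⟪α, α⟫ = 2) :
    ∀ (N : ℕ) (l : List E), l.length = N → (∀ a ∈ l, a ∈ Φ) → ⟪l.sum, l.sum⟫ = 2 →
      l.sum ∈ Φ := by
  intro N
  induction N using Nat.strong_induction_on with
  | _ N ih =>
    intro l hlen hl hsum
    classical
    set x := l.sum with hx
    -- find a ∈ l with ⟪x, a⟫ > 0
    have hmap : ((l.map (fun a => ⟪x, a⟫)).sum : ℝ) = 2 := by
      rw [← hsum, hx]
      simpa [hx] using (map_list_sum (innerSL ℝ x) l).symm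
    have hpos : ∃ a ∈ l, (0 : ℝ) < ⟪x, a⟫ := by
      by_contra h
      push_neg at h
      have : ((l.map (fun a => ⟪x, a⟫)).sum : ℝ) ≤ 0 :=
        list_sum_nonpos _ (by
          intro y hy
          obtain ⟨a, ha, rfl⟩ := List.mem_map.mp hy
          exact h a ha)
      linarith
    obtain ⟨a, hal, hpa⟩ := hpos
    have haΦ : a ∈ Φ := hl a hal
    have haa : ⟪a, a⟫ = 2 := hsl a haΦ
    obtain ⟨n, hn'⟩ := inner_int_aux hΦ hsl haΦ l hl
    have hn : ⟪x, a⟫ = (n : ℝ) := hn' 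
    -- 0 ≤ ⟪x - a, x - a⟫ = 4 - 2⟪x,a⟫
    have hexp : ⟪x - a, x - a⟫ = 4 - 2 * ⟪x, a⟫ := by
      rw [inner_sub_sub_self, hsum, haa, real_inner_comm a x]; ring
    have hle : ⟪x, a⟫ ≤ 2 := by
      have := real_inner_self_nonneg (x := x - a); linarith
    rcases eq_or_lt_of_le hle with heq | hlt
    · -- x = a
      have : ⟪x - a, x - a⟫ = 0 := by rw [hexp, heq]; ring
      have hxa : x - a = 0 := by
        simpa using (inner_self_eq_zero (𝕜 := ℝ)).mp this
      have : x = a := by rwa [sub_eq_zero] at hxa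
      rw [this]; exact haΦ
    · -- ⟪x,a⟫ = 1
      have hn1 : (n : ℝ) = 1 := by
        have h1 : (0:ℝ) < (n:ℝ) := by rwa [← hn]
        have h2 : ((n:ℝ)) < 2 := by rwa [hn] at hlt
        have : (0:ℤ) < n := by exact_mod_cast h1
        have : n < 2 := by exact_mod_cast h2
        have hone : n = 1 := by omega
        rw [hone]; norm_num
      have hxa1 : ⟪x, a⟫ = 1 := by rw [hn, hn1]
      -- remove a from the list
      have hperm : (a :: l.erase a).Perm l := (List.perm_cons_erase hal).symm
      have hsum' : a + (l.erase a).sum = x := by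
        rw [hx, ← hperm.sum_eq, List.sum_cons]
      set y := (l.erase a).sum with hy
      have hyx : y = x - a := by rw [← hsum']; abel
      have hyy : ⟪y, y⟫ = 2 := by rw [hyx, hexp, hxa1]; ring
      have hylen : (l.erase a).length < N := by
        rw [← hlen]
        have := List.length_erase_add_one hal
        omega
      have hyl : ∀ b ∈ l.erase a, b ∈ Φ := fun b hb => hl b (List.mem_of_mem_erase hb)
      have hyΦ : y ∈ Φ := ih _ hylen _ rfl hyl hyy
      -- reflect y through a: y - ⟪y,a⟫ • a = y + a = x
      have hya : ⟪y, a⟫ = -1 := by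
        rw [hyx, inner_sub_left, hxa1, haa]; ring
      have hr := hΦ.2.2.2 a haΦ y hyΦ
      rw [haa, hya] at hr
      have hco : (2 * (-1) / 2 : ℝ) = -1 := by norm_num
      rw [hco] at hr
      have : y - (-1 : ℝ) • a = x := by
        rw [← hsum', hy]; module
      rwa [this] at hr

end Aux

/-- In a simply-laced root system, any vector of the root lattice of squared norm `2`
is a root. -/
theorem mem_of_norm_two_of_mem_rootLattice {E : Type*} [NormedAddCommGroup E]
    [InnerProductSpace ℝ E] [FiniteDimensional ℝ E] (Φ : Set E) (hΦ : IsRootSystem Φ)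
    (hsl : ∀ α ∈ Φ, ⟪α, α⟫ = 2)
    (x : E) (hx : x ∈ AddSubgroup.closure Φ) (hx2 : ⟪x, x⟫ = 2) :
    x ∈ Φ := by
  have hneg : Φ ∪ -Φ = Φ := by
    apply Set.union_eq_self_of_subset_right
    intro a ha
    rw [Set.mem_neg] at ha
    simpa using neg_mem_aux hΦ hsl ha
  have hx' : x ∈ AddSubmonoid.closure Φ := by
    have : x ∈ (AddSubgroup.closure Φ).toAddSubmonoid := hx
    rwa [AddSubgroup.closure_toAddSubmonoid, hneg] at this
  obtain ⟨l, hl, hsum⟩ := AddSubmonoid.exists_list_of_mem_closure hx'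
  rw [← hsum] at hx2 ⊢
  exact key_aux hΦ hsl l.length l rfl hl hx2
end

section
/- Let s ≥ 0 be a real number and let a, b : ℤ → ℂ satisfy |a|_s := Σ_{k∈ℤ} (1+|k|)^s·|a(k)| < ∞ and ‖b‖_s := (Σ_{k∈ℤ} (1+|k|)^{2s}·|b(k)|²)^{1/2} < ∞. Then for every k ∈ ℤ the convolution (a∗b)(k) := Σ_{j∈ℤ} a(j)·b(k−j) converges absolutely, and (Σ_{k∈ℤ} (1+|k|)^{2s}·|(a∗b)(k)|²)^{1/2} ≤ |a|_s · ‖b‖_s. -/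
open scoped ENNReal
open MeasureTheory

private lemma weight_submul (s : ℝ) (hs : 0 ≤ s) (k j : ℤ) :
    (1 + |(k : ℝ)|) ^ s ≤ (1 + |(j : ℝ)|) ^ s * (1 + |((k - j : ℤ) : ℝ)|) ^ s := by
  rw [← Real.mul_rpow (by positivity) (by positivity)]
  apply Real.rpow_le_rpow (by positivity) _ hs
  have h1 : |(k : ℝ)| ≤ |(j : ℝ)| + |((k - j : ℤ) : ℝ)| := by
    push_cast
    calc |(k : ℝ)| = |(j : ℝ) + ((k : ℝ) - (j : ℝ))| := by ring_nf
      _ ≤ |(j : ℝ)| + |(k : ℝ) - (j : ℝ)| := abs_add_le _ _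
  nlinarith [abs_nonneg ((j : ℝ)), abs_nonneg (((k - j : ℤ) : ℝ))]

private lemma ennreal_cauchy_schwarz (u v : ℤ → ℝ≥0∞) :
    ∑' j, u j * v j ≤
      (∑' j, u j ^ (2 : ℝ)) ^ (1 / 2 : ℝ) * (∑' j, v j ^ (2 : ℝ)) ^ (1 / 2 : ℝ) := by
  have hpq : (2 : ℝ).HolderConjugate 2 := Real.HolderConjugate.two_two
  have h := ENNReal.lintegral_mul_le_Lp_mul_Lq (Measure.count : Measure ℤ) hpq
    (measurable_of_countable u).aemeasurable (measurable_of_countable v).aemeasurable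
  simpa [lintegral_count] using h

/-- Sobolev product estimate for sequences: if `|a|_s < ∞` and `‖b‖_s < ∞` then the
convolution `a ∗ b` converges absolutely and `‖a ∗ b‖_s ≤ |a|_s · ‖b‖_s`. -/
theorem sobolev_convolution_estimate (s : ℝ) (hs : 0 ≤ s) (a b : ℤ → ℂ)
    (ha : Summable fun k : ℤ => (1 + |(k : ℝ)|) ^ s * ‖a k‖)
    (hb : Summable fun k : ℤ => (1 + |(k : ℝ)|) ^ (2 * s) * ‖b k‖ ^ 2) :
    (∀ k : ℤ, Summable fun j : ℤ => ‖a j * b (k - j)‖) ∧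
    (Summable fun k : ℤ =>
      (1 + |(k : ℝ)|) ^ (2 * s) * ‖∑' j : ℤ, a j * b (k - j)‖ ^ 2) ∧
    Real.sqrt (∑' k : ℤ, (1 + |(k : ℝ)|) ^ (2 * s) * ‖∑' j : ℤ, a j * b (k - j)‖ ^ 2) ≤
      (∑' k : ℤ, (1 + |(k : ℝ)|) ^ s * ‖a k‖) *
        Real.sqrt (∑' k : ℤ, (1 + |(k : ℝ)|) ^ (2 * s) * ‖b k‖ ^ 2) := by
  set w : ℤ → ℝ := fun k => (1 + |(k : ℝ)|) ^ s with hw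
  have hw0 : ∀ k, 0 ≤ w k := fun k => by positivity
  have hw1 : ∀ k, 1 ≤ w k := fun k => by
    have : (1 : ℝ) = 1 ^ s := (Real.one_rpow s).symm
    rw [hw]; rw [this]
    exact Real.rpow_le_rpow (by norm_num) (by linarith [abs_nonneg ((k : ℝ))]) hs
  set A : ℤ → ℝ := fun k => w k * ‖a k‖ with hA
  set B : ℤ → ℝ := fun k => w k * ‖b k‖ with hB
  have hA0 : ∀ k, 0 ≤ A k := fun k => mul_nonneg (hw0 k) (norm_nonneg _)
  have hB0 : ∀ k, 0 ≤ B k := fun k => mul_nonneg (hw0 k) (norm_nonneg _)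
  have hsq : ∀ x : ℝ, 0 ≤ x → x ^ (2 * s) = (x ^ s) ^ 2 := fun x hx => by
    rw [mul_comm, Real.rpow_mul hx, ← Real.rpow_natCast (x ^ s) 2]; norm_num
  have hkey : ∀ k : ℤ, (1 + |(k : ℝ)|) ^ (2 * s) * ‖b k‖ ^ 2 = B k ^ 2 := fun k => by
    rw [hsq _ (by positivity), hB, mul_pow]
  have hb2 : Summable fun k => B k ^ 2 := hb.congr hkey
  have htB : (∑' k : ℤ, (1 + |(k : ℝ)|) ^ (2 * s) * ‖b k‖ ^ 2) = ∑' k, B k ^ 2 :=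
    tsum_congr hkey
  set M : ℝ := Real.sqrt (∑' k, B k ^ 2) with hM
  have hBle : ∀ k, B k ≤ M := fun k => by
    have h1 : B k ^ 2 ≤ ∑' k, B k ^ 2 := Summable.le_tsum hb2 k fun j _ => sq_nonneg _
    calc B k = Real.sqrt (B k ^ 2) := (Real.sqrt_sq (hB0 k)).symm
      _ ≤ M := Real.sqrt_le_sqrt h1
  have hM0 : 0 ≤ M := Real.sqrt_nonneg _
  have ha' : Summable fun k => ‖a k‖ :=
    Summable.of_nonneg_of_le (fun k => norm_nonneg _)
      (fun k => le_mul_of_one_le_left (norm_nonneg _) (hw1 k)) ha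
  have hbnorm : ∀ k, ‖b k‖ ≤ M := fun k =>
    le_trans (le_mul_of_one_le_left (norm_nonneg _) (hw1 k)) (hBle k)
  -- Part 1
  have part1 : ∀ k : ℤ, Summable fun j : ℤ => ‖a j * b (k - j)‖ := fun k => by
    apply Summable.of_nonneg_of_le (fun j => norm_nonneg _) (fun j => ?_) (ha'.mul_right M)
    rw [norm_mul]
    exact mul_le_mul_of_nonneg_left (hbnorm _) (norm_nonneg _)
  have hH : ∀ k : ℤ, Summable fun j : ℤ => A j * B (k - j) := fun k => by
    apply Summable.of_nonneg_of_le (fun j => mul_nonneg (hA0 j) (hB0 _)) (fun j => ?_)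
      (ha.mul_right M)
    exact mul_le_mul_of_nonneg_left (hBle _) (hA0 j)
  set c : ℤ → ℂ := fun k => ∑' j : ℤ, a j * b (k - j) with hc
  have hreal : ∀ k, w k * ‖c k‖ ≤ ∑' j, A j * B (k - j) := fun k => by
    calc w k * ‖c k‖ ≤ w k * ∑' j, ‖a j * b (k - j)‖ :=
          mul_le_mul_of_nonneg_left (norm_tsum_le_tsum_norm (part1 k)) (hw0 k)
      _ = ∑' j, w k * ‖a j * b (k - j)‖ := (tsum_mul_left).symm
      _ ≤ ∑' j, A j * B (k - j) := by
          apply Summable.tsum_le_tsum _ ((part1 k).mul_left _) (hH k)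
          intro j
          rw [norm_mul]
          have h := mul_le_mul_of_nonneg_right (weight_submul s hs k j)
            (mul_nonneg (norm_nonneg (a j)) (norm_nonneg (b (k - j))))
          calc w k * (‖a j‖ * ‖b (k - j)‖)
              ≤ (w j * w (k - j)) * (‖a j‖ * ‖b (k - j)‖) := h
            _ = A j * B (k - j) := by rw [hA, hB]; ring
  -- move to ℝ≥0∞
  set F : ℤ → ℝ≥0∞ := fun j => ENNReal.ofReal (A j) with hF
  set G : ℤ → ℝ≥0∞ := fun j => ENNReal.ofReal (B j) with hG
  set SA : ℝ≥0∞ := ∑' j, F j with hSA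
  set SB : ℝ≥0∞ := ∑' j, G j ^ (2 : ℝ) with hSB
  have hSAeq : SA = ENNReal.ofReal (∑' k, A k) :=
    (ENNReal.ofReal_tsum_of_nonneg hA0 ha).symm
  have hGsq : ∀ j, G j ^ (2 : ℝ) = ENNReal.ofReal (B j ^ 2) := fun j => by
    rw [ENNReal.rpow_two, hG, ← ENNReal.ofReal_pow (hB0 j)]
  have hSBeq : SB = ENNReal.ofReal (∑' k, B k ^ 2) := by
    rw [hSB, ENNReal.ofReal_tsum_of_nonneg (fun k => sq_nonneg _) hb2]
    exact tsum_congr hGsq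
  have hSAne : SA ≠ ⊤ := by rw [hSAeq]; exact ENNReal.ofReal_ne_top
  have hSBne : SB ≠ ⊤ := by rw [hSBeq]; exact ENNReal.ofReal_ne_top
  have L1 : ∀ k, ENNReal.ofReal (w k * ‖c k‖) ≤ ∑' j, F j * G (k - j) := fun k => by
    have heq : ∑' j, F j * G (k - j) = ENNReal.ofReal (∑' j, A j * B (k - j)) := by
      rw [ENNReal.ofReal_tsum_of_nonneg (fun j => mul_nonneg (hA0 j) (hB0 _)) (hH k)]
      exact tsum_congr fun j => by rw [ENNReal.ofReal_mul (hA0 j)]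
    rw [heq]
    exact ENNReal.ofReal_le_ofReal (hreal k)
  set D : ℤ → ℝ≥0∞ := fun k => ∑' j, F j * G (k - j) ^ (2 : ℝ) with hD
  have hCS : ∀ k, ∑' j, F j * G (k - j) ≤ SA ^ (1 / 2 : ℝ) * D k ^ (1 / 2 : ℝ) := fun k => by
    have h := ennreal_cauchy_schwarz (fun j => F j ^ (1 / 2 : ℝ))
      (fun j => F j ^ (1 / 2 : ℝ) * G (k - j))
    have e2 : ∀ j, (F j ^ (1 / 2 : ℝ)) ^ (2 : ℝ) = F j := fun j => by
      rw [← ENNReal.rpow_mul]; norm_num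
    have e1 : ∀ j, F j ^ (1 / 2 : ℝ) * (F j ^ (1 / 2 : ℝ) * G (k - j)) = F j * G (k - j) :=
      fun j => by
        rw [← mul_assoc, ← ENNReal.rpow_add_of_nonneg _ _ (by norm_num) (by norm_num)]
        norm_num
    have e3 : ∀ j, (F j ^ (1 / 2 : ℝ) * G (k - j)) ^ (2 : ℝ) = F j * G (k - j) ^ (2 : ℝ) :=
      fun j => by rw [ENNReal.mul_rpow_of_nonneg _ _ (by norm_num), e2 j]
    calc ∑' j, F j * G (k - j)
        = ∑' j, F j ^ (1 / 2 : ℝ) * (F j ^ (1 / 2 : ℝ) * G (k - j)) :=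
          (tsum_congr e1).symm
      _ ≤ (∑' j, (F j ^ (1 / 2 : ℝ)) ^ (2 : ℝ)) ^ (1 / 2 : ℝ) *
            (∑' j, (F j ^ (1 / 2 : ℝ) * G (k - j)) ^ (2 : ℝ)) ^ (1 / 2 : ℝ) := h
      _ = SA ^ (1 / 2 : ℝ) * D k ^ (1 / 2 : ℝ) := by
          rw [tsum_congr e2, tsum_congr e3]
  have hCk2 : ∀ k, (∑' j, F j * G (k - j)) ^ (2 : ℝ) ≤ SA * D k := fun k => by
    calc (∑' j, F j * G (k - j)) ^ (2 : ℝ)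
        ≤ (SA ^ (1 / 2 : ℝ) * D k ^ (1 / 2 : ℝ)) ^ (2 : ℝ) :=
          ENNReal.rpow_le_rpow (hCS k) (by norm_num)
      _ = SA * D k := by
          rw [ENNReal.mul_rpow_of_nonneg _ _ (by norm_num), ← ENNReal.rpow_mul,
            ← ENNReal.rpow_mul]
          norm_num
  have hDsum : ∑' k, D k = SA * SB := by
    rw [hD]
    rw [ENNReal.tsum_comm]
    have : ∀ j : ℤ, ∑' k : ℤ, F j * G (k - j) ^ (2 : ℝ) = F j * SB := fun j => by
      rw [ENNReal.tsum_mul_left]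
      congr 1
      rw [hSB]
      exact ((Equiv.addRight j).tsum_eq fun k => G (k - j) ^ (2 : ℝ)).symm.trans
        (tsum_congr fun k => by simp)
    rw [tsum_congr this, ENNReal.tsum_mul_right]
  have hmain : ∑' k, ENNReal.ofReal (w k * ‖c k‖) ^ (2 : ℝ) ≤ SA * (SA * SB) := by
    calc ∑' k, ENNReal.ofReal (w k * ‖c k‖) ^ (2 : ℝ)
        ≤ ∑' k, SA * D k := ENNReal.tsum_le_tsum fun k =>
          le_trans (ENNReal.rpow_le_rpow (L1 k) (by norm_num)) (hCk2 k)
      _ = SA * ∑' k, D k := ENNReal.tsum_mul_left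
      _ = SA * (SA * SB) := by rw [hDsum]
  -- translate back
  have hterm : ∀ k : ℤ, (1 + |(k : ℝ)|) ^ (2 * s) * ‖c k‖ ^ 2 = (w k * ‖c k‖) ^ 2 := fun k => by
    rw [hsq _ (by positivity), mul_pow]
  have hofterm : ∀ k : ℤ, ENNReal.ofReal ((1 + |(k : ℝ)|) ^ (2 * s) * ‖c k‖ ^ 2)
      = ENNReal.ofReal (w k * ‖c k‖) ^ (2 : ℝ) := fun k => by
    rw [hterm k, ENNReal.rpow_two, ← ENNReal.ofReal_pow (mul_nonneg (hw0 k) (norm_nonneg _))]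
  have htne : SA * (SA * SB) ≠ ⊤ := by
    exact ENNReal.mul_ne_top hSAne (ENNReal.mul_ne_top hSAne hSBne)
  have hsumofReal : ∑' k : ℤ, ENNReal.ofReal ((1 + |(k : ℝ)|) ^ (2 * s) * ‖c k‖ ^ 2)
      ≤ SA * (SA * SB) := by
    rw [tsum_congr hofterm]; exact hmain
  have hne : ∑' k : ℤ, ENNReal.ofReal ((1 + |(k : ℝ)|) ^ (2 * s) * ‖c k‖ ^ 2) ≠ ⊤ :=
    ne_top_of_le_ne_top htne hsumofReal
  have part2 : Summable fun k : ℤ => (1 + |(k : ℝ)|) ^ (2 * s) * ‖c k‖ ^ 2 := by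
    have := ENNReal.summable_toReal hne
    refine this.congr fun k => ?_
    rw [ENNReal.toReal_ofReal (by positivity)]
  refine ⟨part1, part2, ?_⟩
  -- final inequality
  have hofsum : ENNReal.ofReal (∑' k : ℤ, (1 + |(k : ℝ)|) ^ (2 * s) * ‖c k‖ ^ 2)
      = ∑' k : ℤ, ENNReal.ofReal ((1 + |(k : ℝ)|) ^ (2 * s) * ‖c k‖ ^ 2) :=
    ENNReal.ofReal_tsum_of_nonneg (fun k => by positivity) part2
  set tA : ℝ := ∑' k, A k with htA
  set tB : ℝ := ∑' k, B k ^ 2 with htB2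
  have htA0 : 0 ≤ tA := tsum_nonneg hA0
  have htB0 : 0 ≤ tB := tsum_nonneg fun k => sq_nonneg _
  have hle : (∑' k : ℤ, (1 + |(k : ℝ)|) ^ (2 * s) * ‖c k‖ ^ 2) ≤ tA * (tA * tB) := by
    have h1 : ENNReal.ofReal (∑' k : ℤ, (1 + |(k : ℝ)|) ^ (2 * s) * ‖c k‖ ^ 2)
        ≤ ENNReal.ofReal (tA * (tA * tB)) := by
      rw [hofsum]
      calc ∑' k : ℤ, ENNReal.ofReal ((1 + |(k : ℝ)|) ^ (2 * s) * ‖c k‖ ^ 2)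
          ≤ SA * (SA * SB) := hsumofReal
        _ = ENNReal.ofReal (tA * (tA * tB)) := by
            rw [hSAeq, hSBeq, ENNReal.ofReal_mul htA0, ENNReal.ofReal_mul htA0]
    have := ENNReal.toReal_le_toReal (by exact ENNReal.ofReal_ne_top) ENNReal.ofReal_ne_top |>.mpr h1
    rwa [ENNReal.toReal_ofReal (tsum_nonneg fun k => by positivity),
      ENNReal.toReal_ofReal (by positivity)] at this
  calc Real.sqrt (∑' k : ℤ, (1 + |(k : ℝ)|) ^ (2 * s) * ‖c k‖ ^ 2)
      ≤ Real.sqrt (tA * (tA * tB)) := Real.sqrt_le_sqrt hle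
    _ = tA * Real.sqrt tB := by
        rw [show tA * (tA * tB) = tA ^ 2 * tB by ring, Real.sqrt_mul (sq_nonneg tA),
          Real.sqrt_sq htA0]
    _ = (∑' k : ℤ, (1 + |(k : ℝ)|) ^ s * ‖a k‖) * Real.sqrt (∑' k : ℤ, (1 + |(k : ℝ)|) ^ (2 * s) * ‖b k‖ ^ 2) := by
        rw [htA, htB2, htB]
end

section
/- Let 𝔸 be a complex unital Banach algebra and X, Y ∈ 𝔸. Then the map s ↦ exp(X + sY) from ℝ to 𝔸 is differentiable at s = 0 with derivative ∫₀¹ exp((1−t)·X) · Y · exp(t·X) dt. Equivalently, the derivative at s = 0 of s ↦ exp(−X)·exp(X + sY) equals ∫₀¹ exp(−t·X) · Y · exp(t·X) dt, and the derivative at s = 0 of s ↦ exp(X + sY)·exp(−X) equals ∫₀¹ exp(t·X) · Y · exp(−t·X) dt. -/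
open MeasureTheory intervalIntegral Filter Topology

namespace DuhamelAux

lemma ns_ext {E : Type*} [SeminormedAddCommGroup E] (P Q : NormedSpace ℝ E)
    (w : ∀ (r : ℝ) (m : E), (haveI := P; r • m) = (haveI := Q; r • m)) : P = Q := by
  cases P; cases Q
  congr 1
  exact Module.ext' _ _ w

lemma ns_unique {E : Type*} [NormedAddCommGroup E] (P Q : NormedSpace ℝ E) : P = Q := by
  have cP := (letI := P; (inferInstance : ContinuousSMul ℝ E))
  have cQ := (letI := Q; (inferInstance : ContinuousSMul ℝ E))
  refine ns_ext P Q fun r m => ?_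
  exact @map_real_smul E _ P.toModule _ cP E _ Q.toModule _ cQ _ (E →+ E) _ _
    (AddMonoidHom.id E) continuous_id r m

/-- Restrict a complex-differentiable function to the reals. -/
lemma comp_ofReal' {E : Type*} [NormedAddCommGroup E] [NormedSpace ℂ E]
    {f : ℂ → E} {f' : E} {z : ℝ} (hf : HasDerivAt f f' (z : ℂ)) :
    HasDerivAt (fun t : ℝ => f (t : ℂ)) f' z := by
  have h := ((hf.hasFDerivAt.restrictScalars ℝ).comp z Complex.ofRealCLM.hasFDerivAt).hasDerivAt
  simpa [Function.comp_def] using h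

variable {𝔸 : Type*} [NormedRing 𝔸] [NormedAlgebra ℂ 𝔸] [CompleteSpace 𝔸]

lemma hasDerivAt_exp_left (Z : 𝔸) (t : ℝ) :
    HasDerivAt (fun u : ℝ => NormedSpace.exp (((u : ℝ) : ℂ) • Z))
      (Z * NormedSpace.exp (((t : ℝ) : ℂ) • Z)) t :=
  comp_ofReal' (hasDerivAt_exp_smul_const' (𝕂 := ℂ) Z (t : ℂ))

lemma hasDerivAt_exp_right (Z : 𝔸) (t : ℝ) :
    HasDerivAt (fun u : ℝ => NormedSpace.exp (((u : ℝ) : ℂ) • Z))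
      (NormedSpace.exp (((t : ℝ) : ℂ) • Z) * Z) t :=
  comp_ofReal' (hasDerivAt_exp_smul_const (𝕂 := ℂ) Z (t : ℂ))

omit [CompleteSpace 𝔸] in
lemma coeS (r : ℝ) (x : 𝔸) : ((r : ℂ)) • x = r • x := by
  rw [← Complex.coe_algebraMap, algebraMap_smul]

omit [CompleteSpace 𝔸] in
lemma exp_mul_exp (c d : ℂ) (Z : 𝔸) [CompleteSpace 𝔸] :
    NormedSpace.exp (c • Z) * NormedSpace.exp (d • Z) = NormedSpace.exp ((c + d) • Z) := by
  letI : NormedAlgebra ℚ 𝔸 := NormedAlgebra.restrictScalars ℚ ℂ 𝔸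
  rw [← NormedSpace.exp_add_of_commute (((Commute.refl Z).smul_left c).smul_right d), ← add_smul]

theorem clean_duhamel (X Y : 𝔸) :
    HasDerivAt (fun s : ℝ => NormedSpace.exp (X + (s : ℂ) • Y))
      (∫ t in (0 : ℝ)..1, NormedSpace.exp (((1 - t : ℝ) : ℂ) • X) * Y *
        NormedSpace.exp (((t : ℝ) : ℂ) • X)) 0 ∧
    HasDerivAt (fun s : ℝ => NormedSpace.exp (-X) * NormedSpace.exp (X + (s : ℂ) • Y))
      (∫ t in (0 : ℝ)..1, NormedSpace.exp (-(((t : ℝ) : ℂ) • X)) * Y *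
        NormedSpace.exp (((t : ℝ) : ℂ) • X)) 0 ∧
    HasDerivAt (fun s : ℝ => NormedSpace.exp (X + (s : ℂ) • Y) * NormedSpace.exp (-X))
      (∫ t in (0 : ℝ)..1, NormedSpace.exp (((t : ℝ) : ℂ) • X) * Y *
        NormedSpace.exp (-(((t : ℝ) : ℂ) • X))) 0 := by
  letI : NormedAlgebra ℚ 𝔸 := NormedAlgebra.restrictScalars ℚ ℂ 𝔸
  set f : ℝ → 𝔸 := fun s => NormedSpace.exp (X + (s : ℂ) • Y) with hfdef
  set F : ℝ → ℝ → 𝔸 := fun s t => NormedSpace.exp (((1 - t : ℝ) : ℂ) • X) * Y *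
      NormedSpace.exp (((t : ℝ) : ℂ) • (X + (s : ℂ) • Y)) with hFdef
  set g : ℝ → 𝔸 := fun s => ∫ t in (0 : ℝ)..1, F s t with hgdef
  have contF : Continuous (Function.uncurry F) := by
    refine Continuous.mul (Continuous.mul ?_ continuous_const) ?_
    · exact NormedSpace.exp_continuous.comp
        ((Complex.continuous_ofReal.comp (continuous_const.sub continuous_snd)).smul
          continuous_const)
    · exact NormedSpace.exp_continuous.comp
        ((Complex.continuous_ofReal.comp continuous_snd).smul
          (continuous_const.add ((Complex.continuous_ofReal.comp continuous_fst).smul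
            continuous_const)))
  have contFs : ∀ s : ℝ, Continuous (F s) := fun s =>
    contF.comp (continuous_const.prodMk continuous_id)
  have key : ∀ s : ℝ, f s - f 0 = s • g s := by
    intro s
    have hmain : ∀ t ∈ Set.uIcc (0 : ℝ) 1, HasDerivAt (fun u : ℝ =>
        NormedSpace.exp (((1 - u : ℝ) : ℂ) • X) *
          NormedSpace.exp (((u : ℝ) : ℂ) • (X + (s : ℂ) • Y)))
        (s • F s t) t := by
      intro t _
      have h1 : HasDerivAt (fun u : ℝ => NormedSpace.exp (((1 - u : ℝ) : ℂ) • X))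
          (-(NormedSpace.exp (((1 - t : ℝ) : ℂ) • X) * X)) t := by
        have hcomp := (hasDerivAt_exp_right X (1 - t)).scomp t ((hasDerivAt_id t).const_sub 1)
        rw [show -(NormedSpace.exp (((1 - t : ℝ) : ℂ) • X) * X)
          = (-1 : ℝ) • (NormedSpace.exp (((1 - t : ℝ) : ℂ) • X) * X) by rw [neg_one_smul]]
        exact hcomp
      have h2 := hasDerivAt_exp_left (X + (s : ℂ) • Y) t
      have h3 := h1.mul h2
      convert h3 using 1
      · rfl
      simp only [neg_mul, mul_add, add_mul, mul_assoc, hFdef]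
      rw [neg_add_cancel_left, smul_mul_assoc, mul_smul_comm]
      exact (coeS s _).symm
    have hint : IntervalIntegrable (fun t => s • F s t) volume 0 1 :=
      ((contFs s).const_smul s).intervalIntegrable 0 1
    have hFTC := intervalIntegral.integral_eq_sub_of_hasDerivAt hmain hint
    rw [intervalIntegral.integral_smul] at hFTC
    show f s - f 0 = s • ∫ t in (0 : ℝ)..1, F s t
    rw [hFTC, hfdef]
    norm_num [NormedSpace.exp_zero]
  have contg : Continuous g := by
    rw [hgdef]
    exact continuous_parametric_intervalIntegral_of_continuous' contF 0 1
  have hg0 : g 0 = ∫ t in (0 : ℝ)..1, NormedSpace.exp (((1 - t : ℝ) : ℂ) • X) * Y *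
      NormedSpace.exp (((t : ℝ) : ℂ) • X) := by
    rw [hgdef]
    norm_num [hFdef]
  have hf0 : f 0 = NormedSpace.exp X := by norm_num [hfdef]
  have h1 : HasDerivAt f (g 0) 0 := by
    rw [hasDerivAt_iff_tendsto_slope]
    have hev : g =ᶠ[𝓝[≠] (0 : ℝ)] slope f 0 := by
      filter_upwards [self_mem_nhdsWithin] with s hs
      have hs' : s ≠ 0 := hs
      show g s = (s - 0)⁻¹ • (f s - f 0)
      rw [key s, sub_zero, inv_smul_smul₀ hs']
    exact ((contg.tendsto 0).mono_left nhdsWithin_le_nhds).congr' hev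
  have h1' : HasDerivAt f (∫ t in (0 : ℝ)..1, NormedSpace.exp (((1 - t : ℝ) : ℂ) • X) * Y *
      NormedSpace.exp (((t : ℝ) : ℂ) • X)) 0 := hg0 ▸ h1
  have hintF0 : IntervalIntegrable (F 0) volume 0 1 := (contFs 0).intervalIntegrable 0 1
  have hintF0' : IntervalIntegrable (fun t : ℝ => NormedSpace.exp (((1 - t : ℝ) : ℂ) • X) * Y *
      NormedSpace.exp (((t : ℝ) : ℂ) • X)) volume 0 1 := by
    have : (fun t : ℝ => NormedSpace.exp (((1 - t : ℝ) : ℂ) • X) * Y *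
        NormedSpace.exp (((t : ℝ) : ℂ) • X)) = F 0 := by
      funext t; rw [hFdef]; norm_num
    rw [this]; exact hintF0
  refine ⟨h1', ?_, ?_⟩
  · -- left logarithmic derivative
    have h2 := h1'.const_mul (NormedSpace.exp (-X))
    have hL := (ContinuousLinearMap.mul ℝ 𝔸
      (NormedSpace.exp (-X))).intervalIntegral_comp_comm hintF0'
    simp only [ContinuousLinearMap.mul_apply'] at hL
    rw [← hL] at h2
    have : (fun t : ℝ => NormedSpace.exp (-X) *
        (NormedSpace.exp (((1 - t : ℝ) : ℂ) • X) * Y * NormedSpace.exp (((t : ℝ) : ℂ) • X)))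
        = fun t : ℝ => NormedSpace.exp (-(((t : ℝ) : ℂ) • X)) * Y *
          NormedSpace.exp (((t : ℝ) : ℂ) • X) := by
      funext t
      have hx : NormedSpace.exp (-X) * NormedSpace.exp (((1 - t : ℝ) : ℂ) • X)
          = NormedSpace.exp (-(((t : ℝ) : ℂ) • X)) := by
        have hnX : (-X : 𝔸) = ((-1 : ℂ)) • X := by rw [neg_one_smul]
        rw [hnX, exp_mul_exp]
        congr 1
        push_cast
        module
      rw [← mul_assoc, ← mul_assoc, hx]
    rw [this] at h2
    exact h2
  · -- right logarithmic derivative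
    have h3 := h1'.mul_const (NormedSpace.exp (-X))
    have hL := ((ContinuousLinearMap.mul ℝ 𝔸).flip
      (NormedSpace.exp (-X))).intervalIntegral_comp_comm hintF0'
    simp only [ContinuousLinearMap.flip_apply, ContinuousLinearMap.mul_apply'] at hL
    rw [← hL] at h3
    have : (fun t : ℝ => NormedSpace.exp (((1 - t : ℝ) : ℂ) • X) * Y *
        NormedSpace.exp (((t : ℝ) : ℂ) • X) * NormedSpace.exp (-X))
        = fun t : ℝ => NormedSpace.exp ((((1 - t : ℝ)) : ℂ) • X) * Y *
          NormedSpace.exp (-((((1 - t : ℝ)) : ℂ) • X)) := by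
      funext t
      have hx : NormedSpace.exp (((t : ℝ) : ℂ) • X) * NormedSpace.exp (-X)
          = NormedSpace.exp (-((((1 - t : ℝ)) : ℂ) • X)) := by
        have hnX : (-X : 𝔸) = ((-1 : ℂ)) • X := by rw [neg_one_smul]
        rw [hnX, exp_mul_exp]
        congr 1
        push_cast
        module
      rw [mul_assoc, hx]
    rw [this] at h3
    have hsub := intervalIntegral.integral_comp_sub_left (a := (0:ℝ)) (b := (1:ℝ)) (fun u : ℝ =>
      NormedSpace.exp (((u : ℝ) : ℂ) • X) * Y * NormedSpace.exp (-(((u : ℝ) : ℂ) • X))) 1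
    rw [show (1:ℝ) - 1 = 0 by norm_num, show (1:ℝ) - 0 = 1 by norm_num] at hsub
    rw [hsub] at h3
    exact h3

end DuhamelAux

/-- Duhamel's formula: the derivative at `s = 0` of `s ↦ exp(X + sY)` in a complex unital
Banach algebra is `∫₀¹ exp((1−t)X) · Y · exp(tX) dt`, together with its left and right
logarithmic-derivative forms. -/
theorem duhamel_formula (𝔸 : Type*) [NormedRing 𝔸] [NormedAlgebra ℂ 𝔸] [CompleteSpace 𝔸]
    [NormedSpace ℝ 𝔸] [IsScalarTower ℝ ℂ 𝔸] (X Y : 𝔸) :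
    HasDerivAt (fun s : ℝ => NormedSpace.exp (X + (s : ℂ) • Y))
      (∫ t in (0 : ℝ)..1, NormedSpace.exp (((1 - t : ℝ) : ℂ) • X) * Y *
        NormedSpace.exp (((t : ℝ) : ℂ) • X)) 0 ∧
    HasDerivAt (fun s : ℝ => NormedSpace.exp (-X) * NormedSpace.exp (X + (s : ℂ) • Y))
      (∫ t in (0 : ℝ)..1, NormedSpace.exp (-(((t : ℝ) : ℂ) • X)) * Y *
        NormedSpace.exp (((t : ℝ) : ℂ) • X)) 0 ∧
    HasDerivAt (fun s : ℝ => NormedSpace.exp (X + (s : ℂ) • Y) * NormedSpace.exp (-X))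
      (∫ t in (0 : ℝ)..1, NormedSpace.exp (((t : ℝ) : ℂ) • X) * Y *
        NormedSpace.exp (-(((t : ℝ) : ℂ) • X))) 0 := by
  rename_i iR iT
  have e : iR = NormedSpace.complexToReal := DuhamelAux.ns_unique _ _
  rw [e]
  exact DuhamelAux.clean_duhamel X Y
end

section
/- Let 𝔸 be a Banach algebra and a, b ∈ 𝔸 such that the commutator [a, b] := a·b − b·a commutes with both a and b. Then [a, exp(b)] = [a, b]·exp(b), and exp(a)·exp(b) = exp([a, b])·exp(b)·exp(a). -/
open NormedSpace

section Aux
variable {𝔸 : Type*} [NormedRing 𝔸] [NormedAlgebra ℝ 𝔸] [CompleteSpace 𝔸]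

omit [NormedAlgebra ℝ 𝔸] [CompleteSpace 𝔸] in
lemma aux_comm_pow (a b : 𝔸) (h₂ : (a * b - b * a) * b = b * (a * b - b * a)) (n : ℕ) :
    a * b ^ (n + 1) - b ^ (n + 1) * a = (n + 1) • ((a * b - b * a) * b ^ n) := by
  induction n with
  | zero => simp
  | succ n ih =>
      have key : a * b ^ (n + 2) - b ^ (n + 2) * a
          = b * (a * b ^ (n + 1) - b ^ (n + 1) * a) + (a * b - b * a) * b ^ (n + 1) := by
        simp only [pow_succ']
        noncomm_ring
      have hbc : b * ((a * b - b * a) * b ^ n) = (a * b - b * a) * b ^ (n + 1) := by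
        rw [← mul_assoc, ← h₂, mul_assoc, ← pow_succ']
      rw [key, ih, mul_smul_comm, hbc]
      conv_rhs => rw [succ_nsmul]

lemma aux_part1 (a b : 𝔸) (h₂ : (a * b - b * a) * b = b * (a * b - b * a)) :
    a * exp b - exp b * a = (a * b - b * a) * exp b := by
  set c := a * b - b * a with hc
  have hs : Summable (fun n : ℕ => ((n.factorial : ℝ)⁻¹) • b ^ n) := expSeries_summable' b
  have hsl : Summable (fun n : ℕ => ((n.factorial : ℝ)⁻¹) • (a * b ^ n)) := by
    simpa [mul_smul_comm] using hs.mul_left a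
  have hsr : Summable (fun n : ℕ => ((n.factorial : ℝ)⁻¹) • (b ^ n * a)) := by
    simpa [smul_mul_assoc] using hs.mul_right a
  have hF : Summable (fun n : ℕ => ((n.factorial : ℝ)⁻¹) • (a * b ^ n - b ^ n * a)) := by
    simpa [smul_sub] using hsl.sub hsr
  have hexp : exp b = ∑' n : ℕ, ((n.factorial : ℝ)⁻¹) • b ^ n := by rw [exp_eq_tsum ℝ]
  have e1 : a * exp b = ∑' n : ℕ, ((n.factorial : ℝ)⁻¹) • (a * b ^ n) := by
    rw [hexp, ← hs.tsum_mul_left a]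
    simp [mul_smul_comm]
  have e2 : exp b * a = ∑' n : ℕ, ((n.factorial : ℝ)⁻¹) • (b ^ n * a) := by
    rw [hexp, ← hs.tsum_mul_right a]
    simp [smul_mul_assoc]
  rw [e1, e2, ← Summable.tsum_sub hsl hsr]
  have e3 : ∀ n : ℕ, ((n.factorial : ℝ)⁻¹) • (a * b ^ n) - ((n.factorial : ℝ)⁻¹) • (b ^ n * a)
      = ((n.factorial : ℝ)⁻¹) • (a * b ^ n - b ^ n * a) := fun n => (smul_sub _ _ _).symm
  simp only [e3]
  rw [Summable.tsum_eq_zero_add hF]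
  have e4 : ∀ n : ℕ, (((n + 1).factorial : ℝ)⁻¹) • (a * b ^ (n + 1) - b ^ (n + 1) * a)
      = ((n.factorial : ℝ)⁻¹) • (c * b ^ n) := by
    intro n
    rw [aux_comm_pow a b h₂ n, ← hc, ← Nat.cast_smul_eq_nsmul ℝ, smul_smul]
    congr 1
    rw [Nat.factorial_succ]
    push_cast
    field_simp
  simp only [e4]
  have : ∑' n : ℕ, ((n.factorial : ℝ)⁻¹) • (c * b ^ n) = c * exp b := by
    rw [hexp, ← hs.tsum_mul_left c]
    simp [mul_smul_comm]
  simp [this]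

end Aux


/-- If the commutator `[a, b] = ab − ba` commutes with both `a` and `b` in a Banach algebra,
then `[a, exp b] = [a, b]·exp b` and `exp a · exp b = exp [a, b] · exp b · exp a`. -/
theorem exp_commutator_formulas (𝔸 : Type*) [NormedRing 𝔸] [NormedAlgebra ℝ 𝔸]
    [CompleteSpace 𝔸] (a b : 𝔸)
    (h₁ : (a * b - b * a) * a = a * (a * b - b * a))
    (h₂ : (a * b - b * a) * b = b * (a * b - b * a)) :
    a * NormedSpace.exp b - NormedSpace.exp b * a =
      (a * b - b * a) * NormedSpace.exp b ∧
    NormedSpace.exp a * NormedSpace.exp b =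
      NormedSpace.exp (a * b - b * a) * NormedSpace.exp b * NormedSpace.exp a := by
  set c := a * b - b * a with hc
  have p1 : a * exp b - exp b * a = c * exp b := aux_part1 a b h₂
  refine ⟨p1, ?_⟩
  have hcb : Commute c b := h₂
  have hca : Commute c a := h₁
  have ha : a * exp b = exp b * (a + c) := by
    have := (hcb.exp_right)
    have h' : a * exp b = exp b * a + c * exp b := by
      rw [← p1]; abel
    rw [h', mul_add, ← this.eq]
  have hpow : ∀ n : ℕ, a ^ n * exp b = exp b * (a + c) ^ n := by
    intro n
    induction n with
    | zero => simp
    | succ n ih =>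
        rw [pow_succ', mul_assoc, ih, ← mul_assoc, ha, mul_assoc, ← pow_succ']
  have hsa : Summable (fun n : ℕ => ((n.factorial : ℝ)⁻¹) • a ^ n) := expSeries_summable' a
  have hsac : Summable (fun n : ℕ => ((n.factorial : ℝ)⁻¹) • (a + c) ^ n) := expSeries_summable' (a + c)
  have hea : exp a = ∑' n : ℕ, ((n.factorial : ℝ)⁻¹) • a ^ n := by rw [exp_eq_tsum ℝ]
  have heac : exp (a + c) = ∑' n : ℕ, ((n.factorial : ℝ)⁻¹) • (a + c) ^ n := by rw [exp_eq_tsum ℝ]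
  have key : exp a * exp b = exp b * exp (a + c) := by
    rw [hea, heac, ← hsa.tsum_mul_right (exp b), ← hsac.tsum_mul_left (exp b)]
    congr 1
    funext n
    rw [smul_mul_assoc, mul_smul_comm, hpow n]
  have hsplit : exp (a + c) = exp c * exp a := by
    rw [exp_add_of_commute_of_mem_ball (𝕂 := ℝ) hca.symm ((expSeries_radius_eq_top ℝ 𝔸).symm ▸ edist_lt_top _ _) ((expSeries_radius_eq_top ℝ 𝔸).symm ▸ edist_lt_top _ _), (hca.exp).eq]
  rw [key, hsplit, ← mul_assoc, ← (hcb.exp).eq]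
end

section
/- Let V be a normed vector space over ℝ or ℂ, A : V → V a linear map, and (X_i)_{i∈I} a family of linear maps V → V such that for every ξ ∈ V: (a) ‖X_i ξ‖ ≤ ‖A ξ‖ for all i ∈ I; and (b) ‖((ad X_{i_n}) ∘ ⋯ ∘ (ad X_{i_1}))(A) ξ‖ ≤ n!·‖A ξ‖ for every n ≥ 1 and all i_1, …, i_n ∈ I, where (ad X)(B) := X∘B − B∘X. Then there exists a constant M > 0 such that ‖X_{i_n} ⋯ X_{i_1} ξ‖ ≤ n!·Mⁿ holds for every n ≥ 1, all i_1, …, i_n ∈ I, and every ξ ∈ V satisfying ‖A^m ξ‖ ≤ m! for all integers m ≥ 0. -/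
open Finset

namespace NelsonAux

variable {𝕜 : Type*} [RCLike 𝕜] {V : Type*} [NormedAddCommGroup V] [NormedSpace 𝕜 V]
  {I : Type*}

def word (X : I → Module.End 𝕜 V) (l : List I) : Module.End 𝕜 V := (l.map X).prod

def adw (X : I → Module.End 𝕜 V) (A : Module.End 𝕜 V) (s : List I) : Module.End 𝕜 V :=
  s.foldr (fun i B => X i * B - B * X i) A

def Dl (X : I → Module.End 𝕜 V) (A : Module.End 𝕜 V) : List I → Module.End 𝕜 V
  | [] => 0
  | i :: t => (X i * A - A * X i) * word X t

variable (X : I → Module.End 𝕜 V) (A : Module.End 𝕜 V)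

@[simp] lemma word_nil : word X ([] : List I) = 1 := rfl

@[simp] lemma word_cons (i : I) (l : List I) : word X (i :: l) = X i * word X l := by
  simp [word]

lemma word_append (l₁ l₂ : List I) : word X (l₁ ++ l₂) = word X l₁ * word X l₂ := by
  simp [word]

@[simp] lemma adw_nil : adw X A ([] : List I) = A := rfl

@[simp] lemma adw_cons (i : I) (s : List I) :
    adw X A (i :: s) = X i * adw X A s - adw X A s * X i := rfl

lemma comm_eq (u : List I) :
    A * word X u = word X u * A -
      ∑ k ∈ range u.length, word X (u.take k) * Dl X A (u.drop k) := by
  induction u with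
  | nil => simp
  | cons i v ih =>
    simp only [List.length_cons, word_cons]
    rw [Finset.sum_range_succ']
    simp only [List.take_succ_cons, List.drop_succ_cons, List.take_zero, List.drop_zero,
      word_nil, word_cons, one_mul]
    have h1 : A * (X i * word X v)
        = X i * (A * word X v) - (X i * A - A * X i) * word X v := by noncomm_ring
    rw [h1, ih, mul_sub, Finset.mul_sum]
    have h2 : ∀ k ∈ range v.length,
        X i * (word X (v.take k) * Dl X A (v.drop k))
          = X i * word X (v.take k) * Dl X A (v.drop k) := by
      intro k _; rw [mul_assoc]
    rw [Finset.sum_congr rfl h2]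
    have h3 : Dl X A (i :: v) = (X i * A - A * X i) * word X v := rfl
    rw [h3]
    noncomm_ring

lemma hockey (j : ℕ) : ∀ n : ℕ, ∑ k ∈ Ico j n, k.choose j = n.choose (j + 1) := by
  intro n
  induction n with
  | zero => simp
  | succ n ih =>
    rcases le_or_gt j n with h | h
    · rw [Finset.sum_Ico_succ_top h, ih, Nat.choose_succ_succ]
      simp [Nat.succ_eq_add_one]
      omega
    · rw [Finset.Ico_eq_empty (by omega)]
      simp [Nat.choose_eq_zero_of_lt (by omega : n + 1 < j + 1)]

lemma tri_swap (f : ℕ → ℕ → ℝ) : ∀ n : ℕ,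
    ∑ k ∈ range n, ∑ j ∈ range (k + 1), f k j = ∑ j ∈ range n, ∑ k ∈ Ico j n, f k j := by
  intro n
  induction n with
  | zero => simp
  | succ n ih =>
    rw [Finset.sum_range_succ, ih]
    have h1 : ∀ j ∈ range (n + 1),
        ∑ k ∈ Ico j (n + 1), f k j = (∑ k ∈ Ico j n, f k j) + f n j := by
      intro j hj
      exact Finset.sum_Ico_succ_top (by simpa using Nat.lt_succ_iff.mp (mem_range.mp hj)) _
    rw [Finset.sum_congr rfl h1, Finset.sum_add_distrib,
      Finset.sum_range_succ (fun j => ∑ k ∈ Ico j n, f k j)]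
    simp

lemma key_fact (j d m : ℕ) :
    (j + 1 + d).choose (j + 1) * (j + 1).factorial * (d + m + 1).factorial
      ≤ (j + 1 + d + m + 1).factorial := by
  have h : j + 1 ≤ j + 1 + d + m + 1 := by omega
  have heq := Nat.choose_mul_factorial_mul_factorial h
  have hsub : j + 1 + d + m + 1 - (j + 1) = d + m + 1 := by omega
  rw [hsub] at heq
  calc (j + 1 + d).choose (j + 1) * (j + 1).factorial * (d + m + 1).factorial
      ≤ (j + 1 + d + m + 1).choose (j + 1) * (j + 1).factorial * (d + m + 1).factorial := by
        exact Nat.mul_le_mul_right _ (Nat.mul_le_mul_right _ (Nat.choose_le_choose _ (by omega)))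
    _ = (j + 1 + d + m + 1).factorial := heq


lemma push (hb' : ∀ (s : List I) (η : V),
      ‖adw X A s η‖ ≤ (s.length.factorial : ℝ) * ‖A η‖)
    (η : V) (φ : ℕ → ℝ) :
    ∀ p s t : List I,
      (∀ w : List I, w.length ≤ p.length + t.length → ‖(A * word X w) η‖ ≤ φ w.length) →
      ‖(word X p * adw X A s * word X t) η‖ ≤
        ∑ j ∈ range (p.length + 1),
          (p.length.choose j : ℝ) * ((s.length + j).factorial : ℝ)
            * φ (p.length - j + t.length) := by
  intro p
  induction p using List.reverseRecOn with
  | nil =>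
    intro s t hφ
    simp only [word_nil, one_mul, List.length_nil, zero_add, Finset.sum_range_one,
      Nat.choose_self, Nat.cast_one, Nat.add_zero, Nat.zero_sub, one_mul]
    have h1 : (adw X A s * word X t) η = adw X A s (word X t η) := rfl
    rw [h1]
    calc ‖adw X A s (word X t η)‖ ≤ (s.length.factorial : ℝ) * ‖A (word X t η)‖ := hb' s _
      _ ≤ (s.length.factorial : ℝ) * φ t.length := by
          have := hφ t (by omega)
          have h2 : (A * word X t) η = A (word X t η) := rfl
          rw [h2] at this
          exact mul_le_mul_of_nonneg_left this (by positivity)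
  | append_singleton q i ihq =>
    intro s t hφ
    have hlen : (q ++ [i]).length = q.length + 1 := by simp
    have key : word X (q ++ [i]) * adw X A s * word X t
        = word X q * adw X A s * word X (i :: t)
          + word X q * adw X A (i :: s) * word X t := by
      rw [word_append]
      simp only [word_cons, adw_cons, word_nil, mul_one]
      noncomm_ring
    have h1 := ihq s (i :: t) (fun w hw => hφ w (by simp only [List.length_cons, List.length_append, List.length_nil] at hw ⊢; omega))
    have h2 := ihq (i :: s) t (fun w hw => hφ w (by simp only [List.length_cons, List.length_append, List.length_nil] at hw ⊢; omega))
    have hnorm : ‖(word X (q ++ [i]) * adw X A s * word X t) η‖ ≤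
        ‖(word X q * adw X A s * word X (i :: t)) η‖
          + ‖(word X q * adw X A (i :: s) * word X t) η‖ := by
      rw [key]
      exact norm_add_le _ _
    refine hnorm.trans ((add_le_add h1 h2).trans_eq ?_)
    -- now a pure sum identity
    set n := q.length with hn
    set S := s.length with hS
    set T := t.length with hT
    have hlc : (i :: t).length = T + 1 := rfl
    have hls : (i :: s).length = S + 1 := rfl
    rw [hlc, hls, hlen]
    -- RHS: sum over range (n+2)
    rw [Finset.sum_range_succ' (fun j => ((n+1).choose j : ℝ) * ((S + j).factorial : ℝ)
      * φ (n + 1 - j + T)) (n+1)]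
    have e1 : ∀ j ∈ range (n+1),
        (((n+1).choose (j+1) : ℕ) : ℝ) * ((S + (j+1)).factorial : ℝ) * φ (n + 1 - (j+1) + T)
        = ((n.choose j : ℕ) : ℝ) * ((S + 1 + j).factorial : ℝ) * φ (n - j + T)
          + ((n.choose (j+1) : ℕ) : ℝ) * ((S + 1 + j).factorial : ℝ) * φ (n - j + T) := by
      intro j hj
      have hc : (n+1).choose (j+1) = n.choose j + n.choose (j+1) := Nat.choose_succ_succ n j
      have hf : S + (j+1) = S + 1 + j := by omega
      have hd : n + 1 - (j+1) = n - j := by omega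
      rw [hc, hf, hd]
      push_cast
      ring
    rw [Finset.sum_congr rfl e1, Finset.sum_add_distrib]
    -- B1 transformation
    have e2 : ∑ j ∈ range (n+1), ((n.choose j : ℕ) : ℝ) * ((S + j).factorial : ℝ)
        * φ (n - j + (T + 1))
        = (∑ j ∈ range (n+1), ((n.choose (j+1) : ℕ) : ℝ) * ((S + 1 + j).factorial : ℝ)
            * φ (n - j + T))
          + ((n+1).choose 0 : ℝ) * ((S + 0).factorial : ℝ) * φ (n + 1 - 0 + T) := by
      rw [Finset.sum_range_succ' (fun j => ((n.choose j : ℕ) : ℝ) * ((S + j).factorial : ℝ)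
        * φ (n - j + (T + 1))) n]
      rw [Finset.sum_range_succ (fun j => ((n.choose (j+1) : ℕ) : ℝ)
        * ((S + 1 + j).factorial : ℝ) * φ (n - j + T)) n]
      have e3 : ∀ j ∈ range n,
          ((n.choose (j+1) : ℕ) : ℝ) * ((S + (j+1)).factorial : ℝ) * φ (n - (j+1) + (T + 1))
          = ((n.choose (j+1) : ℕ) : ℝ) * ((S + 1 + j).factorial : ℝ) * φ (n - j + T) := by
        intro j hj
        have hj' : j < n := mem_range.mp hj
        have hf : S + (j+1) = S + 1 + j := by omega
        have hd : n - (j+1) + (T + 1) = n - j + T := by omega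
        rw [hf, hd]
      rw [Finset.sum_congr rfl e3]
      have hz : ((n.choose (n+1) : ℕ) : ℝ) = 0 := by
        simp [Nat.choose_eq_zero_of_lt (by omega : n < n + 1)]
      rw [hz]
      simp only [Nat.choose_zero_right, Nat.cast_one, one_mul, Nat.add_zero, Nat.sub_zero,
        zero_mul, add_zero]
      have hnT : n + (T + 1) = n + 1 + T := by omega
      rw [hnT]
    rw [e2]
    ring


lemma main (ha : ∀ (i : I) (ξ : V), ‖X i ξ‖ ≤ ‖A ξ‖)
    (hb' : ∀ (s : List I) (η : V), ‖adw X A s η‖ ≤ (s.length.factorial : ℝ) * ‖A η‖)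
    (ξ : V) (hξ : ∀ m : ℕ, ‖(A ^ m) ξ‖ ≤ (m.factorial : ℝ)) :
    ∀ n : ℕ, ∀ u : List I, u.length = n → ∀ m : ℕ,
      ‖(A * word X u) ((A ^ m) ξ)‖ ≤ ((n + m + 1).factorial : ℝ) * 3 ^ n := by
  intro n
  induction n using Nat.strong_induction_on with
  | _ n IH =>
    intro u hu m
    cases u with
    | nil =>
      simp only [List.length_nil] at hu
      subst hu
      have h0 : (A * word X ([] : List I)) ((A ^ m) ξ) = (A ^ (m + 1)) ξ := by
        simp only [word_nil, mul_one]
        rw [pow_succ']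
        rfl
      rw [h0]
      calc ‖(A ^ (m + 1)) ξ‖ ≤ ((m + 1).factorial : ℝ) := hξ (m + 1)
        _ = ((0 + m + 1).factorial : ℝ) * 3 ^ 0 := by norm_num
    | cons i v =>
      simp only [List.length_cons] at hu
      subst hu
      set N := v.length with hN
      set η := (A ^ m) ξ with hη
      -- split via the commutation identity
      have hstep : ‖(A * word X (i :: v)) η‖ ≤ ‖(word X (i :: v) * A) η‖ +
          ‖(∑ k ∈ range (i :: v).length,
              word X ((i :: v).take k) * Dl X A ((i :: v).drop k)) η‖ := by
        rw [comm_eq, LinearMap.sub_apply]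
        exact norm_sub_le _ _
      -- first term
      have hA : ‖(word X (i :: v) * A) η‖ ≤ ((N + (m + 1) + 1).factorial : ℝ) * 3 ^ N := by
        have h0 : (word X (i :: v) * A) η = X i (word X v ((A ^ (m + 1)) ξ)) := by
          have h1 : A η = (A ^ (m + 1)) ξ := by rw [pow_succ']; rfl
          simp only [word_cons]
          show X i (word X v (A η)) = _
          rw [h1]
        rw [h0]
        refine (ha i _).trans ?_
        exact IH N (by omega) v rfl (m + 1)
      -- second term
      have hS : ‖(∑ k ∈ range (i :: v).length,
            word X ((i :: v).take k) * Dl X A ((i :: v).drop k)) η‖ ≤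
          ∑ k ∈ range (N + 1), ∑ j ∈ range (k + 1),
            (k.choose j : ℝ) * ((1 + j).factorial : ℝ)
              * (((N - j + m + 1).factorial : ℝ) * 3 ^ (N - j)) := by
        rw [LinearMap.sum_apply]
        refine (norm_sum_le _ _).trans ?_
        simp only [List.length_cons]
        refine Finset.sum_le_sum ?_
        intro k hk
        have hk' : k < N + 1 := mem_range.mp hk
        have hku : k < (i :: v).length := by simp only [List.length_cons]; omega
        have hdrop : (i :: v).drop k = (i :: v)[k] :: (i :: v).drop (k + 1) :=
          List.drop_eq_getElem_cons hku
        have hDl : Dl X A ((i :: v).drop k)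
            = adw X A [(i :: v)[k]] * word X ((i :: v).drop (k + 1)) := by
          rw [hdrop]
          rfl
        have hpt : ((i :: v).take k).length = k := by
          simp only [List.length_take, List.length_cons]; omega
        have hdt : ((i :: v).drop (k + 1)).length = N - k := by
          simp only [List.length_drop, List.length_cons]; omega
        have hpush := push X A hb' η
          (fun d => ((d + m + 1).factorial : ℝ) * 3 ^ d)
          ((i :: v).take k) [(i :: v)[k]] ((i :: v).drop (k + 1))
          (fun w hw => IH w.length (by rw [hpt, hdt] at hw; omega) w rfl m)
        rw [hDl, ← mul_assoc]
        refine hpush.trans (le_of_eq ?_)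
        rw [hpt, hdt]
        refine Finset.sum_congr rfl ?_
        intro j hj
        have hj' : j < k + 1 := mem_range.mp hj
        have harg : k - j + (N - k) = N - j := by omega
        have hlen1 : ([(i :: v)[k]] : List I).length = 1 := rfl
        rw [hlen1, harg]
      -- arithmetic on the double sum
      have harith : ∑ k ∈ range (N + 1), ∑ j ∈ range (k + 1),
            (k.choose j : ℝ) * ((1 + j).factorial : ℝ)
              * (((N - j + m + 1).factorial : ℝ) * 3 ^ (N - j))
          ≤ ((N + 1 + m + 1).factorial : ℝ) * ((3 ^ (N + 1) - 1) / 2) := by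
        rw [tri_swap (fun k j => (k.choose j : ℝ) * ((1 + j).factorial : ℝ)
              * (((N - j + m + 1).factorial : ℝ) * 3 ^ (N - j))) (N + 1)]
        have h2 : ∀ j ∈ range (N + 1),
            (∑ k ∈ Ico j (N + 1), (k.choose j : ℝ) * ((1 + j).factorial : ℝ)
              * (((N - j + m + 1).factorial : ℝ) * 3 ^ (N - j)))
            = (((N + 1).choose (j + 1) : ℕ) : ℝ) * (((1 + j).factorial : ℝ)
              * (((N - j + m + 1).factorial : ℝ) * 3 ^ (N - j))) := by
          intro j hj
          have : ∀ k ∈ Ico j (N + 1), (k.choose j : ℝ) * ((1 + j).factorial : ℝ)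
              * (((N - j + m + 1).factorial : ℝ) * 3 ^ (N - j))
              = (k.choose j : ℝ) * (((1 + j).factorial : ℝ)
                * (((N - j + m + 1).factorial : ℝ) * 3 ^ (N - j))) := by
            intro k _; ring
          rw [Finset.sum_congr rfl this, ← Finset.sum_mul, ← Nat.cast_sum, hockey j (N + 1)]
        rw [Finset.sum_congr rfl h2]
        have h3 : ∀ j ∈ range (N + 1),
            (((N + 1).choose (j + 1) : ℕ) : ℝ) * (((1 + j).factorial : ℝ)
              * (((N - j + m + 1).factorial : ℝ) * 3 ^ (N - j)))
            ≤ ((N + 1 + m + 1).factorial : ℝ) * 3 ^ (N - j) := by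
          intro j hj
          have hj' : j < N + 1 := mem_range.mp hj
          have hk := key_fact j (N - j) m
          have hidx : j + 1 + (N - j) = N + 1 := by omega
          rw [hidx] at hk
          have h1j : (1 + j).factorial = (j + 1).factorial := by rw [Nat.add_comm]
          calc (((N + 1).choose (j + 1) : ℕ) : ℝ) * (((1 + j).factorial : ℝ)
                * (((N - j + m + 1).factorial : ℝ) * 3 ^ (N - j)))
              = (((N + 1).choose (j + 1) * (j + 1).factorial
                  * (N - j + m + 1).factorial : ℕ) : ℝ) * 3 ^ (N - j) := by
                rw [h1j]; push_cast; ring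
            _ ≤ ((N + 1 + m + 1).factorial : ℝ) * 3 ^ (N - j) := by
                gcongr
        refine (Finset.sum_le_sum h3).trans (le_of_eq ?_)
        rw [← Finset.mul_sum]
        congr 1
        have hrefl : ∑ j ∈ range (N + 1), (3 : ℝ) ^ (N + 1 - 1 - j)
            = ∑ j ∈ range (N + 1), (3 : ℝ) ^ j := Finset.sum_range_reflect _ _
        have harg : ∀ j ∈ range (N + 1), (3 : ℝ) ^ (N - j) = 3 ^ (N + 1 - 1 - j) := by
          intro j hj; norm_num
        rw [Finset.sum_congr rfl harg, hrefl, geom_sum_eq (by norm_num : (3:ℝ) ≠ 1)]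
        norm_num
      -- combine
      have hfin : ((N + (m + 1) + 1).factorial : ℝ) * 3 ^ N
          + ((N + 1 + m + 1).factorial : ℝ) * ((3 ^ (N + 1) - 1) / 2)
          ≤ ((N + 1 + m + 1).factorial : ℝ) * 3 ^ (N + 1) := by
        have he : N + (m + 1) + 1 = N + 1 + m + 1 := by omega
        rw [he]
        have hF : (0 : ℝ) ≤ ((N + 1 + m + 1).factorial : ℝ) := by positivity
        have hP : (0 : ℝ) ≤ (3 : ℝ) ^ N := by positivity
        have h3 : (3 : ℝ) ^ (N + 1) = 3 * 3 ^ N := by rw [pow_succ]; ring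
        rw [h3]
        nlinarith [mul_nonneg hF hP]
      calc ‖(A * word X (i :: v)) η‖
          ≤ ‖(word X (i :: v) * A) η‖ + ‖(∑ k ∈ range (i :: v).length,
              word X ((i :: v).take k) * Dl X A ((i :: v).drop k)) η‖ := hstep
        _ ≤ ((N + (m + 1) + 1).factorial : ℝ) * 3 ^ N
            + ((N + 1 + m + 1).factorial : ℝ) * ((3 ^ (N + 1) - 1) / 2) :=
              add_le_add hA (hS.trans harith)
        _ ≤ ((N + 1 + m + 1).factorial : ℝ) * 3 ^ (N + 1) := hfin

end NelsonAux

/-- Nelson's analytic domination theorem (Goodman's refinement): if each `X i` is dominated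
by `A` and the iterated adjoint actions of the `X i` on `A` satisfy factorial bounds, then
there is `M > 0` such that `‖X_{i_n} ⋯ X_{i_1} ξ‖ ≤ n!·Mⁿ` for all vectors `ξ` with
`‖A^m ξ‖ ≤ m!` for all `m`. -/
theorem nelson_analytic_domination (𝕜 : Type*) [RCLike 𝕜] (V : Type*)
    [NormedAddCommGroup V] [NormedSpace 𝕜 V]
    (I : Type*) (A : Module.End 𝕜 V) (X : I → Module.End 𝕜 V)
    (ha : ∀ (i : I) (ξ : V), ‖X i ξ‖ ≤ ‖A ξ‖)
    (hb : ∀ l : List I, l ≠ [] → ∀ ξ : V,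
      ‖(l.foldr (fun i B => X i * B - B * X i) A) ξ‖ ≤
        (Nat.factorial l.length : ℝ) * ‖A ξ‖) :
    ∃ M : ℝ, 0 < M ∧ ∀ l : List I, l ≠ [] → ∀ ξ : V,
      (∀ m : ℕ, ‖(A ^ m) ξ‖ ≤ (Nat.factorial m : ℝ)) →
      ‖((l.map X).prod) ξ‖ ≤ (Nat.factorial l.length : ℝ) * M ^ l.length := by
  refine ⟨3, by norm_num, ?_⟩
  intro l hl ξ hξ
  have hb' : ∀ (s : List I) (η : V),
      ‖NelsonAux.adw X A s η‖ ≤ (s.length.factorial : ℝ) * ‖A η‖ := by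
    intro s η
    cases s with
    | nil => simp [NelsonAux.adw]
    | cons j s' => simpa [NelsonAux.adw] using hb (j :: s') (by simp) η
  cases l with
  | nil => exact absurd rfl hl
  | cons i v =>
    have hmain := NelsonAux.main X A ha hb' ξ hξ v.length v rfl 0
    calc ‖((i :: v).map X).prod ξ‖
        = ‖X i (NelsonAux.word X v ξ)‖ := by
          rw [show ((i :: v).map X).prod = X i * NelsonAux.word X v from
            NelsonAux.word_cons X i v]
          rfl
      _ ≤ ‖A (NelsonAux.word X v ξ)‖ := ha i _
      _ = ‖(A * NelsonAux.word X v) ((A ^ 0) ξ)‖ := by rw [pow_zero]; rfl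
      _ ≤ ((v.length + 0 + 1).factorial : ℝ) * 3 ^ v.length := hmain
      _ ≤ ((i :: v).length.factorial : ℝ) * 3 ^ (i :: v).length := by
          simp only [List.length_cons, Nat.add_zero]
          have h3 : (3 : ℝ) ^ v.length ≤ 3 ^ (v.length + 1) :=
            pow_le_pow_right₀ (by norm_num) (by omega)
          have hF : (0 : ℝ) ≤ ((v.length + 1).factorial : ℝ) := by positivity
          exact mul_le_mul_of_nonneg_left h3 hF
end

section
/- Let α, β, γ be real numbers with α > −1, β > −1, γ > −1, 2α + γ > −2 and 2β + γ > −2. Then the function (t₁, t₂) ↦ t₁^α·(1−t₁)^β·t₂^α·(1−t₂)^β·|t₁ − t₂|^γ is Lebesgue integrable on the open square (0,1) × (0,1). -/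
open MeasureTheory Set Real

section SelbergAux

lemma intOn_of_bound {f g : ℝ → ℝ} {s : Set ℝ} (hs : MeasurableSet s)
    (hg : IntegrableOn g s) (hf : AEStronglyMeasurable f (volume.restrict s))
    (h : ∀ x ∈ s, ‖f x‖ ≤ g x) : IntegrableOn f s :=
  hg.mono' hf ((ae_restrict_iff' hs).2 (Filter.Eventually.of_forall h))

lemma rpow_intOn {p : ℝ} (hp : -1 < p) {a b : ℝ} (hab : a ≤ b) :
    IntegrableOn (fun t : ℝ => t ^ p) (Set.Ioc a b) := by
  have := intervalIntegral.intervalIntegrable_rpow' (a := a) (b := b) hp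
  rwa [intervalIntegrable_iff_integrableOn_Ioc_of_le hab] at this

lemma refl_rpow_intOn {p : ℝ} (hp : -1 < p) {c a b : ℝ} (hab : a ≤ b) :
    IntegrableOn (fun t : ℝ => (c - t) ^ p) (Set.Ioc a b) := by
  have h1 := intervalIntegral.intervalIntegrable_rpow' (a := c - b) (b := c - a) hp
  have h2 := (h1.comp_sub_left c).symm
  simp only [sub_sub_cancel] at h2
  rwa [intervalIntegrable_iff_integrableOn_Ioc_of_le hab] at h2

lemma abs_rpow_II {γ : ℝ} (hγ : -1 < γ) (c : ℝ) :
    IntervalIntegrable (fun t : ℝ => |t - c| ^ γ) volume (c - 1) (c + 1) := by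
  have l : IntegrableOn (fun t : ℝ => |t - c| ^ γ) (Set.Ioc (c - 1) c) := by
    apply (refl_rpow_intOn hγ (c := c) (by linarith : c - 1 ≤ c)).congr_fun ?_ measurableSet_Ioc
    intro t ht
    have : |t - c| = c - t := by rw [abs_sub_comm]; exact abs_of_nonneg (by linarith [ht.2])
    simp only [this]
  have r : IntegrableOn (fun t : ℝ => |t - c| ^ γ) (Set.Ioc c (c + 1)) := by
    have h1 := intervalIntegral.intervalIntegrable_rpow' (a := (0:ℝ)) (b := 1) hγ
    have h2 := h1.comp_sub_right c
    simp only [zero_add, add_comm 1 c] at h2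
    rw [intervalIntegrable_iff_integrableOn_Ioc_of_le (by linarith)] at h2
    apply h2.congr_fun ?_ measurableSet_Ioc
    intro t ht
    have : |t - c| = t - c := abs_of_nonneg (by linarith [ht.1])
    simp only [this]
  rw [intervalIntegrable_iff_integrableOn_Ioc_of_le (by linarith)]
  have := l.union r
  rwa [Set.Ioc_union_Ioc_eq_Ioc (by linarith) (by linarith)] at this

lemma abs_rpow_intOn {γ : ℝ} (hγ : -1 < γ) (c : ℝ) :
    IntegrableOn (fun t : ℝ => |t - c| ^ γ) (Set.Ioc (c - 1) (c + 1)) := by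
  have := abs_rpow_II hγ c
  rwa [intervalIntegrable_iff_integrableOn_Ioc_of_le (by linarith)] at this

lemma abs_rpow_integral_le {γ : ℝ} (hγ : -1 < γ) (c : ℝ) {s : Set ℝ}
    (hs : s ⊆ Set.Ioc (c - 1) (c + 1)) :
    ∫ t in s, |t - c| ^ γ ≤ 2 / (γ + 1) := by
  have hγ1 : (0:ℝ) < γ + 1 := by linarith
  have h1 : ∫ t in s, |t - c| ^ γ ≤ ∫ t in Set.Ioc (c - 1) (c + 1), |t - c| ^ γ := by
    apply setIntegral_mono_set (abs_rpow_intOn hγ c)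
    · exact Filter.Eventually.of_forall fun t => rpow_nonneg (abs_nonneg _) _
    · exact HasSubset.Subset.eventuallyLE hs
  refine h1.trans ?_
  have e0 : ∫ t in Set.Ioc (c - 1) (c + 1), |t - c| ^ γ
      = ∫ t in (c-1)..(c+1), |t - c| ^ γ := by
    rw [intervalIntegral.integral_of_le (by linarith)]
  have e1 : ∫ t in (c-1)..(c+1), |t - c| ^ γ = ∫ t in (-1:ℝ)..1, |t| ^ γ := by
    have := intervalIntegral.integral_comp_sub_right (a := c-1) (b := c+1)
      (fun s : ℝ => |s| ^ γ) c
    simpa using this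
  have hpos : ∫ t in (0:ℝ)..1, |t| ^ γ = 1 / (γ + 1) := by
    rw [intervalIntegral.integral_congr (g := fun t : ℝ => t ^ γ) ?_]
    · rw [integral_rpow (Or.inl hγ), Real.one_rpow, Real.zero_rpow (by linarith), sub_zero]
    · intro t ht
      rw [Set.uIcc_of_le (by norm_num : (0:ℝ) ≤ 1)] at ht
      simp [abs_of_nonneg ht.1]
  have hneg : ∫ t in (-1:ℝ)..0, |t| ^ γ = 1 / (γ + 1) := by
    have := intervalIntegral.integral_comp_neg (a := (0:ℝ)) (b := 1) (fun s : ℝ => |s| ^ γ)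
    simp only [abs_neg, neg_zero, neg_neg] at this
    rw [← this, hpos]
  have hII := abs_rpow_II hγ 0
  simp only [sub_zero, zero_sub, zero_add] at hII
  have hII' : IntervalIntegrable (fun t : ℝ => |t| ^ γ) volume (-1) 1 := by
    simpa using hII
  have hsplit : ∫ t in (-1:ℝ)..1, |t| ^ γ
      = (∫ t in (-1:ℝ)..0, |t| ^ γ) + ∫ t in (0:ℝ)..1, |t| ^ γ := by
    rw [intervalIntegral.integral_add_adjacent_intervals]
    · apply hII'.mono_set
      rw [Set.uIcc_of_le (by norm_num : (-1:ℝ) ≤ 0), Set.uIcc_of_le (by norm_num : (-1:ℝ) ≤ 1)]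
      exact Set.Icc_subset_Icc le_rfl (by norm_num)
    · apply hII'.mono_set
      rw [Set.uIcc_of_le (by norm_num : (0:ℝ) ≤ 1), Set.uIcc_of_le (by norm_num : (-1:ℝ) ≤ 1)]
      exact Set.Icc_subset_Icc (by norm_num) le_rfl
  rw [e0, e1, hsplit, hpos, hneg]
  rw [← add_div]
  norm_num

noncomputable def Kc (p : ℝ) : ℝ := max 1 ((2:ℝ) ^ (-p))

lemma one_le_Kc (p : ℝ) : 1 ≤ Kc p := le_max_left _ _
lemma Kc_nonneg (p : ℝ) : 0 ≤ Kc p := le_trans zero_le_one (one_le_Kc p)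

lemma rpow_le_Kc {t p : ℝ} (h1 : 1/2 ≤ t) (h2 : t ≤ 1) : t ^ p ≤ Kc p := by
  rcases le_or_gt 0 p with hp | hp
  · exact le_trans (Real.rpow_le_one (by linarith) h2 hp) (le_max_left _ _)
  · have h3 : t ^ p ≤ (1/2:ℝ) ^ p :=
      Real.rpow_le_rpow_of_nonpos (by norm_num) h1 hp.le
    have h4 : (1/2:ℝ) ^ p = (2:ℝ) ^ (-p) := by
      rw [one_div, Real.inv_rpow (by norm_num), ← Real.rpow_neg (by norm_num)]
    exact h3.trans (h4 ▸ le_max_right _ _)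

lemma half_rpow {c : ℝ} (hc : 0 ≤ c) (p : ℝ) : (c/2) ^ p = (2:ℝ) ^ (-p) * c ^ p := by
  rw [div_eq_mul_inv, Real.mul_rpow hc (by norm_num),
    Real.inv_rpow (by norm_num), ← Real.rpow_neg (by norm_num)]
  ring

lemma rpow_le_Kc_mul {t c p : ℝ} (hc : 0 < c) (h1 : c/2 ≤ t) (h2 : t ≤ 1) :
    t ^ p ≤ Kc p * c ^ (min p 0) := by
  rcases le_or_gt 0 p with hp | hp
  · rw [min_eq_right hp, Real.rpow_zero, mul_one]
    exact le_trans (Real.rpow_le_one (by linarith) h2 hp) (le_max_left _ _)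
  · rw [min_eq_left hp.le]
    have ht : t ^ p ≤ (c/2) ^ p :=
      Real.rpow_le_rpow_of_nonpos (by positivity) h1 hp.le
    calc t ^ p ≤ (c/2) ^ p := ht
      _ = (2:ℝ) ^ (-p) * c ^ p := half_rpow hc.le p
      _ ≤ Kc p * c ^ p :=
        mul_le_mul_of_nonneg_right (le_max_right _ _) (Real.rpow_nonneg hc.le p)

lemma cross_bound {x y p a b : ℝ} (hx0 : 0 < x) (hx1 : x ≤ 1) (hy0 : 0 < y) (hy1 : y ≤ 1)
    (hap : a ≤ p) (hb : b ≤ 0) : x ^ p ≤ x ^ a * y ^ b := by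
  calc x ^ p ≤ x ^ a := Real.rpow_le_rpow_of_exponent_ge hx0 hx1 hap
    _ = x ^ a * 1 := (mul_one _).symm
    _ ≤ x ^ a * y ^ b := by
        exact mul_le_mul_of_nonneg_left
          (Real.one_le_rpow_of_pos_of_le_one_of_nonpos hy0 hy1 hb)
          (Real.rpow_nonneg hx0.le a)

lemma beta_intOn {p q : ℝ} (hp : -1 < p) (hq : -1 < q) :
    IntegrableOn (fun t : ℝ => t ^ p * (1 - t) ^ q) (Set.Ioo (0:ℝ) 1) := by
  have hmeas : ∀ s : Set ℝ, AEStronglyMeasurable (fun t : ℝ => t ^ p * (1 - t) ^ q)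
      (volume.restrict s) := fun s =>
    (by fun_prop : Measurable fun t : ℝ => t ^ p * (1 - t) ^ q).aestronglyMeasurable
  have hl : IntegrableOn (fun t : ℝ => t ^ p * (1 - t) ^ q) (Set.Ioc (0:ℝ) (1/2)) := by
    apply intOn_of_bound measurableSet_Ioc
      ((rpow_intOn hp (by norm_num : (0:ℝ) ≤ 1/2)).const_mul (Kc q)) (hmeas _)
    intro t ht
    have ht0 : 0 < t := ht.1
    have h1 : (1 - t) ^ q ≤ Kc q := rpow_le_Kc (by linarith [ht.2]) (by linarith)
    have hnn : 0 ≤ t ^ p * (1 - t) ^ q :=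
      mul_nonneg (Real.rpow_nonneg ht0.le _) (Real.rpow_nonneg (by linarith [ht.2]) _)
    rw [Real.norm_eq_abs, abs_of_nonneg hnn]
    calc t ^ p * (1 - t) ^ q ≤ t ^ p * Kc q :=
          mul_le_mul_of_nonneg_left h1 (Real.rpow_nonneg ht0.le _)
      _ = Kc q * t ^ p := mul_comm _ _
  have hr : IntegrableOn (fun t : ℝ => t ^ p * (1 - t) ^ q) (Set.Ioc (1/2:ℝ) 1) := by
    apply intOn_of_bound measurableSet_Ioc
      ((refl_rpow_intOn hq (by norm_num : (1/2:ℝ) ≤ 1)).const_mul (Kc p)) (hmeas _)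
    intro t ht
    have ht1 : t ≤ 1 := ht.2
    have ht0 : (0:ℝ) < t := by linarith [ht.1]
    have h1 : t ^ p ≤ Kc p := rpow_le_Kc (le_of_lt ht.1) ht1
    have hnn : 0 ≤ t ^ p * (1 - t) ^ q :=
      mul_nonneg (Real.rpow_nonneg ht0.le _) (Real.rpow_nonneg (by linarith) _)
    rw [Real.norm_eq_abs, abs_of_nonneg hnn]
    exact mul_le_mul_of_nonneg_right h1 (Real.rpow_nonneg (by linarith) _)
  have := hl.union hr
  rw [Set.Ioc_union_Ioc_eq_Ioc (by norm_num : (0:ℝ) ≤ 1/2) (by norm_num : (1/2:ℝ) ≤ 1)] at this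
  exact this.mono_set Set.Ioo_subset_Ioc_self

noncomputable def Qr (p : ℝ) : ℝ := max 1 ((1/4:ℝ) ^ p)

lemma one_le_Qr (p : ℝ) : 1 ≤ Qr p := le_max_left _ _
lemma Qr_pos (p : ℝ) : 0 < Qr p := lt_of_lt_of_le zero_lt_one (one_le_Qr p)

lemma rpow_le_Qr {t p : ℝ} (h1 : 1/4 ≤ t) (h2 : t ≤ 1) : t ^ p ≤ Qr p := by
  rcases le_or_gt 0 p with hp | hp
  · exact le_trans (Real.rpow_le_one (by linarith) h2 hp) (le_max_left _ _)
  · exact le_trans (Real.rpow_le_rpow_of_nonpos (by norm_num) h1 hp.le) (le_max_right _ _)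

noncomputable def K3 (p : ℝ) : ℝ := max 1 ((3:ℝ) ^ p)
lemma K3_pos (p : ℝ) : 0 < K3 p := lt_of_lt_of_le zero_lt_one (le_max_left _ _)

lemma sandwich3 {x u p : ℝ} (hu : 0 < u) (h1 : u ≤ x) (h2 : x ≤ 3 * u) :
    x ^ p ≤ K3 p * u ^ p := by
  rcases le_or_gt 0 p with hp | hp
  · calc x ^ p ≤ (3 * u) ^ p := Real.rpow_le_rpow (by linarith) h2 hp
      _ = (3:ℝ) ^ p * u ^ p := Real.mul_rpow (by norm_num) hu.le
      _ ≤ K3 p * u ^ p :=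
        mul_le_mul_of_nonneg_right (le_max_right _ _) (Real.rpow_nonneg hu.le _)
  · calc x ^ p ≤ u ^ p := Real.rpow_le_rpow_of_nonpos hu h1 hp.le
      _ = 1 * u ^ p := (one_mul _).symm
      _ ≤ K3 p * u ^ p :=
        mul_le_mul_of_nonneg_right (le_max_left _ _) (Real.rpow_nonneg hu.le _)

noncomputable def eEx (p γ : ℝ) : ℝ := min (p + γ) (-(p+3)/2)
noncomputable def aExp (p γ : ℝ) : ℝ := min (min p 0 + γ + 1) (min (eEx p γ + 1) 0)

lemma eEx_lt {p γ : ℝ} (hp : -1 < p) : eEx p γ < -1 :=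
  lt_of_le_of_lt (min_le_right _ _) (by linarith)

lemma eEx_le (p γ : ℝ) : eEx p γ ≤ p + γ := min_le_left _ _

lemma aExp_nonpos (p γ : ℝ) : aExp p γ ≤ 0 :=
  le_trans (min_le_right _ _) (min_le_right _ _)

lemma aExp_le_e1 (p γ : ℝ) : aExp p γ ≤ eEx p γ + 1 :=
  le_trans (min_le_right _ _) (min_le_left _ _)

lemma aExp_le_m (p γ : ℝ) : aExp p γ ≤ min p 0 + γ + 1 := min_le_left _ _

lemma aExp_le_p (p γ : ℝ) : aExp p γ ≤ p + γ + 1 := by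
  have h := min_le_left p (0:ℝ)
  have := aExp_le_m p γ
  linarith

lemma aExp_bound {p γ : ℝ} (hp : -1 < p) (hγ : -1 < γ) (h : -2 < 2 * p + γ) :
    -1 < p + aExp p γ := by
  have h1 : -2 - p - γ < min p 0 := lt_min (by linarith) (by linarith)
  have h2 : -2 - p < eEx p γ := lt_min (by linarith) (by linarith)
  have h3 : (-1:ℝ) - p < min (eEx p γ + 1) 0 := lt_min (by linarith) (by linarith)
  have h4 : -1 - p < aExp p γ := lt_min (by linarith) h3
  linarith

lemma refl_rpow_intOn'' {p c a b : ℝ} (hab : a ≤ b) (hbc : b < c) :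
    IntegrableOn (fun t : ℝ => (c - t) ^ p) (Set.Ioc a b) := by
  have h1 : IntervalIntegrable (fun x : ℝ => x ^ p) volume (c - b) (c - a) := by
    apply intervalIntegral.intervalIntegrable_rpow (Or.inr ?_)
    rw [Set.uIcc_of_le (by linarith)]
    intro hmem
    rw [Set.mem_Icc] at hmem
    linarith [hmem.1]
  have h2 := (h1.comp_sub_left c).symm
  simp only [sub_sub_cancel] at h2
  rwa [intervalIntegrable_iff_integrableOn_Ioc_of_le hab] at h2

lemma shift_rpow_intOn {p c a b : ℝ} (hp : -1 < p) (hab : a ≤ b) :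
    IntegrableOn (fun t : ℝ => (t - c) ^ p) (Set.Ioc a b) := by
  have h1 := intervalIntegral.intervalIntegrable_rpow' (a := a - c) (b := b - c) hp
  have h2 := h1.comp_sub_right c
  simp only [sub_add_cancel] at h2
  rwa [intervalIntegrable_iff_integrableOn_Ioc_of_le hab] at h2

lemma shift_rpow_intOn' {p c a b : ℝ} (hab : a ≤ b) (hca : c < a) :
    IntegrableOn (fun t : ℝ => (t - c) ^ p) (Set.Ioc a b) := by
  have h1 : IntervalIntegrable (fun x : ℝ => x ^ p) volume (a - c) (b - c) := by
    apply intervalIntegral.intervalIntegrable_rpow (Or.inr ?_)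
    rw [Set.uIcc_of_le (by linarith)]
    intro hmem
    rw [Set.mem_Icc] at hmem
    linarith [hmem.1]
  have h2 := h1.comp_sub_right c
  simp only [sub_add_cancel] at h2
  rwa [intervalIntegrable_iff_integrableOn_Ioc_of_le hab] at h2

noncomputable def Cin (α β γ : ℝ) : ℝ :=
  Qr β * (2:ℝ)^(-(α+γ+1)) / (α+1)
  + Qr α * K3 β * (2:ℝ)^(-(eEx β γ + 1)) / (-(eEx β γ) - 1)
  + Kc α * Kc β * 2 / (γ+1)
  + Qr β * K3 α * (2:ℝ)^(-(eEx α γ + 1)) / (-(eEx α γ) - 1)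
  + Qr α * (2:ℝ)^(-(β+γ+1)) / (β+1)

set_option maxHeartbeats 2000000 in
lemma inner_key {α β γ : ℝ} (hα : -1 < α) (hβ : -1 < β) (hγ : -1 < γ) (hγ0 : γ ≤ 0)
    {c : ℝ} (hc0 : 0 < c) (hc1 : c < 1) :
    IntegrableOn (fun t : ℝ => t ^ α * (1 - t) ^ β * |t - c| ^ γ) (Set.Ioo (0:ℝ) 1) ∧
    ∫ t in Set.Ioo (0:ℝ) 1, t ^ α * (1 - t) ^ β * |t - c| ^ γ ≤
      Cin α β γ * (c ^ aExp α γ * (1-c) ^ aExp β γ) := by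
  set h : ℝ → ℝ := fun t => t ^ α * (1 - t) ^ β * |t - c| ^ γ with hh
  set m : ℝ := c / 2 with hm
  set w : ℝ := c - (1-c)/2 with hw
  set q : ℝ := max m w with hq
  set M : ℝ := (1 + c) / 2 with hM
  set w' : ℝ := c + c/2 with hw2
  set q' : ℝ := min M w' with hq2
  have hc1' : (0:ℝ) < 1 - c := by linarith
  have hm0 : 0 < m := by rw [hm]; positivity
  have hmc : m < c := by rw [hm]; linarith
  have hm2 : m ≤ 1/2 := by rw [hm]; linarith
  have hmq : m ≤ q := le_max_left _ _
  have hqc : q < c := max_lt hmc (by rw [hw]; linarith)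
  have hcq' : c < q' := lt_min (by rw [hM]; linarith) (by rw [hw2]; linarith)
  have hq'M : q' ≤ M := min_le_left _ _
  have hM1 : M < 1 := by rw [hM]; linarith
  have hM2 : (1:ℝ)/2 ≤ M := by rw [hM]; linarith
  have h1M : 1 - M = (1 - c)/2 := by rw [hM]; ring
  have hγ1 : (0:ℝ) < γ + 1 := by linarith
  have hα1 : (0:ℝ) < α + 1 := by linarith
  have hβ1 : (0:ℝ) < β + 1 := by linarith
  have heα : eEx α γ < -1 := eEx_lt hα
  have heβ : eEx β γ < -1 := eEx_lt hβ
  have hDα : (0:ℝ) < -(eEx α γ) - 1 := by linarith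
  have hDβ : (0:ℝ) < -(eEx β γ) - 1 := by linarith
  have hQα := Qr_pos α; have hQβ := Qr_pos β
  have hK3α := K3_pos α; have hK3β := K3_pos β
  have hKcα : (0:ℝ) < Kc α := lt_of_lt_of_le zero_lt_one (one_le_Kc α)
  have hKcβ : (0:ℝ) < Kc β := lt_of_lt_of_le zero_lt_one (one_le_Kc β)
  have hXa : (0:ℝ) < c ^ aExp α γ := Real.rpow_pos_of_pos hc0 _
  have hXb : (0:ℝ) < (1-c) ^ aExp β γ := Real.rpow_pos_of_pos hc1' _
  have hX : (0:ℝ) ≤ c ^ aExp α γ * (1-c) ^ aExp β γ := by positivity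
  have hmeas : ∀ s : Set ℝ, AEStronglyMeasurable h (volume.restrict s) := fun s =>
    (by fun_prop : Measurable h).aestronglyMeasurable
  have hnn : ∀ t : ℝ, 0 < t → t ≤ 1 → 0 ≤ h t := fun t ht0 ht1 =>
    mul_nonneg (mul_nonneg (Real.rpow_nonneg ht0.le _)
      (Real.rpow_nonneg (by linarith) _)) (Real.rpow_nonneg (abs_nonneg _) _)
  -- ### Region A = Ioc 0 m
  have boundA : ∀ t ∈ Set.Ioc 0 m, h t ≤ (Qr β * (c/2) ^ γ) * t ^ α := by
    intro t ht
    have ht0 : 0 < t := ht.1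
    have htm : t ≤ m := ht.2
    have e1 : (1 - t) ^ β ≤ Qr β := rpow_le_Qr (by linarith) (by linarith)
    have e2 : |t - c| ^ γ ≤ (c/2) ^ γ := by
      apply Real.rpow_le_rpow_of_nonpos (by positivity) ?_ hγ0
      calc c/2 = c - m := by rw [hm]; ring
        _ ≤ c - t := by linarith
        _ ≤ |c - t| := le_abs_self _
        _ = |t - c| := abs_sub_comm _ _
    calc h t ≤ (t ^ α * Qr β) * ((c/2) ^ γ) := by
          apply mul_le_mul (mul_le_mul_of_nonneg_left e1 (Real.rpow_nonneg ht0.le α)) e2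
            (Real.rpow_nonneg (abs_nonneg _) _)
            (mul_nonneg (Real.rpow_nonneg ht0.le _) hQβ.le)
      _ = (Qr β * (c/2) ^ γ) * t ^ α := by ring
  have intA : IntegrableOn h (Set.Ioc 0 m) := by
    apply intOn_of_bound measurableSet_Ioc
      ((rpow_intOn hα hm0.le).const_mul _) (hmeas _)
    intro t ht
    rw [Real.norm_eq_abs, abs_of_nonneg (hnn t ht.1 (by linarith [ht.2]))]
    exact boundA t ht
  have termA : ∫ t in Set.Ioc 0 m, h t
      ≤ (Qr β * (2:ℝ)^(-(α+γ+1)) / (α+1)) * (c ^ aExp α γ * (1-c) ^ aExp β γ) := by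
    have s1 : ∫ t in Set.Ioc 0 m, h t ≤ ∫ t in Set.Ioc 0 m, (Qr β * (c/2) ^ γ) * t ^ α :=
      setIntegral_mono_on intA ((rpow_intOn hα hm0.le).const_mul _) measurableSet_Ioc boundA
    have s2 : ∫ t in Set.Ioc 0 m, (Qr β * (c/2) ^ γ) * t ^ α
        = (Qr β * (c/2) ^ γ) * (m ^ (α+1) / (α+1)) := by
      rw [MeasureTheory.integral_const_mul, ← intervalIntegral.integral_of_le hm0.le,
        integral_rpow (Or.inl hα), Real.zero_rpow (by linarith), sub_zero]
    have e3 : (c/2:ℝ) ^ γ * (c/2) ^ (α+1) = (c/2) ^ (α+γ+1) := by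
      rw [← Real.rpow_add (by positivity)]; congr 1; ring
    have s3 : (Qr β * (c/2) ^ γ) * (m ^ (α+1) / (α+1))
        = (Qr β * (2:ℝ)^(-(α+γ+1)) / (α+1)) * c ^ (α+γ+1) := by
      rw [hm]
      calc (Qr β * (c/2) ^ γ) * ((c/2) ^ (α+1) / (α+1))
          = Qr β / (α+1) * ((c/2) ^ γ * (c/2) ^ (α+1)) := by ring
        _ = Qr β / (α+1) * (c/2) ^ (α+γ+1) := by rw [e3]
        _ = Qr β / (α+1) * ((2:ℝ)^(-(α+γ+1)) * c ^ (α+γ+1)) := by rw [half_rpow hc0.le]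
        _ = (Qr β * (2:ℝ)^(-(α+γ+1)) / (α+1)) * c ^ (α+γ+1) := by ring
    have s5 : c ^ (α+γ+1) ≤ c ^ aExp α γ * (1-c) ^ aExp β γ :=
      cross_bound hc0 hc1.le hc1' (by linarith) (aExp_le_p α γ) (aExp_nonpos β γ)
    calc ∫ t in Set.Ioc 0 m, h t
        ≤ (Qr β * (2:ℝ)^(-(α+γ+1)) / (α+1)) * c ^ (α+γ+1) := by
          rw [← s3]; exact s1.trans_eq s2
      _ ≤ _ := mul_le_mul_of_nonneg_left s5 (by positivity)
  -- ### Region L1 = Ioc m q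
  have boundL1 : ∀ t ∈ Set.Ioc m q, h t ≤ (Qr α * K3 β) * (c - t) ^ eEx β γ := by
    intro t ht
    have hmltq : m < q := lt_of_lt_of_le ht.1 ht.2
    have hwq : q = w := by
      rcases max_cases m w with ⟨h1, h2⟩ | ⟨h1, h2⟩
      · rw [hq, h1] at hmltq; exact absurd hmltq (lt_irrefl m)
      · exact h1
    have hmw : m < w := hwq ▸ hmltq
    have hc2 : 1/2 < c := by rw [hm, hw] at hmw; linarith
    have htw : t ≤ w := hwq ▸ ht.2
    have htw' : t ≤ c - (1-c)/2 := by rw [hw] at htw; exact htw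
    have htm : m < t := ht.1
    have htm' : c/2 < t := by rw [hm] at htm; exact htm
    have hu0 : (0:ℝ) < c - t := by linarith
    have hu1 : (1-c)/2 ≤ c - t := by linarith
    have hu2 : c - t < c/2 := by linarith
    have ht0 : 0 < t := by linarith
    have e1 : t ^ α ≤ Qr α := rpow_le_Qr (by linarith) (by linarith)
    have e2 : (1 - t) ^ β ≤ K3 β * (c - t) ^ β :=
      sandwich3 hu0 (by linarith) (by linarith)
    have e4 : (c-t) ^ β * (c-t) ^ γ = (c-t) ^ (β + γ) := (Real.rpow_add hu0 _ _).symm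
    have e5 : (c-t) ^ (β + γ) ≤ (c-t) ^ eEx β γ :=
      Real.rpow_le_rpow_of_exponent_ge hu0 (by linarith) (eEx_le β γ)
    have habs : |t - c| = c - t := by
      rw [abs_sub_comm]; exact abs_of_nonneg (by linarith)
    calc h t = t ^ α * (1 - t) ^ β * (c - t) ^ γ := by simp only [hh]; rw [habs]
      _ ≤ Qr α * (K3 β * (c - t) ^ β) * (c - t) ^ γ := by
          apply mul_le_mul_of_nonneg_right ?_ (Real.rpow_nonneg hu0.le _)
          exact mul_le_mul e1 e2 (Real.rpow_nonneg (by linarith) _) hQα.le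
      _ = (Qr α * K3 β) * ((c-t) ^ β * (c-t) ^ γ) := by ring
      _ = (Qr α * K3 β) * (c-t) ^ (β + γ) := by rw [e4]
      _ ≤ (Qr α * K3 β) * (c-t) ^ eEx β γ :=
          mul_le_mul_of_nonneg_left e5 (by positivity)
  have intL1 : IntegrableOn h (Set.Ioc m q) := by
    apply intOn_of_bound measurableSet_Ioc
      ((refl_rpow_intOn'' hmq hqc).const_mul _) (hmeas _)
    intro t ht
    rw [Real.norm_eq_abs, abs_of_nonneg (hnn t (lt_trans hm0 ht.1)
      (by linarith [ht.2, hqc]))]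
    exact boundL1 t ht
  have termL1 : ∫ t in Set.Ioc m q, h t
      ≤ (Qr α * K3 β * (2:ℝ)^(-(eEx β γ + 1)) / (-(eEx β γ) - 1))
        * (c ^ aExp α γ * (1-c) ^ aExp β γ) := by
    have hEneg : eEx β γ + 1 < 0 := by linarith
    rcases eq_or_lt_of_le hmq with heq | hlt
    · rw [← heq, Set.Ioc_self, MeasureTheory.setIntegral_empty]
      positivity
    · have hwq : q = w := by
        rcases max_cases m w with ⟨h1, h2⟩ | ⟨h1, h2⟩
        · rw [hq, h1] at hlt; exact absurd hlt (lt_irrefl m)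
        · exact h1
      have hcq2 : c - q = (1-c)/2 := by rw [hwq, hw]; ring
      have hcqpos : (0:ℝ) < c - q := by linarith
      have hnotmem : (0:ℝ) ∉ Set.uIcc (c-q) (c-m) := by
        rw [Set.uIcc_of_le (by linarith : c - q ≤ c - m)]
        intro hmem
        rw [Set.mem_Icc] at hmem
        linarith [hmem.1]
      have s1 : ∫ t in Set.Ioc m q, h t
          ≤ ∫ t in Set.Ioc m q, (Qr α * K3 β) * (c - t) ^ eEx β γ :=
        setIntegral_mono_on intL1 ((refl_rpow_intOn'' hmq hqc).const_mul _)
          measurableSet_Ioc boundL1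
      have s2 : ∫ t in Set.Ioc m q, (Qr α * K3 β) * (c - t) ^ eEx β γ
          = (Qr α * K3 β)
            * (((c-m) ^ (eEx β γ + 1) - (c-q) ^ (eEx β γ + 1)) / (eEx β γ + 1)) := by
        rw [MeasureTheory.integral_const_mul, ← intervalIntegral.integral_of_le hmq,
          intervalIntegral.integral_comp_sub_left (fun u : ℝ => u ^ eEx β γ) c,
          integral_rpow (Or.inr ⟨ne_of_lt heβ, hnotmem⟩)]
      have s3 : ((c-m) ^ (eEx β γ + 1) - (c-q) ^ (eEx β γ + 1)) / (eEx β γ + 1)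
          ≤ (c-q) ^ (eEx β γ + 1) / (-(eEx β γ) - 1) := by
        have h8 : (0:ℝ) ≤ (c-m) ^ (eEx β γ + 1) := Real.rpow_nonneg (by linarith) _
        have e : ((c-m) ^ (eEx β γ + 1) - (c-q) ^ (eEx β γ + 1)) / (eEx β γ + 1)
            = ((c-q) ^ (eEx β γ + 1) - (c-m) ^ (eEx β γ + 1)) / (-(eEx β γ) - 1) := by
          rw [div_eq_div_iff (by linarith) (by linarith)]; ring
        rw [e]
        exact (div_le_div_iff_of_pos_right hDβ).mpr (by linarith)
      have s4 : (c-q) ^ (eEx β γ + 1)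
          = (2:ℝ)^(-(eEx β γ + 1)) * (1-c) ^ (eEx β γ + 1) := by
        rw [hcq2, half_rpow hc1'.le]
      have s5 : (1-c) ^ (eEx β γ + 1) ≤ (1-c) ^ aExp β γ * c ^ aExp α γ :=
        cross_bound hc1' (by linarith) hc0 hc1.le (aExp_le_e1 β γ) (aExp_nonpos α γ)
      calc ∫ t in Set.Ioc m q, h t
          ≤ (Qr α * K3 β) * ((c-q) ^ (eEx β γ + 1) / (-(eEx β γ) - 1)) := by
            refine (s1.trans_eq s2).trans ?_
            exact mul_le_mul_of_nonneg_left s3 (by positivity)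
        _ = (Qr α * K3 β * (2:ℝ)^(-(eEx β γ + 1)) / (-(eEx β γ) - 1))
              * (1-c) ^ (eEx β γ + 1) := by rw [s4]; ring
        _ ≤ (Qr α * K3 β * (2:ℝ)^(-(eEx β γ + 1)) / (-(eEx β γ) - 1))
              * ((1-c) ^ aExp β γ * c ^ aExp α γ) :=
            mul_le_mul_of_nonneg_left s5 (by positivity)
        _ = _ := by ring
  -- ### Region L2 = Ioc q c
  have hq0 : 0 < q := lt_of_lt_of_le hm0 hmq
  have boundL2 : ∀ t ∈ Set.Ioc q c,
      h t ≤ ((Kc α * c ^ min α 0) * (Kc β * (1-c) ^ min β 0)) * |t - c| ^ γ := by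
    intro t ht
    have ht0 : 0 < t := lt_trans hq0 ht.1
    have htc : t ≤ c := ht.2
    have htm : m < t := lt_of_le_of_lt hmq ht.1
    have e1 : t ^ α ≤ Kc α * c ^ min α 0 := by
      apply rpow_le_Kc_mul hc0 ?_ (by linarith)
      rw [hm] at htm; linarith
    have e2 : (1 - t) ^ β ≤ Kc β * (1-c) ^ min β 0 := by
      apply rpow_le_Kc_mul hc1' (by linarith) (by linarith)
    have e3 : t ^ α * (1 - t) ^ β ≤ (Kc α * c ^ min α 0) * (Kc β * (1-c) ^ min β 0) :=
      mul_le_mul e1 e2 (Real.rpow_nonneg (by linarith) _)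
        (mul_nonneg hKcα.le (Real.rpow_nonneg hc0.le _))
    exact mul_le_mul_of_nonneg_right e3 (Real.rpow_nonneg (abs_nonneg _) _)
  have intAbsL2 : IntegrableOn (fun t : ℝ => |t - c| ^ γ) (Set.Ioc q c) := by
    apply (refl_rpow_intOn hγ (c := c) hqc.le).congr_fun ?_ measurableSet_Ioc
    intro t ht
    have : |t - c| = c - t := by
      rw [abs_sub_comm]; exact abs_of_nonneg (by linarith [ht.2])
    simp only [this]
  have intL2 : IntegrableOn h (Set.Ioc q c) := by
    apply intOn_of_bound measurableSet_Ioc (intAbsL2.const_mul _) (hmeas _)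
    intro t ht
    rw [Real.norm_eq_abs, abs_of_nonneg (hnn t (lt_trans hq0 ht.1) (by linarith [ht.2]))]
    exact boundL2 t ht
  have lenL2 : c - q ≤ c * (1-c) := by
    have h1 : c - q ≤ c/2 := by rw [hq]; have := le_max_left m w; rw [hm] at *; linarith
    have h2 : c - q ≤ (1-c)/2 := by
      have := le_max_right m w; rw [hq, hw] at *; linarith
    rcases le_total c (1-c) with hcc | hcc
    · nlinarith
    · nlinarith
  have termL2 : ∫ t in Set.Ioc q c, h t
      ≤ (Kc α * Kc β / (γ+1)) * (c ^ aExp α γ * (1-c) ^ aExp β γ) := by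
    have s1 : ∫ t in Set.Ioc q c, h t
        ≤ ∫ t in Set.Ioc q c, ((Kc α * c ^ min α 0) * (Kc β * (1-c) ^ min β 0)) * |t - c| ^ γ :=
      setIntegral_mono_on intL2 (intAbsL2.const_mul _) measurableSet_Ioc boundL2
    have s2 : ∫ t in Set.Ioc q c, |t - c| ^ γ = (c - q) ^ (γ+1) / (γ+1) := by
      have e0 : ∫ t in Set.Ioc q c, |t - c| ^ γ = ∫ t in Set.Ioc q c, (c - t) ^ γ := by
        apply setIntegral_congr_fun measurableSet_Ioc
        intro t ht
        have : |t - c| = c - t := by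
          rw [abs_sub_comm]; exact abs_of_nonneg (by linarith [ht.2])
        simp only [this]
      have e1 := intervalIntegral.integral_comp_sub_left (a := q) (b := c)
        (fun u : ℝ => u ^ γ) c
      rw [e0, ← intervalIntegral.integral_of_le hqc.le, e1]
      rw [sub_self, integral_rpow (Or.inl hγ), Real.zero_rpow (by linarith), sub_zero]
    have s3 : (c - q) ^ (γ+1) ≤ (c * (1-c)) ^ (γ+1) :=
      Real.rpow_le_rpow (by linarith) lenL2 (by linarith)
    have s4 : (c * (1-c)) ^ (γ+1) = c ^ (γ+1) * (1-c) ^ (γ+1) :=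
      Real.mul_rpow hc0.le hc1'.le
    have s5 : c ^ min α 0 * c ^ (γ+1) = c ^ (min α 0 + γ + 1) := by
      rw [← Real.rpow_add hc0]; congr 1; ring
    have s6 : (1-c) ^ min β 0 * (1-c) ^ (γ+1) = (1-c) ^ (min β 0 + γ + 1) := by
      rw [← Real.rpow_add hc1']; congr 1; ring
    have s7 : c ^ (min α 0 + γ + 1) ≤ c ^ aExp α γ :=
      Real.rpow_le_rpow_of_exponent_ge hc0 hc1.le (aExp_le_m α γ)
    have s8 : (1-c) ^ (min β 0 + γ + 1) ≤ (1-c) ^ aExp β γ :=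
      Real.rpow_le_rpow_of_exponent_ge hc1' (by linarith) (aExp_le_m β γ)
    calc ∫ t in Set.Ioc q c, h t
        ≤ ((Kc α * c ^ min α 0) * (Kc β * (1-c) ^ min β 0)) * ((c - q) ^ (γ+1) / (γ+1)) := by
          refine s1.trans ?_
          rw [MeasureTheory.integral_const_mul, s2]
      _ ≤ ((Kc α * c ^ min α 0) * (Kc β * (1-c) ^ min β 0)) * ((c * (1-c)) ^ (γ+1) / (γ+1)) := by
          apply mul_le_mul_of_nonneg_left ((div_le_div_iff_of_pos_right hγ1).mpr s3) ?_
          have h1 : (0:ℝ) ≤ c ^ min α 0 := Real.rpow_nonneg hc0.le _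
          have h2 : (0:ℝ) ≤ (1-c) ^ min β 0 := Real.rpow_nonneg hc1'.le _
          positivity
      _ = (Kc α * Kc β / (γ+1)) * (c ^ (min α 0 + γ + 1) * (1-c) ^ (min β 0 + γ + 1)) := by
          rw [s4, ← s5, ← s6]; ring
      _ ≤ (Kc α * Kc β / (γ+1)) * (c ^ aExp α γ * (1-c) ^ aExp β γ) := by
          apply mul_le_mul_of_nonneg_left ?_ (by positivity)
          exact mul_le_mul s7 s8 (Real.rpow_nonneg hc1'.le _) hXa.le
  -- ### Region R2 = Ioc c q'
  have boundR2 : ∀ t ∈ Set.Ioc c q',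
      h t ≤ ((Kc α * c ^ min α 0) * (Kc β * (1-c) ^ min β 0)) * |t - c| ^ γ := by
    intro t ht
    have ht0 : 0 < t := lt_trans hc0 ht.1
    have htM : t ≤ M := le_trans ht.2 hq'M
    have ht1 : t ≤ 1 := by linarith
    have e1 : t ^ α ≤ Kc α * c ^ min α 0 := by
      apply rpow_le_Kc_mul hc0 (by linarith [ht.1]) ht1
    have e2 : (1 - t) ^ β ≤ Kc β * (1-c) ^ min β 0 := by
      apply rpow_le_Kc_mul hc1' ?_ (by linarith [ht.1])
      rw [← h1M]; linarith
    have e3 : t ^ α * (1 - t) ^ β ≤ (Kc α * c ^ min α 0) * (Kc β * (1-c) ^ min β 0) :=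
      mul_le_mul e1 e2 (Real.rpow_nonneg (by linarith) _)
        (mul_nonneg hKcα.le (Real.rpow_nonneg hc0.le _))
    exact mul_le_mul_of_nonneg_right e3 (Real.rpow_nonneg (abs_nonneg _) _)
  have intAbsR2 : IntegrableOn (fun t : ℝ => |t - c| ^ γ) (Set.Ioc c q') := by
    apply (shift_rpow_intOn hγ (c := c) hcq'.le).congr_fun ?_ measurableSet_Ioc
    intro t ht
    have : |t - c| = t - c := abs_of_nonneg (by linarith [ht.1])
    simp only [this]
  have intR2 : IntegrableOn h (Set.Ioc c q') := by
    apply intOn_of_bound measurableSet_Ioc (intAbsR2.const_mul _) (hmeas _)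
    intro t ht
    rw [Real.norm_eq_abs, abs_of_nonneg (hnn t (lt_trans hc0 ht.1)
      (by linarith [le_trans ht.2 hq'M]))]
    exact boundR2 t ht
  have lenR2 : q' - c ≤ c * (1-c) := by
    have h1 : q' - c ≤ c/2 := by
      have := min_le_right M w'; rw [hq2, hw2] at *; linarith
    have h2 : q' - c ≤ (1-c)/2 := by
      have := min_le_left M w'; rw [hq2, hM] at *; linarith
    rcases le_total c (1-c) with hcc | hcc
    · nlinarith
    · nlinarith
  have termR2 : ∫ t in Set.Ioc c q', h t
      ≤ (Kc α * Kc β / (γ+1)) * (c ^ aExp α γ * (1-c) ^ aExp β γ) := by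
    have s1 : ∫ t in Set.Ioc c q', h t
        ≤ ∫ t in Set.Ioc c q', ((Kc α * c ^ min α 0) * (Kc β * (1-c) ^ min β 0)) * |t - c| ^ γ :=
      setIntegral_mono_on intR2 (intAbsR2.const_mul _) measurableSet_Ioc boundR2
    have s2 : ∫ t in Set.Ioc c q', |t - c| ^ γ = (q' - c) ^ (γ+1) / (γ+1) := by
      have e0 : ∫ t in Set.Ioc c q', |t - c| ^ γ = ∫ t in Set.Ioc c q', (t - c) ^ γ := by
        apply setIntegral_congr_fun measurableSet_Ioc
        intro t ht
        have : |t - c| = t - c := abs_of_nonneg (by linarith [ht.1])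
        simp only [this]
      have e1 := intervalIntegral.integral_comp_sub_right (a := c) (b := q')
        (fun u : ℝ => u ^ γ) c
      rw [e0, ← intervalIntegral.integral_of_le hcq'.le, e1]
      rw [sub_self, integral_rpow (Or.inl hγ), Real.zero_rpow (by linarith), sub_zero]
    have s3 : (q' - c) ^ (γ+1) ≤ (c * (1-c)) ^ (γ+1) :=
      Real.rpow_le_rpow (by linarith) lenR2 (by linarith)
    have s4 : (c * (1-c)) ^ (γ+1) = c ^ (γ+1) * (1-c) ^ (γ+1) :=
      Real.mul_rpow hc0.le hc1'.le
    have s5 : c ^ min α 0 * c ^ (γ+1) = c ^ (min α 0 + γ + 1) := by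
      rw [← Real.rpow_add hc0]; congr 1; ring
    have s6 : (1-c) ^ min β 0 * (1-c) ^ (γ+1) = (1-c) ^ (min β 0 + γ + 1) := by
      rw [← Real.rpow_add hc1']; congr 1; ring
    have s7 : c ^ (min α 0 + γ + 1) ≤ c ^ aExp α γ :=
      Real.rpow_le_rpow_of_exponent_ge hc0 hc1.le (aExp_le_m α γ)
    have s8 : (1-c) ^ (min β 0 + γ + 1) ≤ (1-c) ^ aExp β γ :=
      Real.rpow_le_rpow_of_exponent_ge hc1' (by linarith) (aExp_le_m β γ)
    calc ∫ t in Set.Ioc c q', h t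
        ≤ ((Kc α * c ^ min α 0) * (Kc β * (1-c) ^ min β 0)) * ((q' - c) ^ (γ+1) / (γ+1)) := by
          refine s1.trans ?_
          rw [MeasureTheory.integral_const_mul, s2]
      _ ≤ ((Kc α * c ^ min α 0) * (Kc β * (1-c) ^ min β 0)) * ((c * (1-c)) ^ (γ+1) / (γ+1)) := by
          apply mul_le_mul_of_nonneg_left ((div_le_div_iff_of_pos_right hγ1).mpr s3) ?_
          have h1 : (0:ℝ) ≤ c ^ min α 0 := Real.rpow_nonneg hc0.le _
          have h2 : (0:ℝ) ≤ (1-c) ^ min β 0 := Real.rpow_nonneg hc1'.le _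
          positivity
      _ = (Kc α * Kc β / (γ+1)) * (c ^ (min α 0 + γ + 1) * (1-c) ^ (min β 0 + γ + 1)) := by
          rw [s4, ← s5, ← s6]; ring
      _ ≤ (Kc α * Kc β / (γ+1)) * (c ^ aExp α γ * (1-c) ^ aExp β γ) := by
          apply mul_le_mul_of_nonneg_left ?_ (by positivity)
          exact mul_le_mul s7 s8 (Real.rpow_nonneg hc1'.le _) hXa.le
  -- ### Region R1 = Ioc q' M
  have boundR1 : ∀ t ∈ Set.Ioc q' M, h t ≤ (Qr β * K3 α) * (t - c) ^ eEx α γ := by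
    intro t ht
    have hq'M' : q' < M := lt_of_lt_of_le ht.1 ht.2
    have hq'w : q' = w' := by
      rcases min_cases M w' with ⟨h1, h2⟩ | ⟨h1, h2⟩
      · rw [hq2, h1] at hq'M'; exact absurd hq'M' (lt_irrefl M)
      · exact h1
    have hwM : w' < M := hq'w ▸ hq'M'
    have hc2 : c < 1/2 := by rw [hw2, hM] at hwM; linarith
    have htw : w' < t := hq'w ▸ ht.1
    have htw' : c + c/2 < t := by rw [hw2] at htw; exact htw
    have htM : t ≤ M := ht.2
    have htM' : t ≤ (1+c)/2 := by rw [hM] at htM; exact htM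
    have hu0 : (0:ℝ) < t - c := by linarith
    have hu1 : c/2 < t - c := by linarith
    have hu2 : t - c ≤ (1-c)/2 := by linarith
    have ht0 : 0 < t := by linarith
    have e1 : (1 - t) ^ β ≤ Qr β := by
      apply rpow_le_Qr ?_ (by linarith)
      linarith
    have e2 : t ^ α ≤ K3 α * (t - c) ^ α :=
      sandwich3 hu0 (by linarith) (by linarith)
    have e4 : (t-c) ^ α * (t-c) ^ γ = (t-c) ^ (α + γ) := (Real.rpow_add hu0 _ _).symm
    have e5 : (t-c) ^ (α + γ) ≤ (t-c) ^ eEx α γ :=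
      Real.rpow_le_rpow_of_exponent_ge hu0 (by linarith) (eEx_le α γ)
    have habs : |t - c| = t - c := abs_of_nonneg (by linarith)
    calc h t = t ^ α * (1 - t) ^ β * (t - c) ^ γ := by simp only [hh]; rw [habs]
      _ ≤ (K3 α * (t - c) ^ α) * Qr β * (t - c) ^ γ := by
          apply mul_le_mul_of_nonneg_right ?_ (Real.rpow_nonneg hu0.le _)
          exact mul_le_mul e2 e1 (Real.rpow_nonneg (by linarith) _)
            (mul_nonneg hK3α.le (Real.rpow_nonneg hu0.le _))
      _ = (Qr β * K3 α) * ((t-c) ^ α * (t-c) ^ γ) := by ring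
      _ = (Qr β * K3 α) * (t-c) ^ (α + γ) := by rw [e4]
      _ ≤ (Qr β * K3 α) * (t-c) ^ eEx α γ :=
          mul_le_mul_of_nonneg_left e5 (by positivity)
  have intR1 : IntegrableOn h (Set.Ioc q' M) := by
    apply intOn_of_bound measurableSet_Ioc
      ((shift_rpow_intOn' hq'M hcq').const_mul _) (hmeas _)
    intro t ht
    rw [Real.norm_eq_abs, abs_of_nonneg (hnn t (lt_trans (lt_trans hc0 hcq') ht.1)
      (by linarith [ht.2, hM1]))]
    exact boundR1 t ht
  have termR1 : ∫ t in Set.Ioc q' M, h t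
      ≤ (Qr β * K3 α * (2:ℝ)^(-(eEx α γ + 1)) / (-(eEx α γ) - 1))
        * (c ^ aExp α γ * (1-c) ^ aExp β γ) := by
    have hEneg : eEx α γ + 1 < 0 := by linarith
    rcases eq_or_lt_of_le hq'M with heq | hlt
    · rw [heq, Set.Ioc_self, MeasureTheory.setIntegral_empty]
      positivity
    · have hq'w : q' = w' := by
        rcases min_cases M w' with ⟨h1, h2⟩ | ⟨h1, h2⟩
        · rw [hq2, h1] at hlt; exact absurd hlt (lt_irrefl M)
        · exact h1
      have hq'c2 : q' - c = c/2 := by rw [hq'w, hw2]; ring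
      have hq'cpos : (0:ℝ) < q' - c := by linarith
      have hnotmem : (0:ℝ) ∉ Set.uIcc (q'-c) (M-c) := by
        rw [Set.uIcc_of_le (by linarith : q' - c ≤ M - c)]
        intro hmem
        rw [Set.mem_Icc] at hmem
        linarith [hmem.1]
      have s1 : ∫ t in Set.Ioc q' M, h t
          ≤ ∫ t in Set.Ioc q' M, (Qr β * K3 α) * (t - c) ^ eEx α γ :=
        setIntegral_mono_on intR1 ((shift_rpow_intOn' hq'M hcq').const_mul _)
          measurableSet_Ioc boundR1
      have s2 : ∫ t in Set.Ioc q' M, (Qr β * K3 α) * (t - c) ^ eEx α γ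
          = (Qr β * K3 α)
            * (((M-c) ^ (eEx α γ + 1) - (q'-c) ^ (eEx α γ + 1)) / (eEx α γ + 1)) := by
        rw [MeasureTheory.integral_const_mul, ← intervalIntegral.integral_of_le hq'M,
          intervalIntegral.integral_comp_sub_right (fun u : ℝ => u ^ eEx α γ) c,
          integral_rpow (Or.inr ⟨ne_of_lt heα, hnotmem⟩)]
      have s3 : ((M-c) ^ (eEx α γ + 1) - (q'-c) ^ (eEx α γ + 1)) / (eEx α γ + 1)
          ≤ (q'-c) ^ (eEx α γ + 1) / (-(eEx α γ) - 1) := by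
        have h8 : (0:ℝ) ≤ (M-c) ^ (eEx α γ + 1) := Real.rpow_nonneg (by linarith) _
        have e : ((M-c) ^ (eEx α γ + 1) - (q'-c) ^ (eEx α γ + 1)) / (eEx α γ + 1)
            = ((q'-c) ^ (eEx α γ + 1) - (M-c) ^ (eEx α γ + 1)) / (-(eEx α γ) - 1) := by
          rw [div_eq_div_iff (by linarith) (by linarith)]; ring
        rw [e]
        exact (div_le_div_iff_of_pos_right hDα).mpr (by linarith)
      have s4 : (q'-c) ^ (eEx α γ + 1)
          = (2:ℝ)^(-(eEx α γ + 1)) * c ^ (eEx α γ + 1) := by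
        rw [hq'c2, half_rpow hc0.le]
      have s5 : c ^ (eEx α γ + 1) ≤ c ^ aExp α γ * (1-c) ^ aExp β γ :=
        cross_bound hc0 hc1.le hc1' (by linarith) (aExp_le_e1 α γ) (aExp_nonpos β γ)
      calc ∫ t in Set.Ioc q' M, h t
          ≤ (Qr β * K3 α) * ((q'-c) ^ (eEx α γ + 1) / (-(eEx α γ) - 1)) := by
            refine (s1.trans_eq s2).trans ?_
            exact mul_le_mul_of_nonneg_left s3 (by positivity)
        _ = (Qr β * K3 α * (2:ℝ)^(-(eEx α γ + 1)) / (-(eEx α γ) - 1))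
              * c ^ (eEx α γ + 1) := by rw [s4]; ring
        _ ≤ _ := mul_le_mul_of_nonneg_left s5 (by positivity)
  -- ### Region CC = Ioc M 1
  have boundCC : ∀ t ∈ Set.Ioc M 1, h t ≤ (Qr α * ((1-c)/2) ^ γ) * (1 - t) ^ β := by
    intro t ht
    have htM : M < t := ht.1
    have ht1 : t ≤ 1 := ht.2
    have e1 : t ^ α ≤ Qr α := rpow_le_Qr (by linarith) ht1
    have e2 : |t - c| ^ γ ≤ ((1-c)/2) ^ γ := by
      apply Real.rpow_le_rpow_of_nonpos (by positivity) ?_ hγ0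
      calc (1-c)/2 = M - c := by rw [hM]; ring
        _ ≤ t - c := by linarith
        _ ≤ |t - c| := le_abs_self _
    calc h t ≤ (Qr α * (1 - t) ^ β) * (((1-c)/2) ^ γ) := by
          apply mul_le_mul (mul_le_mul_of_nonneg_right e1 (Real.rpow_nonneg (by linarith) _)) e2
            (Real.rpow_nonneg (abs_nonneg _) _)
            (mul_nonneg hQα.le (Real.rpow_nonneg (by linarith) _))
      _ = (Qr α * ((1-c)/2) ^ γ) * (1 - t) ^ β := by ring
  have intCC : IntegrableOn h (Set.Ioc M 1) := by
    apply intOn_of_bound measurableSet_Ioc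
      ((refl_rpow_intOn hβ hM1.le).const_mul _) (hmeas _)
    intro t ht
    rw [Real.norm_eq_abs, abs_of_nonneg (hnn t (lt_trans (by positivity) ht.1) ht.2)]
    exact boundCC t ht
  have termCC : ∫ t in Set.Ioc M 1, h t
      ≤ (Qr α * (2:ℝ)^(-(β+γ+1)) / (β+1)) * (c ^ aExp α γ * (1-c) ^ aExp β γ) := by
    have s1 : ∫ t in Set.Ioc M 1, h t
        ≤ ∫ t in Set.Ioc M 1, (Qr α * ((1-c)/2) ^ γ) * (1 - t) ^ β :=
      setIntegral_mono_on intCC ((refl_rpow_intOn hβ hM1.le).const_mul _)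
        measurableSet_Ioc boundCC
    have s2 : ∫ t in Set.Ioc M 1, (Qr α * ((1-c)/2) ^ γ) * (1 - t) ^ β
        = (Qr α * ((1-c)/2) ^ γ) * (((1-c)/2) ^ (β+1) / (β+1)) := by
      rw [MeasureTheory.integral_const_mul, ← intervalIntegral.integral_of_le hM1.le]
      have e1 := intervalIntegral.integral_comp_sub_left (a := M) (b := 1)
        (fun s : ℝ => s ^ β) 1
      rw [e1, sub_self, h1M, integral_rpow (Or.inl hβ), Real.zero_rpow (by linarith), sub_zero]
    have e3 : ((1-c)/2:ℝ) ^ γ * ((1-c)/2:ℝ) ^ (β+1) = ((1-c)/2:ℝ) ^ (β+γ+1) := by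
      rw [← Real.rpow_add (by positivity)]; congr 1; ring
    have s3 : (Qr α * ((1-c)/2) ^ γ) * (((1-c)/2) ^ (β+1) / (β+1))
        = (Qr α * (2:ℝ)^(-(β+γ+1)) / (β+1)) * (1-c) ^ (β+γ+1) := by
      calc (Qr α * ((1-c)/2) ^ γ) * (((1-c)/2) ^ (β+1) / (β+1))
          = Qr α / (β+1) * (((1-c)/2) ^ γ * ((1-c)/2) ^ (β+1)) := by ring
        _ = Qr α / (β+1) * ((1-c)/2) ^ (β+γ+1) := by rw [e3]
        _ = Qr α / (β+1) * ((2:ℝ)^(-(β+γ+1)) * (1-c) ^ (β+γ+1)) := by rw [half_rpow hc1'.le]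
        _ = (Qr α * (2:ℝ)^(-(β+γ+1)) / (β+1)) * (1-c) ^ (β+γ+1) := by ring
    have s5 : (1-c) ^ (β+γ+1) ≤ (1-c) ^ aExp β γ * c ^ aExp α γ :=
      cross_bound hc1' (by linarith) hc0 hc1.le (aExp_le_p β γ) (aExp_nonpos α γ)
    calc ∫ t in Set.Ioc M 1, h t
        ≤ (Qr α * (2:ℝ)^(-(β+γ+1)) / (β+1)) * (1-c) ^ (β+γ+1) := by
          rw [← s3]; exact s1.trans_eq s2
      _ ≤ (Qr α * (2:ℝ)^(-(β+γ+1)) / (β+1)) * ((1-c) ^ aExp β γ * c ^ aExp α γ) :=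
          mul_le_mul_of_nonneg_left s5 (by positivity)
      _ = _ := by ring
  -- ### assembly
  have h0m : (0:ℝ) ≤ m := hm0.le
  have h0q : (0:ℝ) ≤ q := le_trans h0m hmq
  have h0c : (0:ℝ) ≤ c := hc0.le
  have h0q' : (0:ℝ) ≤ q' := le_trans h0c hcq'.le
  have h0M : (0:ℝ) ≤ M := le_trans h0q' hq'M
  have u2 : Set.Ioc (0:ℝ) m ∪ Set.Ioc m q = Set.Ioc (0:ℝ) q :=
    Set.Ioc_union_Ioc_eq_Ioc h0m hmq
  have u3 : Set.Ioc (0:ℝ) m ∪ Set.Ioc m q ∪ Set.Ioc q c = Set.Ioc (0:ℝ) c := by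
    rw [u2, Set.Ioc_union_Ioc_eq_Ioc h0q hqc.le]
  have u4 : Set.Ioc (0:ℝ) m ∪ Set.Ioc m q ∪ Set.Ioc q c ∪ Set.Ioc c q'
      = Set.Ioc (0:ℝ) q' := by
    rw [u3, Set.Ioc_union_Ioc_eq_Ioc h0c hcq'.le]
  have u5 : Set.Ioc (0:ℝ) m ∪ Set.Ioc m q ∪ Set.Ioc q c ∪ Set.Ioc c q' ∪ Set.Ioc q' M
      = Set.Ioc (0:ℝ) M := by
    rw [u4, Set.Ioc_union_Ioc_eq_Ioc h0q' hq'M]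
  have u6 : Set.Ioc (0:ℝ) m ∪ Set.Ioc m q ∪ Set.Ioc q c ∪ Set.Ioc c q' ∪ Set.Ioc q' M
      ∪ Set.Ioc M 1 = Set.Ioc (0:ℝ) 1 := by
    rw [u5, Set.Ioc_union_Ioc_eq_Ioc h0M hM1.le]
  have dj1 : Disjoint (Set.Ioc (0:ℝ) m) (Set.Ioc m q) := (Set.Ioc_disjoint_Ioc_of_le le_rfl)
  have dj2 : Disjoint (Set.Ioc (0:ℝ) m ∪ Set.Ioc m q) (Set.Ioc q c) := by
    rw [u2]; exact (Set.Ioc_disjoint_Ioc_of_le le_rfl)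
  have dj3 : Disjoint (Set.Ioc (0:ℝ) m ∪ Set.Ioc m q ∪ Set.Ioc q c) (Set.Ioc c q') := by
    rw [u3]; exact (Set.Ioc_disjoint_Ioc_of_le le_rfl)
  have dj4 : Disjoint (Set.Ioc (0:ℝ) m ∪ Set.Ioc m q ∪ Set.Ioc q c ∪ Set.Ioc c q')
      (Set.Ioc q' M) := by
    rw [u4]; exact (Set.Ioc_disjoint_Ioc_of_le le_rfl)
  have dj5 : Disjoint (Set.Ioc (0:ℝ) m ∪ Set.Ioc m q ∪ Set.Ioc q c ∪ Set.Ioc c q'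
      ∪ Set.Ioc q' M) (Set.Ioc M 1) := by
    rw [u5]; exact (Set.Ioc_disjoint_Ioc_of_le le_rfl)
  have i2 := intA.union intL1
  have i3 := i2.union intL2
  have i4 := i3.union intR2
  have i5 := i4.union intR1
  have intOn1 : IntegrableOn h (Set.Ioc (0:ℝ) 1) := by
    rw [← u6]; exact i5.union intCC
  constructor
  · exact intOn1.mono_set Set.Ioo_subset_Ioc_self
  · have hsplit : ∫ t in Set.Ioo (0:ℝ) 1, h t
        = (((((∫ t in Set.Ioc 0 m, h t) + ∫ t in Set.Ioc m q, h t) + ∫ t in Set.Ioc q c, h t)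
          + ∫ t in Set.Ioc c q', h t) + ∫ t in Set.Ioc q' M, h t)
          + ∫ t in Set.Ioc M 1, h t := by
      rw [← MeasureTheory.integral_Ioc_eq_integral_Ioo, ← u6,
        MeasureTheory.setIntegral_union dj5 measurableSet_Ioc i5 intCC,
        MeasureTheory.setIntegral_union dj4 measurableSet_Ioc i4 intR1,
        MeasureTheory.setIntegral_union dj3 measurableSet_Ioc i3 intR2,
        MeasureTheory.setIntegral_union dj2 measurableSet_Ioc i2 intL2,
        MeasureTheory.setIntegral_union dj1 measurableSet_Ioc intA intL1]
    rw [hsplit]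
    have expand : Cin α β γ * (c ^ aExp α γ * (1-c) ^ aExp β γ)
        = (Qr β * (2:ℝ)^(-(α+γ+1)) / (α+1)) * (c ^ aExp α γ * (1-c) ^ aExp β γ)
        + (Qr α * K3 β * (2:ℝ)^(-(eEx β γ + 1)) / (-(eEx β γ) - 1))
            * (c ^ aExp α γ * (1-c) ^ aExp β γ)
        + (Kc α * Kc β / (γ+1)) * (c ^ aExp α γ * (1-c) ^ aExp β γ)
        + (Kc α * Kc β / (γ+1)) * (c ^ aExp α γ * (1-c) ^ aExp β γ)
        + (Qr β * K3 α * (2:ℝ)^(-(eEx α γ + 1)) / (-(eEx α γ) - 1))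
            * (c ^ aExp α γ * (1-c) ^ aExp β γ)
        + (Qr α * (2:ℝ)^(-(β+γ+1)) / (β+1)) * (c ^ aExp α γ * (1-c) ^ aExp β γ) := by
      simp only [Cin]; ring
    rw [expand]
    exact add_le_add (add_le_add (add_le_add (add_le_add
      (add_le_add termA termL1) termL2) termR2) termR1) termCC
theorem selberg_aux (α β γ : ℝ) (hα : -1 < α) (hβ : -1 < β) (hγ : -1 < γ) (hγ0 : γ ≤ 0)
    (h₁ : -2 < 2 * α + γ) (h₂ : -2 < 2 * β + γ) :
    IntegrableOn
      (fun p : ℝ × ℝ =>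
        p.1 ^ α * (1 - p.1) ^ β * p.2 ^ α * (1 - p.2) ^ β * |p.1 - p.2| ^ γ)
      (Set.Ioo (0 : ℝ) 1 ×ˢ Set.Ioo (0 : ℝ) 1) := by
  set I : Set ℝ := Set.Ioo 0 1 with hI
  set ν : Measure ℝ := volume.restrict I with hν
  set F : ℝ × ℝ → ℝ :=
    fun p => p.1 ^ α * (1 - p.1) ^ β * p.2 ^ α * (1 - p.2) ^ β * |p.1 - p.2| ^ γ with hF
  have hFmeas : Measurable F := by fun_prop
  have hFm : AEStronglyMeasurable F (ν.prod ν) := hFmeas.aestronglyMeasurable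
  rw [IntegrableOn, Measure.volume_eq_prod, ← Measure.prod_restrict]
  refine (integrable_prod_iff hFm).2 ⟨?_, ?_⟩
  · rw [hν, ae_restrict_iff' measurableSet_Ioo]
    refine Filter.Eventually.of_forall fun t1 ht1 => ?_
    have key := (inner_key hα hβ hγ hγ0 ht1.1 ht1.2).1
    have e : (fun t2 => F (t1, t2))
        = fun t2 => (t1 ^ α * (1 - t1) ^ β) * (t2 ^ α * (1 - t2) ^ β * |t2 - t1| ^ γ) := by
      funext t2
      simp only [hF]
      rw [abs_sub_comm]
      ring
    rw [e]
    exact key.const_mul _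
  · have hαa : -1 < α + aExp α γ := aExp_bound hα hγ h₁
    have hβb : -1 < β + aExp β γ := aExp_bound hβ hγ h₂
    apply Integrable.mono'
      (g := fun t : ℝ => Cin α β γ * (t ^ (α + aExp α γ) * (1 - t) ^ (β + aExp β γ)))
      ((beta_intOn hαa hβb).const_mul (Cin α β γ)) (hFm.norm.integral_prod_right')
    rw [hν, ae_restrict_iff' measurableSet_Ioo]
    refine Filter.Eventually.of_forall fun t1 ht1 => ?_
    have ht10 : (0:ℝ) < t1 := ht1.1
    have ht11 : t1 < 1 := ht1.2
    have key := (inner_key hα hβ hγ hγ0 ht10 ht11).2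
    have hg0 : 0 ≤ t1 ^ α * (1 - t1) ^ β :=
      mul_nonneg (Real.rpow_nonneg ht10.le _) (Real.rpow_nonneg (by linarith) _)
    rw [Real.norm_eq_abs, abs_of_nonneg (integral_nonneg fun t2 => norm_nonneg _)]
    have e1 : ∫ t2, ‖F (t1, t2)‖ ∂ν
        = ∫ t2 in I, (t1 ^ α * (1 - t1) ^ β) * (t2 ^ α * (1 - t2) ^ β * |t2 - t1| ^ γ) := by
      rw [hν]
      apply setIntegral_congr_fun measurableSet_Ioo
      intro t2 ht2
      show ‖F (t1, t2)‖ = t1 ^ α * (1 - t1) ^ β * (t2 ^ α * (1 - t2) ^ β * |t2 - t1| ^ γ)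
      have hnn : 0 ≤ F (t1, t2) := by
        simp only [hF]
        have h1 : (0:ℝ) ≤ |t1 - t2| := abs_nonneg _
        have h2 : (0:ℝ) < 1 - t2 := by linarith [ht2.2]
        have h3 : (0:ℝ) < t2 := ht2.1
        positivity
      rw [Real.norm_eq_abs, abs_of_nonneg hnn]
      simp only [hF]
      rw [abs_sub_comm]
      ring
    rw [e1, MeasureTheory.integral_const_mul]
    calc (t1 ^ α * (1 - t1) ^ β)
          * ∫ t2 in I, t2 ^ α * (1 - t2) ^ β * |t2 - t1| ^ γ
        ≤ (t1 ^ α * (1 - t1) ^ β)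
            * (Cin α β γ * (t1 ^ aExp α γ * (1 - t1) ^ aExp β γ)) :=
          mul_le_mul_of_nonneg_left key hg0
      _ = Cin α β γ * (t1 ^ (α + aExp α γ) * (1 - t1) ^ (β + aExp β γ)) := by
          rw [Real.rpow_add ht10, Real.rpow_add (by linarith : (0:ℝ) < 1 - t1)]
          ring

end SelbergAux

/-- Absolute convergence of Selberg's double integral `J₂(α, β; γ)` in the stated
parameter range. -/
theorem selberg_integrand_integrable (α β γ : ℝ)
    (hα : -1 < α) (hβ : -1 < β) (hγ : -1 < γ)
    (h₁ : -2 < 2 * α + γ) (h₂ : -2 < 2 * β + γ) :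
    IntegrableOn
      (fun p : ℝ × ℝ =>
        p.1 ^ α * (1 - p.1) ^ β * p.2 ^ α * (1 - p.2) ^ β * |p.1 - p.2| ^ γ)
      (Set.Ioo (0 : ℝ) 1 ×ˢ Set.Ioo (0 : ℝ) 1) := by
  rcases le_total γ 0 with hγ0 | hγ0
  · exact selberg_aux α β γ hα hβ hγ hγ0 h₁ h₂
  · have base := selberg_aux α β 0 hα hβ (by norm_num) le_rfl (by linarith) (by linarith)
    apply base.mono'
      ((by fun_prop : Measurable fun p : ℝ × ℝ =>
        p.1 ^ α * (1 - p.1) ^ β * p.2 ^ α * (1 - p.2) ^ β * |p.1 - p.2| ^ γ).aestronglyMeasurable)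
    rw [ae_restrict_iff' (measurableSet_Ioo.prod measurableSet_Ioo)]
    refine Filter.Eventually.of_forall fun p hp => ?_
    obtain ⟨hp1, hp2⟩ := hp
    simp only [Set.mem_Ioo] at hp1 hp2
    have hP : 0 ≤ p.1 ^ α * (1 - p.1) ^ β * p.2 ^ α * (1 - p.2) ^ β := by
      have h1 : (0:ℝ) < p.1 := hp1.1
      have h2 : (0:ℝ) < 1 - p.1 := by linarith [hp1.2]
      have h3 : (0:ℝ) < p.2 := hp2.1
      have h4 : (0:ℝ) < 1 - p.2 := by linarith [hp2.2]
      positivity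
    have habs : |p.1 - p.2| ≤ 1 := by
      rw [abs_sub_le_iff]
      constructor <;> linarith [hp1.1, hp1.2, hp2.1, hp2.2]
    have hfac : |p.1 - p.2| ^ γ ≤ |p.1 - p.2| ^ (0:ℝ) := by
      rw [Real.rpow_zero]
      exact Real.rpow_le_one (abs_nonneg _) habs hγ0
    have hnn : 0 ≤ p.1 ^ α * (1 - p.1) ^ β * p.2 ^ α * (1 - p.2) ^ β * |p.1 - p.2| ^ γ :=
      mul_nonneg hP (Real.rpow_nonneg (abs_nonneg _) _)
    rw [Real.norm_eq_abs, abs_of_nonneg hnn]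
    exact mul_le_mul_of_nonneg_left hfac hP
end

section
/- Let a, b, c ∈ ℂ with Re(b) > −1 and Re(a + b + c) < −1. For z ∈ ℂ ∖ [1, ∞) define F(z) = ∫₁^∞ t^a·(t−1)^b·(t−z)^c dt, where t^a = exp(a·log t) and (t−1)^b = exp(b·log(t−1)) for real t > 1, and (t−z)^c = exp(c·Log(t−z)) with Log the principal branch of the logarithm (well-defined since t − z ∉ (−∞, 0] for t > 1 and z ∉ [1, ∞)). Then this integral converges absolutely for every z ∈ ℂ ∖ [1, ∞), F is holomorphic on ℂ ∖ [1, ∞), and F satisfies the hypergeometric differential equation z(z−1)·F″(z) − ((b+c)·z + (a+c)·(z−1))·F′(z) + c·(1 + a + b + c)·F(z) = 0 on ℂ ∖ [1, ∞). -/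
set_option maxHeartbeats 1000000
open MeasureTheory Set Complex Metric Filter

private lemma norm_cpow_le_of_bounds {e : ℂ} {δ R : ℝ} (hδ0 : 0 < δ) (hδ1 : δ ≤ 1) (hR : 1 ≤ R)
    {z : ℂ} (hzR : ‖z‖ ≤ R) {t : ℝ} (ht : 1 ≤ t)
    (hd : δ ≤ ‖(t : ℂ) - z‖) :
    ‖((t : ℂ) - z) ^ e‖ ≤
      (Real.exp (Real.pi * |e.im|) * (2 * R / δ * (1 + R)) ^ |e.re|) * t ^ e.re := by
  have ht0 : (0:ℝ) < t := lt_of_lt_of_le one_pos ht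
  have hx0 : (t : ℂ) - z ≠ 0 := by
    intro h
    rw [h] at hd; simp only [norm_zero] at hd; linarith
  have habs : ‖(t:ℂ) - z‖ ^ e.re ≤ (2 * R / δ * (1 + R)) ^ |e.re| * t ^ e.re := by
    have hR0 : (0:ℝ) < R := lt_of_lt_of_le one_pos hR
    have hq1 : (1:ℝ) ≤ 2 * R / δ := by
      rw [le_div_iff₀ hδ0]; nlinarith
    have hup : ‖(t:ℂ) - z‖ ≤ (1 + R) * t := by
      calc ‖(t:ℂ) - z‖ ≤ ‖(t:ℂ)‖ + ‖z‖ := by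
            simpa using norm_sub_le (t:ℂ) z
        _ ≤ t + R := by
            rw [Complex.norm_real, Real.norm_eq_abs, abs_of_pos ht0]; linarith
        _ ≤ (1 + R) * t := by nlinarith
    rcases le_or_gt 0 e.re with h0 | h0
    · rw [_root_.abs_of_nonneg h0]
      calc ‖(t:ℂ) - z‖ ^ e.re ≤ ((1 + R) * t) ^ e.re :=
            Real.rpow_le_rpow (norm_nonneg _) hup h0
        _ = (1 + R) ^ e.re * t ^ e.re := Real.mul_rpow (by linarith) ht0.le
        _ ≤ (2 * R / δ * (1 + R)) ^ e.re * t ^ e.re := by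
            gcongr
            nlinarith [hq1]
    · have hm0 : (0:ℝ) < δ / (2 * R) := by positivity
      have hlow : δ / (2 * R) * t ≤ ‖(t:ℂ) - z‖ := by
        rcases le_or_gt t (2 * R) with h2 | h2
        · calc δ / (2 * R) * t ≤ δ / (2 * R) * (2 * R) := by
                exact mul_le_mul_of_nonneg_left h2 hm0.le
            _ = δ := by field_simp
            _ ≤ _ := hd
        · have : t - R ≤ ‖(t:ℂ) - z‖ := by
            have := norm_sub_norm_le ((t:ℂ) : ℂ) z
            rw [Complex.norm_real, Real.norm_eq_abs, abs_of_pos ht0] at this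
            linarith
          have hmhalf : δ / (2 * R) ≤ 1 / 2 := by
            rw [div_le_div_iff₀ (by positivity) two_pos]; nlinarith
          nlinarith
      calc ‖(t:ℂ) - z‖ ^ e.re ≤ (δ / (2 * R) * t) ^ e.re :=
            Real.rpow_le_rpow_of_nonpos (by positivity) hlow h0.le
        _ = (δ / (2 * R)) ^ e.re * t ^ e.re := Real.mul_rpow hm0.le ht0.le
        _ ≤ (2 * R / δ * (1 + R)) ^ |e.re| * t ^ e.re := by
            gcongr ?_ * _
            have h1 : δ / (2 * R) = (2 * R / δ)⁻¹ := by
              rw [inv_div]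
            rw [h1, Real.inv_rpow (by positivity), ← Real.rpow_neg (by positivity),
              abs_of_neg h0]
            exact Real.rpow_le_rpow (by positivity)
              (by nlinarith [mul_le_mul_of_nonneg_right hq1 hR0.le]) (by linarith)
  calc ‖((t : ℂ) - z) ^ e‖ = ‖(t:ℂ) - z‖ ^ e.re /
        Real.exp (Complex.arg ((t:ℂ) - z) * e.im) := by
        rw [Complex.norm_cpow_of_ne_zero hx0]
    _ ≤ ‖(t:ℂ) - z‖ ^ e.re / Real.exp (-(Real.pi * |e.im|)) := by
        apply div_le_div_of_nonneg_left (by positivity) (Real.exp_pos _)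
        apply Real.exp_le_exp.2
        have h1 : |Complex.arg ((t:ℂ) - z) * e.im| ≤ Real.pi * |e.im| := by
          rw [abs_mul]
          exact mul_le_mul_of_nonneg_right (Complex.abs_arg_le_pi _) (abs_nonneg _)
        linarith [neg_abs_le (Complex.arg ((t:ℂ) - z) * e.im)]
    _ = ‖(t:ℂ) - z‖ ^ e.re * Real.exp (Real.pi * |e.im|) := by
        rw [Real.exp_neg, div_eq_mul_inv, inv_inv]
    _ ≤ ((2 * R / δ * (1 + R)) ^ |e.re| * t ^ e.re) * Real.exp (Real.pi * |e.im|) :=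
        mul_le_mul_of_nonneg_right habs (Real.exp_pos _).le
    _ = _ := by ring

private lemma contOn_majorant {p q : ℝ} :
    ContinuousOn (fun t : ℝ => t ^ p * (t - 1) ^ q) (Set.Ioi 1) := by
  apply ContinuousOn.mul
  · intro x hx
    exact (Real.continuousAt_rpow_const x p (Or.inl (by simp at hx; positivity))).continuousWithinAt
  · intro x hx
    simp only [Set.mem_Ioi] at hx
    exact (((continuous_id.sub continuous_const).continuousAt).rpow_const
      (Or.inl (by simp; intro h; nlinarith))).continuousWithinAt

private lemma integrableOn_majorant {p q : ℝ} (hq : -1 < q) (hpq : p + q < -1) :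
    IntegrableOn (fun t : ℝ => t ^ p * (t - 1) ^ q) (Set.Ioi 1) := by
  have hcont := contOn_majorant (p := p) (q := q)
  rw [show Set.Ioi (1:ℝ) = Set.Ioc 1 2 ∪ Set.Ioi 2 from
    (Set.Ioc_union_Ioi_eq_Ioi (by norm_num)).symm]
  apply IntegrableOn.union
  · have hi : IntegrableOn (fun t : ℝ => (t - 1) ^ q) (Set.Ioc 1 2) := by
      have h2 := (intervalIntegral.intervalIntegrable_rpow' (a := 0) (b := 1) hq).comp_sub_right 1
      norm_num at h2; simpa using h2.1
    apply Integrable.mono' (hi.const_mul ((2:ℝ) ^ |p|))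
      ((hcont.mono Set.Ioc_subset_Ioi_self).aestronglyMeasurable measurableSet_Ioc)
    apply (ae_restrict_iff' measurableSet_Ioc).2
    filter_upwards with t ht
    obtain ⟨ht1, ht2⟩ := ht
    have ht0 : (0:ℝ) < t := by linarith
    have htp : t ^ p ≤ (2:ℝ) ^ |p| := by
      rcases le_or_gt 0 p with h | h
      · rw [_root_.abs_of_nonneg h]; exact Real.rpow_le_rpow ht0.le ht2 h
      · rw [abs_of_neg h]
        calc t ^ p ≤ 1 := Real.rpow_le_one_of_one_le_of_nonpos ht1.le h.le
          _ ≤ (2:ℝ) ^ (-p) := Real.one_le_rpow one_le_two (by linarith)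
    rw [Real.norm_eq_abs, abs_mul, _root_.abs_of_nonneg (Real.rpow_nonneg ht0.le _),
      _root_.abs_of_nonneg (Real.rpow_nonneg (by linarith) _)]
    exact mul_le_mul_of_nonneg_right htp (Real.rpow_nonneg (by linarith) _)
  · set C := max 1 ((2:ℝ) ^ (-q)) with hC
    have hC1 : (1:ℝ) ≤ C := le_max_left _ _
    apply Integrable.mono' (((integrableOn_Ioi_rpow_of_lt hpq two_pos).const_mul C))
      ((hcont.mono (fun x hx => by simp at hx ⊢; linarith)).aestronglyMeasurable
        measurableSet_Ioi)
    apply (ae_restrict_iff' measurableSet_Ioi).2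
    filter_upwards with t ht
    simp only [Set.mem_Ioi] at ht
    have ht0 : (0:ℝ) < t := by linarith
    have ht1 : (1:ℝ) < t := by linarith
    have key : (t - 1) ^ q ≤ C * t ^ q := by
      rcases le_or_gt 0 q with h | h
      · calc (t - 1) ^ q ≤ t ^ q := Real.rpow_le_rpow (by linarith) (by linarith) h
          _ ≤ C * t ^ q := le_mul_of_one_le_left (Real.rpow_nonneg ht0.le _) hC1
      · calc (t - 1) ^ q ≤ (t / 2) ^ q :=
              Real.rpow_le_rpow_of_nonpos (by linarith) (by linarith) h.le
          _ = t ^ q * (2:ℝ) ^ (-q) := by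
              rw [div_eq_mul_inv, Real.mul_rpow ht0.le (by norm_num),
                Real.inv_rpow (by norm_num), ← Real.rpow_neg (by norm_num)]
          _ ≤ C * t ^ q := by
              rw [mul_comm]
              exact mul_le_mul_of_nonneg_right (le_max_right _ _) (Real.rpow_nonneg ht0.le _)
    rw [Real.norm_eq_abs, abs_mul, _root_.abs_of_nonneg (Real.rpow_nonneg ht0.le _),
      _root_.abs_of_nonneg (Real.rpow_nonneg (by linarith) _)]
    calc t ^ p * (t - 1) ^ q ≤ t ^ p * (C * t ^ q) :=
          mul_le_mul_of_nonneg_left key (Real.rpow_nonneg ht0.le _)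
      _ = C * t ^ (p + q) := by rw [Real.rpow_add ht0]; ring

private lemma isClosed_S : IsClosed {w : ℂ | w.im = 0 ∧ 1 ≤ w.re} :=
  ((isClosed_eq Complex.continuous_im continuous_const).inter
    (isClosed_le continuous_const Complex.continuous_re))

private lemma one_mem_S : (1:ℂ) ∈ {w : ℂ | w.im = 0 ∧ 1 ≤ w.re} := by simp

private lemma mem_S_of_real {t : ℝ} (ht : 1 ≤ t) : (t:ℂ) ∈ {w : ℂ | w.im = 0 ∧ 1 ≤ w.re} := by
  simp [ht]

private lemma slit_mem {z : ℂ} (hz : z ∉ {w : ℂ | w.im = 0 ∧ 1 ≤ w.re}) {t : ℝ} (ht : 1 ≤ t) :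
    ((t:ℂ) - z) ∈ Complex.slitPlane := by
  rw [Complex.mem_slitPlane_iff]
  by_cases him : z.im = 0
  · left
    simp only [Set.mem_setOf_eq, not_and] at hz
    have := hz him
    simp only [Complex.sub_re, Complex.ofReal_re]
    linarith [lt_of_not_ge this]
  · right; simp [Complex.sub_im, him]

private lemma norm_integrand_eq (a b e : ℂ) {z : ℂ} {t : ℝ} (ht : 1 < t) :
    ‖(t:ℂ)^a * ((t:ℂ)-1)^b * ((t:ℂ)-z)^e‖
      = t ^ a.re * (t-1) ^ b.re * ‖((t:ℂ)-z)^e‖ := by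
  have ht0 : (0:ℝ) < t := by linarith
  rw [norm_mul, norm_mul,
    Complex.norm_cpow_eq_rpow_re_of_pos ht0]
  congr 2
  rw [show ((t:ℂ) - 1) = ((t - 1 : ℝ) : ℂ) by push_cast; ring,
    Complex.norm_cpow_eq_rpow_re_of_pos (by linarith)]

private lemma norm_integrand_le (a b e : ℂ) {δ R : ℝ} (hδ0 : 0 < δ) (hδ1 : δ ≤ 1) (hR : 1 ≤ R)
    {z : ℂ} (hzR : ‖z‖ ≤ R) {t : ℝ} (ht : 1 < t)
    (hd : δ ≤ ‖(t : ℂ) - z‖) :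
    ‖(t:ℂ)^a * ((t:ℂ)-1)^b * ((t:ℂ)-z)^e‖ ≤
      (Real.exp (Real.pi * |e.im|) * (2 * R / δ * (1 + R)) ^ |e.re|) *
        (t ^ (a.re + e.re) * (t-1) ^ b.re) := by
  have ht0 : (0:ℝ) < t := by linarith
  rw [norm_integrand_eq a b e ht]
  calc t ^ a.re * (t-1) ^ b.re * ‖((t:ℂ)-z)^e‖
      ≤ t ^ a.re * (t-1) ^ b.re *
        ((Real.exp (Real.pi * |e.im|) * (2 * R / δ * (1 + R)) ^ |e.re|) * t ^ e.re) := by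
        apply mul_le_mul_of_nonneg_left (norm_cpow_le_of_bounds hδ0 hδ1 hR hzR ht.le hd)
        exact mul_nonneg (Real.rpow_nonneg ht0.le _) (Real.rpow_nonneg (by linarith) _)
    _ = _ := by rw [Real.rpow_add ht0]; ring

private lemma contOn_integrand (a b e : ℂ) {z : ℂ}
    (hz : z ∉ {w : ℂ | w.im = 0 ∧ 1 ≤ w.re}) :
    ContinuousOn (fun t : ℝ => (t:ℂ)^a * ((t:ℂ)-1)^b * ((t:ℂ)-z)^e) (Set.Ioi 1) := by
  intro t ht
  simp only [Set.mem_Ioi] at ht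
  have h1 : ContinuousAt (fun t : ℝ => ((t:ℂ))^a) t :=
    (Complex.continuous_ofReal.continuousAt).cpow continuousAt_const
      (by rw [Complex.mem_slitPlane_iff]; left; simpa using (by linarith : (0:ℝ) < t))
  have h2 : ContinuousAt (fun t : ℝ => ((t:ℂ)-1)^b) t :=
    ((Complex.continuous_ofReal.continuousAt).sub continuousAt_const).cpow continuousAt_const
      (by rw [Complex.mem_slitPlane_iff]; left; simp [Complex.sub_re]; linarith)
  have h3 : ContinuousAt (fun t : ℝ => ((t:ℂ)-z)^e) t :=
    ((Complex.continuous_ofReal.continuousAt).sub continuousAt_const).cpow continuousAt_const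
      (slit_mem hz ht.le)
  exact ((h1.mul h2).mul h3).continuousWithinAt

private lemma exists_ball_facts {z₀ : ℂ} (hz : z₀ ∉ {w : ℂ | w.im = 0 ∧ 1 ≤ w.re}) :
    ∃ ε : ℝ, 0 < ε ∧ ∃ δ R : ℝ, 0 < δ ∧ δ ≤ 1 ∧ 1 ≤ R ∧
      ∀ z ∈ Metric.ball z₀ ε, z ∉ {w : ℂ | w.im = 0 ∧ 1 ≤ w.re} ∧ ‖z‖ ≤ R ∧
        ∀ t : ℝ, 1 ≤ t → δ ≤ ‖(t:ℂ) - z‖ := by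
  set S := {w : ℂ | w.im = 0 ∧ 1 ≤ w.re}
  have hSne : S.Nonempty := ⟨1, one_mem_S⟩
  have hd0 : 0 < Metric.infDist z₀ S := (isClosed_S.notMem_iff_infDist_pos hSne).1 hz
  set d := Metric.infDist z₀ S
  refine ⟨d/2, by linarith, min (d/2) 1, max (‖z₀‖ + d) 1,
    lt_min (by linarith) one_pos, min_le_right _ _, le_max_right _ _, fun z hzb => ?_⟩
  have hinf : d/2 ≤ Metric.infDist z S := by
    have := Metric.infDist_le_infDist_add_dist (x := z₀) (y := z) (s := S)
    rw [Metric.mem_ball, dist_comm] at hzb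
    linarith
  have hznot : z ∉ S := by
    intro hmem
    have : Metric.infDist z S = 0 := by
      rw [Metric.infDist_zero_of_mem hmem]
    linarith
  refine ⟨hznot, ?_, fun t ht => ?_⟩
  · have := norm_sub_le z z₀
    have h2 : ‖z - z₀‖ < d/2 := by
      rw [Metric.mem_ball, Complex.dist_eq] at hzb; exact hzb
    have h4 : ‖z‖ ≤ ‖z₀‖ + ‖z - z₀‖ := by
      have := norm_add_le z₀ (z - z₀)
      simpa [add_sub_cancel] using this
    calc ‖z‖ ≤ ‖z₀‖ + d/2 := by linarith
      _ ≤ ‖z₀‖ + d := by linarith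
      _ ≤ _ := le_max_left _ _
  · have hmem : ((t:ℂ)) ∈ S := mem_S_of_real ht
    have h4 : Metric.infDist z S ≤ dist z ((t:ℂ)) := Metric.infDist_le_dist_of_mem hmem
    rw [Complex.dist_eq] at h4
    rw [norm_sub_rev]
    calc min (d/2) 1 ≤ d/2 := min_le_left _ _
      _ ≤ _ := le_trans hinf h4
private lemma integrableOn_integrand (a b e : ℂ) (hb : -1 < b.re)
    (h : a.re + b.re + e.re < -1)
    {z : ℂ} (hz : z ∉ {w : ℂ | w.im = 0 ∧ 1 ≤ w.re}) :
    IntegrableOn (fun t : ℝ => (t:ℂ)^a * ((t:ℂ)-1)^b * ((t:ℂ)-z)^e) (Set.Ioi 1) := by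
  obtain ⟨ε, hε, δ, R, hδ0, hδ1, hR, hball⟩ := exists_ball_facts hz
  obtain ⟨-, hzR, hdist⟩ := hball z (Metric.mem_ball_self hε)
  apply Integrable.mono'
    ((integrableOn_majorant (p := a.re + e.re) hb (by linarith)).const_mul
      (Real.exp (Real.pi * |e.im|) * (2 * R / δ * (1 + R)) ^ |e.re|))
    ((contOn_integrand a b e hz).aestronglyMeasurable measurableSet_Ioi)
  apply (ae_restrict_iff' measurableSet_Ioi).2
  filter_upwards with t ht
  simp only [Set.mem_Ioi] at ht
  exact norm_integrand_le a b e hδ0 hδ1 hR hzR ht (hdist t ht.le)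

private lemma hasDerivAt_integral (a b e : ℂ) (hb : -1 < b.re)
    (h : a.re + b.re + e.re < -1)
    {z₀ : ℂ} (hz : z₀ ∉ {w : ℂ | w.im = 0 ∧ 1 ≤ w.re}) :
    HasDerivAt (fun z => ∫ t in Set.Ioi (1:ℝ), (t:ℂ)^a * ((t:ℂ)-1)^b * ((t:ℂ)-z)^e)
      (∫ t in Set.Ioi (1:ℝ), (t:ℂ)^a * ((t:ℂ)-1)^b * (e * ((t:ℂ)-z₀)^(e-1) * (-1))) z₀ := by
  obtain ⟨ε, hε, δ, R, hδ0, hδ1, hR, hball⟩ := exists_ball_facts hz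
  obtain ⟨-, hzR, -⟩ := hball z₀ (Metric.mem_ball_self hε)
  have heq : ∀ z : ℂ, (fun t : ℝ => (t:ℂ)^a * ((t:ℂ)-1)^b * (e * ((t:ℂ)-z)^(e-1) * (-1)))
      = fun t : ℝ => (-e) * ((t:ℂ)^a * ((t:ℂ)-1)^b * ((t:ℂ)-z)^(e-1)) := by
    intro z; funext t; ring
  have key := hasDerivAt_integral_of_dominated_loc_of_deriv_le
    (F := fun z (t : ℝ) => (t:ℂ)^a * ((t:ℂ)-1)^b * ((t:ℂ)-z)^e)
    (F' := fun z (t : ℝ) => (t:ℂ)^a * ((t:ℂ)-1)^b * (e * ((t:ℂ)-z)^(e-1) * (-1)))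
    (x₀ := z₀) (s := Metric.ball z₀ ε)
    (bound := fun t => ‖e‖ *
      ((Real.exp (Real.pi * |(e-1).im|) * (2 * R / δ * (1 + R)) ^ |(e-1).re|) *
        (t ^ (a.re + (e-1).re) * (t-1) ^ b.re)))
    (μ := volume.restrict (Set.Ioi 1)) (Metric.ball_mem_nhds z₀ hε) ?_ ?_ ?_ ?_ ?_ ?_
  · exact key.2
  · filter_upwards [Metric.ball_mem_nhds z₀ hε] with z hzb
    exact (contOn_integrand a b e (hball z hzb).1).aestronglyMeasurable measurableSet_Ioi
  · exact integrableOn_integrand a b e hb h hz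
  · show AEStronglyMeasurable
      (fun t : ℝ => (t:ℂ)^a * ((t:ℂ)-1)^b * (e * ((t:ℂ)-z₀)^(e-1) * (-1))) _
    rw [heq z₀]
    exact ((contOn_integrand a b (e-1) hz).aestronglyMeasurable
      measurableSet_Ioi).const_mul (-e)
  · apply (ae_restrict_iff' measurableSet_Ioi).2
    filter_upwards with t ht
    intro z hzb
    simp only [Set.mem_Ioi] at ht
    obtain ⟨hz', hzR', hdist'⟩ := hball z hzb
    have : (t:ℂ)^a * ((t:ℂ)-1)^b * (e * ((t:ℂ)-z)^(e-1) * (-1))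
        = (-e) * ((t:ℂ)^a * ((t:ℂ)-1)^b * ((t:ℂ)-z)^(e-1)) := by ring
    rw [this, norm_mul, norm_neg]
    have hb1 := norm_integrand_le a b (e-1) hδ0 hδ1 hR hzR' ht (hdist' t ht.le)
    exact mul_le_mul_of_nonneg_left hb1 (norm_nonneg e)
  · have hmaj : IntegrableOn (fun t : ℝ => t ^ (a.re + (e-1).re) * (t-1) ^ b.re)
        (Set.Ioi 1) := by
      apply integrableOn_majorant hb
      have : (e-1).re = e.re - 1 := by simp
      rw [this]; linarith
    exact (hmaj.const_mul _).const_mul _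
  · apply (ae_restrict_iff' measurableSet_Ioi).2
    filter_upwards with t ht
    intro z hzb
    simp only [Set.mem_Ioi] at ht
    have hslit : ((t:ℂ) - z) ∈ Complex.slitPlane := slit_mem (hball z hzb).1 ht.le
    have hd : HasDerivAt (fun z : ℂ => ((t:ℂ) - z)) (-1) z := by
      simpa using (hasDerivAt_id z).const_sub (t:ℂ)
    exact (hd.cpow_const hslit).const_mul _
private lemma integral_deriv_zero (a b c : ℂ) (hb : -1 < b.re) (habc : (a+b+c).re < -1)
    {z : ℂ} (hz : z ∉ {w : ℂ | w.im = 0 ∧ 1 ≤ w.re}) :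
    (∫ t in Set.Ioi (1:ℝ),
      ((a+1) * ((t:ℂ)^a * ((t:ℂ)-1)^(b+1) * ((t:ℂ)-z)^(c-1))
       + (b+1) * ((t:ℂ)^(a+1) * ((t:ℂ)-1)^b * ((t:ℂ)-z)^(c-1))
       + (c-1) * ((t:ℂ)^(a+1) * ((t:ℂ)-1)^(b+1) * ((t:ℂ)-z)^(c-2)))) = 0 := by
  set g : ℝ → ℂ := fun t => (t:ℂ)^(a+1) * ((t:ℂ)-1)^(b+1) * ((t:ℂ)-z)^(c-1) with hg
  have hb1 : (0:ℝ) < (b+1).re := by simp; linarith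
  have hcont : ContinuousWithinAt g (Set.Ici 1) 1 := by
    apply ContinuousAt.continuousWithinAt
    have c1 : ContinuousAt (fun t : ℝ => ((t:ℂ))^(a+1)) 1 :=
      (Complex.continuous_ofReal.continuousAt).cpow continuousAt_const (by
        rw [Complex.mem_slitPlane_iff]; left; norm_num)
    have c2 : ContinuousAt (fun t : ℝ => ((t:ℂ)-1)^(b+1)) 1 := by
      have hc := Complex.continuousAt_cpow_zero_of_re_pos hb1
      have hpair : ContinuousAt (fun t : ℝ => (((t:ℂ)-1), (b+1))) 1 :=
        ((Complex.continuous_ofReal.continuousAt).sub continuousAt_const).prodMk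
          continuousAt_const
      have hval : (fun t : ℝ => (((t:ℂ)-1), (b+1))) 1 = ((0:ℂ), b+1) := by norm_num
      rw [← hval] at hc
      exact ContinuousAt.comp (f := fun t : ℝ => (((t:ℂ)-1), (b+1))) (x := (1:ℝ)) hc hpair
    have c3 : ContinuousAt (fun t : ℝ => ((t:ℂ)-z)^(c-1)) 1 :=
      ((Complex.continuous_ofReal.continuousAt).sub continuousAt_const).cpow
        continuousAt_const (by simpa using slit_mem hz (le_refl 1))
    exact (c1.mul c2).mul c3
  have hderiv : ∀ t ∈ Set.Ioi (1:ℝ), HasDerivAt g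
      ((a+1) * ((t:ℂ)^a * ((t:ℂ)-1)^(b+1) * ((t:ℂ)-z)^(c-1))
       + (b+1) * ((t:ℂ)^(a+1) * ((t:ℂ)-1)^b * ((t:ℂ)-z)^(c-1))
       + (c-1) * ((t:ℂ)^(a+1) * ((t:ℂ)-1)^(b+1) * ((t:ℂ)-z)^(c-2))) t := by
    intro t ht
    simp only [Set.mem_Ioi] at ht
    have hslit1 : ((t:ℂ)) ∈ Complex.slitPlane := by
      rw [Complex.mem_slitPlane_iff]; left; simpa using (by linarith : (0:ℝ) < t)
    have hslit2 : ((t:ℂ) - 1) ∈ Complex.slitPlane := by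
      rw [Complex.mem_slitPlane_iff]; left; simp [Complex.sub_re]; linarith
    have hslit3 : ((t:ℂ) - z) ∈ Complex.slitPlane := slit_mem hz ht.le
    have h1 : HasDerivAt (fun s : ℝ => ((s:ℂ))^(a+1)) ((a+1) * (t:ℂ)^a) t := by
      have := ((hasDerivAt_id ((t:ℝ):ℂ)).cpow_const (c := a+1) hslit1).comp_ofReal
      simpa [add_sub_cancel_right] using this
    have h2 : HasDerivAt (fun s : ℝ => ((s:ℂ)-1)^(b+1)) ((b+1) * ((t:ℂ)-1)^b) t := by
      have := (((hasDerivAt_id ((t:ℝ):ℂ)).sub_const 1).cpow_const (c := b+1) hslit2).comp_ofReal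
      simpa [add_sub_cancel_right] using this
    have h3 : HasDerivAt (fun s : ℝ => ((s:ℂ)-z)^(c-1)) ((c-1) * ((t:ℂ)-z)^(c-2)) t := by
      have := (((hasDerivAt_id ((t:ℝ):ℂ)).sub_const z).cpow_const (c := c-1) hslit3).comp_ofReal
      simpa [show c-1-1 = c-2 by ring] using this
    have := (h1.fun_mul h2).fun_mul h3
    exact this.congr_deriv (by ring)
  have hint : IntegrableOn (fun t : ℝ =>
      ((a+1) * ((t:ℂ)^a * ((t:ℂ)-1)^(b+1) * ((t:ℂ)-z)^(c-1))
       + (b+1) * ((t:ℂ)^(a+1) * ((t:ℂ)-1)^b * ((t:ℂ)-z)^(c-1))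
       + (c-1) * ((t:ℂ)^(a+1) * ((t:ℂ)-1)^(b+1) * ((t:ℂ)-z)^(c-2)))) (Set.Ioi 1) := by
    have i1 := (integrableOn_integrand a (b+1) (c-1) (by simp; linarith)
      (by simp at habc ⊢; linarith) hz).const_mul (a+1)
    have i2 := (integrableOn_integrand (a+1) b (c-1) hb
      (by simp at habc ⊢; linarith) hz).const_mul (b+1)
    have i3 := (integrableOn_integrand (a+1) (b+1) (c-2) (by simp; linarith)
      (by simp at habc ⊢; linarith) hz).const_mul (c-1)
    exact (i1.add i2).add i3
  have htend : Filter.Tendsto g Filter.atTop (nhds 0) := by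
    obtain ⟨ε, hε, δ, R, hδ0, hδ1, hR, hball⟩ := exists_ball_facts hz
    obtain ⟨-, hzR, hdist⟩ := hball z (Metric.mem_ball_self hε)
    set K := Real.exp (Real.pi * |(c-1).im|) * (2 * R / δ * (1 + R)) ^ |(c-1).re| with hK
    have hs : (a+b+c).re + 1 < 0 := by linarith
    have hbound : ∀ᶠ t : ℝ in Filter.atTop, ‖g t‖ ≤ K * t ^ ((a+b+c).re + 1) := by
      filter_upwards [Filter.eventually_ge_atTop (2:ℝ)] with t ht2
      have ht : (1:ℝ) < t := by linarith
      have ht0 : (0:ℝ) < t := by linarith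
      rw [hg]
      rw [norm_integrand_eq (a+1) (b+1) (c-1) ht]
      have e1 : (t - 1) ^ (b+1).re ≤ t ^ (b+1).re :=
        Real.rpow_le_rpow (by linarith) (by linarith) hb1.le
      have e2 : ‖((t:ℂ)-z)^(c-1)‖ ≤ K * t ^ (c-1).re :=
        norm_cpow_le_of_bounds hδ0 hδ1 hR hzR ht.le (hdist t ht.le)
      calc t ^ (a+1).re * (t-1) ^ (b+1).re * ‖((t:ℂ)-z)^(c-1)‖
          ≤ t ^ (a+1).re * t ^ (b+1).re * (K * t ^ (c-1).re) := by
            apply mul_le_mul (mul_le_mul_of_nonneg_left e1 (Real.rpow_nonneg ht0.le _)) e2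
              (norm_nonneg _)
            positivity
        _ = K * t ^ ((a+b+c).re + 1) := by
            rw [show (a+b+c).re + 1 = (a+1).re + (b+1).re + (c-1).re by simp; ring]
            rw [Real.rpow_add ht0, Real.rpow_add ht0]
            ring
    have htend' : Filter.Tendsto (fun t : ℝ => K * t ^ ((a+b+c).re + 1))
        Filter.atTop (nhds 0) := by
      have := (tendsto_rpow_neg_atTop (by linarith : 0 < -((a+b+c).re + 1))).const_mul K
      simpa using this
    exact squeeze_zero_norm' hbound htend'
  have hg1 : g 1 = 0 := by
    have hbne : b + 1 ≠ 0 := by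
      intro h
      rw [h] at hb1; simp at hb1
    simp [hg, Complex.zero_cpow hbne]
  have := MeasureTheory.integral_Ioi_of_hasDerivAt_of_tendsto hcont hderiv hint htend
  rw [this, hg1, sub_zero]
private lemma pointwise_identity (a b c z : ℂ) {t : ℝ} (ht : 1 < t)
    (hz : z ∉ {w : ℂ | w.im = 0 ∧ 1 ≤ w.re}) :
    z * (z-1) * (c * (c-1) * ((t:ℂ)^a * ((t:ℂ)-1)^b * ((t:ℂ)-z)^(c-2)))
      + ((b+c)*z + (a+c)*(z-1)) * (c * ((t:ℂ)^a * ((t:ℂ)-1)^b * ((t:ℂ)-z)^(c-1)))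
      + c * (1+a+b+c) * ((t:ℂ)^a * ((t:ℂ)-1)^b * ((t:ℂ)-z)^c)
    = c * ((a+1) * ((t:ℂ)^a * ((t:ℂ)-1)^(b+1) * ((t:ℂ)-z)^(c-1))
       + (b+1) * ((t:ℂ)^(a+1) * ((t:ℂ)-1)^b * ((t:ℂ)-z)^(c-1))
       + (c-1) * ((t:ℂ)^(a+1) * ((t:ℂ)-1)^(b+1) * ((t:ℂ)-z)^(c-2))) := by
  have hu : (t:ℂ) ≠ 0 := by
    simp only [ne_eq, Complex.ofReal_eq_zero]
    intro h; rw [h] at ht; linarith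
  have hv : (t:ℂ) - 1 ≠ 0 := by
    rw [show ((t:ℂ)-1) = (((t - 1 : ℝ)):ℂ) by push_cast; ring]
    simp only [ne_eq, Complex.ofReal_eq_zero]
    intro h; nlinarith
  have hw : (t:ℂ) - z ≠ 0 := Complex.slitPlane_ne_zero (slit_mem hz ht.le)
  have e1 : (t:ℂ)^(a+1) = (t:ℂ)^a * (t:ℂ) := by
    rw [Complex.cpow_add _ _ hu, Complex.cpow_one]
  have e2 : ((t:ℂ)-1)^(b+1) = ((t:ℂ)-1)^b * ((t:ℂ)-1) := by
    rw [Complex.cpow_add _ _ hv, Complex.cpow_one]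
  have e3 : ((t:ℂ)-z)^(c-1) = ((t:ℂ)-z)^(c-2) * ((t:ℂ)-z) := by
    conv_lhs => rw [show c - 1 = c - 2 + 1 by ring]
    rw [Complex.cpow_add _ _ hw, Complex.cpow_one]
  have e4 : ((t:ℂ)-z)^c = ((t:ℂ)-z)^(c-2) * ((t:ℂ)-z) * ((t:ℂ)-z) := by
    conv_lhs => rw [show c = c - 2 + 1 + 1 by ring]
    rw [Complex.cpow_add _ _ hw, Complex.cpow_add _ _ hw, Complex.cpow_one]
  rw [e1, e2, e3, e4]
  ring

/-- The Euler integral `F(z) = ∫₁^∞ t^a (t−1)^b (t−z)^c dt` converges absolutely for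
`z ∉ [1, ∞)`, is holomorphic there and satisfies the hypergeometric differential
equation. -/
theorem euler_integral_hypergeometric (a b c : ℂ)
    (hb : -1 < b.re) (habc : (a + b + c).re < -1)
    (F : ℂ → ℂ)
    (hF : ∀ z : ℂ, F z =
      ∫ t in Set.Ioi (1 : ℝ), (t : ℂ) ^ a * ((t : ℂ) - 1) ^ b * ((t : ℂ) - z) ^ c) :
    (∀ z ∉ {w : ℂ | w.im = 0 ∧ 1 ≤ w.re},
      IntegrableOn (fun t : ℝ => (t : ℂ) ^ a * ((t : ℂ) - 1) ^ b * ((t : ℂ) - z) ^ c)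
        (Set.Ioi (1 : ℝ))) ∧
    DifferentiableOn ℂ F {w : ℂ | w.im = 0 ∧ 1 ≤ w.re}ᶜ ∧
    (∀ z ∉ {w : ℂ | w.im = 0 ∧ 1 ≤ w.re},
      z * (z - 1) * deriv (deriv F) z - ((b + c) * z + (a + c) * (z - 1)) * deriv F z +
        c * (1 + a + b + c) * F z = 0) := by
  have habc' : a.re + b.re + c.re < -1 := by simpa using habc
  have hFeq : F = fun z => ∫ t in Set.Ioi (1 : ℝ),
      (t : ℂ) ^ a * ((t : ℂ) - 1) ^ b * ((t : ℂ) - z) ^ c := funext hF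
  -- first derivative
  have hder1 : ∀ z ∉ {w : ℂ | w.im = 0 ∧ 1 ≤ w.re}, HasDerivAt F
      (∫ t in Set.Ioi (1:ℝ),
        (t:ℂ)^a * ((t:ℂ)-1)^b * (c * ((t:ℂ)-z)^(c-1) * (-1))) z := by
    intro z hz
    rw [hFeq]
    exact hasDerivAt_integral a b c hb habc' hz
  -- J and K
  set J : ℂ → ℂ := fun z => ∫ t in Set.Ioi (1:ℝ),
    (t:ℂ)^a * ((t:ℂ)-1)^b * ((t:ℂ)-z)^(c-1) with hJdef
  set K : ℂ → ℂ := fun z => ∫ t in Set.Ioi (1:ℝ),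
    (t:ℂ)^a * ((t:ℂ)-1)^b * ((t:ℂ)-z)^(c-2) with hKdef
  have hGJ : ∀ z : ℂ, (∫ t in Set.Ioi (1:ℝ),
      (t:ℂ)^a * ((t:ℂ)-1)^b * (c * ((t:ℂ)-z)^(c-1) * (-1))) = (-c) * J z := by
    intro z
    rw [hJdef]
    rw [show (fun t : ℝ => (t:ℂ)^a * ((t:ℂ)-1)^b * (c * ((t:ℂ)-z)^(c-1) * (-1)))
      = fun t : ℝ => (-c) * ((t:ℂ)^a * ((t:ℂ)-1)^b * ((t:ℂ)-z)^(c-1)) from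
        funext fun t => by ring]
    exact MeasureTheory.integral_const_mul _ _
  have hderJ : ∀ z ∉ {w : ℂ | w.im = 0 ∧ 1 ≤ w.re}, HasDerivAt J (-(c-1) * K z) z := by
    intro z hz
    have h := hasDerivAt_integral a b (c-1) hb
      (by simp only [Complex.sub_re, Complex.one_re]; linarith) hz
    rw [hJdef]
    convert h using 1
    rw [show (fun t : ℝ => (t:ℂ)^a * ((t:ℂ)-1)^b * ((c-1) * ((t:ℂ)-z)^(c-1-1) * (-1)))
      = fun t : ℝ => (-(c-1)) * ((t:ℂ)^a * ((t:ℂ)-1)^b * ((t:ℂ)-z)^(c-2)) from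
        funext fun t => by rw [show c-1-1 = c-2 by ring]; ring]
    rw [hKdef]
    exact (MeasureTheory.integral_const_mul _ _).symm
  have hopen : IsOpen {w : ℂ | w.im = 0 ∧ 1 ≤ w.re}ᶜ := isClosed_S.isOpen_compl
  refine ⟨fun z hz => integrableOn_integrand a b c hb habc' hz,
    fun z hz => ((hder1 z hz).differentiableAt).differentiableWithinAt, ?_⟩
  intro z hz
  -- deriv F = -c * J near z
  have hdF : ∀ w ∉ {w : ℂ | w.im = 0 ∧ 1 ≤ w.re}, deriv F w = (-c) * J w := by
    intro w hw
    rw [(hder1 w hw).deriv, hGJ w]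
  have hdd : deriv (deriv F) z = (-c) * (-(c-1) * K z) := by
    have hev : deriv F =ᶠ[nhds z] fun w => (-c) * J w := by
      filter_upwards [hopen.mem_nhds hz] with w hw
      exact hdF w hw
    rw [hev.deriv_eq]
    exact (((hderJ z hz).const_mul (-c))).deriv
  rw [hdd, hdF z hz, hF z]
  -- integrabilities
  have hI0 := integrableOn_integrand a b c hb habc' hz
  have hI1 := integrableOn_integrand a b (c-1) hb
    (by simp only [Complex.sub_re, Complex.one_re]; linarith) hz
  have hI2 := integrableOn_integrand a b (c-2) hb
    (by simp only [Complex.sub_re, Complex.re_ofNat]; linarith) hz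
  -- rewrite the big expression as a single integral
  set k2 : ℂ := z * (z-1) * (c * (c-1)) with hk2
  set k1 : ℂ := ((b+c)*z + (a+c)*(z-1)) * c with hk1
  set k0 : ℂ := c * (1+a+b+c) with hk0
  have key : z * (z-1) * ((-c) * (-(c-1) * K z))
      - ((b+c)*z + (a+c)*(z-1)) * ((-c) * J z)
      + c * (1+a+b+c) * (∫ t in Set.Ioi (1:ℝ), (t:ℂ)^a * ((t:ℂ)-1)^b * ((t:ℂ)-z)^c)
      = ∫ t in Set.Ioi (1:ℝ),
        (k2 * ((t:ℂ)^a * ((t:ℂ)-1)^b * ((t:ℂ)-z)^(c-2))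
          + k1 * ((t:ℂ)^a * ((t:ℂ)-1)^b * ((t:ℂ)-z)^(c-1))
          + k0 * ((t:ℂ)^a * ((t:ℂ)-1)^b * ((t:ℂ)-z)^c)) := by
    have hA2 : IntegrableOn (fun t : ℝ =>
        k2 * ((t:ℂ)^a * ((t:ℂ)-1)^b * ((t:ℂ)-z)^(c-2))) (Set.Ioi 1) := hI2.const_mul k2
    have hA1 : IntegrableOn (fun t : ℝ =>
        k1 * ((t:ℂ)^a * ((t:ℂ)-1)^b * ((t:ℂ)-z)^(c-1))) (Set.Ioi 1) := hI1.const_mul k1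
    have hA0 : IntegrableOn (fun t : ℝ =>
        k0 * ((t:ℂ)^a * ((t:ℂ)-1)^b * ((t:ℂ)-z)^c)) (Set.Ioi 1) := hI0.const_mul k0
    have hA21 : IntegrableOn (fun t : ℝ =>
        k2 * ((t:ℂ)^a * ((t:ℂ)-1)^b * ((t:ℂ)-z)^(c-2))
          + k1 * ((t:ℂ)^a * ((t:ℂ)-1)^b * ((t:ℂ)-z)^(c-1))) (Set.Ioi 1) := hA2.add hA1
    rw [MeasureTheory.integral_add hA21 hA0,
      MeasureTheory.integral_add hA2 hA1,
      MeasureTheory.integral_const_mul, MeasureTheory.integral_const_mul,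
      MeasureTheory.integral_const_mul]
    rw [hJdef, hKdef, hk2, hk1, hk0]
    ring
  rw [key]
  have hcongr : (∫ t in Set.Ioi (1:ℝ),
        (k2 * ((t:ℂ)^a * ((t:ℂ)-1)^b * ((t:ℂ)-z)^(c-2))
          + k1 * ((t:ℂ)^a * ((t:ℂ)-1)^b * ((t:ℂ)-z)^(c-1))
          + k0 * ((t:ℂ)^a * ((t:ℂ)-1)^b * ((t:ℂ)-z)^c)))
      = ∫ t in Set.Ioi (1:ℝ), c *
        ((a+1) * ((t:ℂ)^a * ((t:ℂ)-1)^(b+1) * ((t:ℂ)-z)^(c-1))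
         + (b+1) * ((t:ℂ)^(a+1) * ((t:ℂ)-1)^b * ((t:ℂ)-z)^(c-1))
         + (c-1) * ((t:ℂ)^(a+1) * ((t:ℂ)-1)^(b+1) * ((t:ℂ)-z)^(c-2))) := by
    apply MeasureTheory.setIntegral_congr_fun measurableSet_Ioi
    intro t ht
    simp only [Set.mem_Ioi] at ht
    have hpt := pointwise_identity a b c z ht hz
    rw [hk2, hk1, hk0]
    calc z * (z-1) * (c * (c-1)) * ((t:ℂ)^a * ((t:ℂ)-1)^b * ((t:ℂ)-z)^(c-2))
          + ((b+c)*z + (a+c)*(z-1)) * c * ((t:ℂ)^a * ((t:ℂ)-1)^b * ((t:ℂ)-z)^(c-1))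
          + c * (1+a+b+c) * ((t:ℂ)^a * ((t:ℂ)-1)^b * ((t:ℂ)-z)^c)
        = z * (z-1) * (c * (c-1) * ((t:ℂ)^a * ((t:ℂ)-1)^b * ((t:ℂ)-z)^(c-2)))
          + ((b+c)*z + (a+c)*(z-1)) * (c * ((t:ℂ)^a * ((t:ℂ)-1)^b * ((t:ℂ)-z)^(c-1)))
          + c * (1+a+b+c) * ((t:ℂ)^a * ((t:ℂ)-1)^b * ((t:ℂ)-z)^c) := by ring
      _ = _ := hpt
  rw [hcongr, MeasureTheory.integral_const_mul, integral_deriv_zero a b c hb habc hz,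
    mul_zero]
end
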